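/- arXiv:1601.08229 — 7 statements merged into one kernel-verified Lean document; each statement's English description precedes it below -/
import Mathlib

section
/- Let A, B, C be finite-dimensional complex vector spaces and T ∈ A ⊗ B ⊗ C a tensor with border rank r ≥ 1. Then there exists a nonzero vector a ∈ A such that the image T' of T under the projection A ⊗ B ⊗ C → (A/⟨a⟩) ⊗ B ⊗ C has border rank at most r − 1. -/
open scoped BigOperators
open Filter Topology

/-- A tensor `T`, given by its coordinate array, has rank at most `r`. -/
def tensorRankLE {ιa ιb ιc : Type*} (r : ℕ) (T : ιa → ιb → ιc → ℂ) : Prop :=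
  ∃ (u : Fin r → ιa → ℂ) (v : Fin r → ιb → ℂ) (w : Fin r → ιc → ℂ),
    ∀ i j k, T i j k = ∑ l, u l i * v l j * w l k

/-- `T` has border rank at most `r` : it is a limit of tensors of rank at most `r`. -/
def borderRankLE {ιa ιb ιc : Type*} (r : ℕ) (T : ιa → ιb → ιc → ℂ) : Prop :=
  T ∈ closure {S : ιa → ιb → ιc → ℂ | tensorRankLE r S}

/-- The border rank of a tensor. -/
noncomputable def borderRank {ιa ιb ιc : Type*} (T : ιa → ιb → ιc → ℂ) : ℕ :=
  sInf {r | borderRankLE r T}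

/-- Border rank version of the substitution method: if `T ∈ A ⊗ B ⊗ C` has border rank `r ≥ 1`,
then there is a nonzero vector `a ∈ A` such that the image of `T` under the projection
`A ⊗ B ⊗ C → (A/⟨a⟩) ⊗ B ⊗ C` (induced by any surjection `π : A → A/⟨a⟩` with kernel `⟨a⟩`)
has border rank at most `r − 1`. -/
theorem stmt0 (da db dc r : ℕ) (hr : 1 ≤ r) (T : Fin da → Fin db → Fin dc → ℂ)
    (hT : borderRank T = r) :
    ∃ a : Fin da → ℂ, a ≠ 0 ∧
      ∀ π : (Fin da → ℂ) →ₗ[ℂ] (Fin (da - 1) → ℂ), Function.Surjective π →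
        LinearMap.ker π = Submodule.span ℂ {a} →
        borderRankLE (r - 1)
          (fun m j k => ∑ i, T i j k * π (Pi.single i 1) m) := by
  obtain ⟨r', rfl⟩ : ∃ r', r = r' + 1 := ⟨r - 1, (Nat.succ_pred_eq_of_pos hr).symm⟩
  have hne : {n | borderRankLE n T}.Nonempty := by
    by_contra h
    rw [Set.not_nonempty_iff_eq_empty] at h
    rw [borderRank, h, Nat.sInf_empty] at hT
    omega
  have hBR : borderRankLE (r' + 1) T := by
    have h1 := Nat.sInf_mem hne
    rw [borderRank] at hT
    rw [hT] at h1
    exact h1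
  have hda : 0 < da := by
    by_contra h
    have hda0 : da = 0 := by omega
    subst hda0
    have h0 : borderRankLE 0 T :=
      subset_closure ⟨Fin.elim0, Fin.elim0, Fin.elim0, fun i => i.elim0⟩
    have h1 : borderRank T ≤ 0 := Nat.sInf_le h0
    omega
  obtain ⟨S, hSmem, hSlim⟩ := mem_closure_iff_seq_limit.mp hBR
  choose u v w huvw using hSmem
  have hsingle : ‖(Pi.single (⟨0, hda⟩ : Fin da) (1 : ℂ) : Fin da → ℂ)‖ = 1 := by
    rw [Pi.norm_single, norm_one]
  set aseq : ℕ → Fin da → ℂ := fun n =>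
    if u n 0 = 0 then Pi.single (⟨0, hda⟩ : Fin da) 1
    else ((‖u n 0‖ : ℂ))⁻¹ • u n 0 with haseq_def
  have haseq_mem : ∀ n, aseq n ∈ Metric.sphere (0 : Fin da → ℂ) 1 := by
    intro n
    rw [mem_sphere_zero_iff_norm]
    by_cases h : u n 0 = 0
    · simp only [haseq_def, if_pos h]
      exact hsingle
    · have hn : ‖u n 0‖ ≠ 0 := norm_ne_zero_iff.mpr h
      simp only [haseq_def, if_neg h]
      rw [norm_smul, norm_inv, Complex.norm_real, Real.norm_eq_abs, abs_norm,
        inv_mul_cancel₀ hn]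
  have haseq_scal : ∀ n, ∃ c : ℂ, ∀ i, u n 0 i = c * aseq n i := by
    intro n
    by_cases h : u n 0 = 0
    · exact ⟨0, fun i => by rw [h]; simp⟩
    · refine ⟨(‖u n 0‖ : ℂ), fun i => ?_⟩
      have hn : (‖u n 0‖ : ℂ) ≠ 0 := by
        simpa using norm_ne_zero_iff.mpr h
      simp only [haseq_def, if_neg h, Pi.smul_apply, smul_eq_mul]
      rw [← mul_assoc, mul_inv_cancel₀ hn, one_mul]
  obtain ⟨a, haS, φ, hφ, hconv⟩ :=
    (isCompact_sphere (0 : Fin da → ℂ) 1).tendsto_subseq haseq_mem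
  have ha0 : a ≠ 0 := by
    have h1 := mem_sphere_zero_iff_norm.mp haS
    intro h
    rw [h, norm_zero] at h1
    norm_num at h1
  refine ⟨a, ha0, ?_⟩
  intro π hπsurj hπker
  set pm : Fin (da - 1) → Fin da → ℂ := fun m i => π (Pi.single i 1) m with hpm_def
  have hπx : ∀ (x : Fin da → ℂ) (m : Fin (da - 1)), π x m = ∑ i, x i * pm m i := by
    intro x m
    have hx : x = ∑ i, x i • (Pi.single i (1 : ℂ) : Fin da → ℂ) := by
      funext j
      rw [Finset.sum_apply]
      simp [Pi.single_apply]
    conv_lhs => rw [hx, map_sum]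
    rw [Finset.sum_apply]
    apply Finset.sum_congr rfl
    intro i _
    rw [map_smul]
    simp [hpm_def]
  have hπa : ∀ m, (∑ i, a i * pm m i) = 0 := by
    intro m
    rw [← hπx a m]
    have hmem : a ∈ LinearMap.ker π := by
      rw [hπker]; exact Submodule.mem_span_singleton_self a
    rw [LinearMap.mem_ker] at hmem
    rw [hmem]
    rfl
  set fA : (Fin da → ℂ) → ℂ := fun x => ∑ i, (starRingEnd ℂ) (a i) * x i with hfA_def
  have hfa : fA a ≠ 0 := by
    have hval : fA a = ((∑ i, Complex.normSq (a i) : ℝ) : ℂ) := by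
      simp only [hfA_def]
      push_cast
      exact Finset.sum_congr rfl fun i _ => (Complex.normSq_eq_conj_mul_self).symm
    rw [hval]
    intro hcon
    have hsum : (∑ i, Complex.normSq (a i)) = 0 := by exact_mod_cast hcon
    have hall : ∀ i ∈ Finset.univ, Complex.normSq (a i) = 0 :=
      (Finset.sum_eq_zero_iff_of_nonneg fun i _ => Complex.normSq_nonneg _).mp hsum
    apply ha0
    funext i
    exact Complex.normSq_eq_zero.mp (hall i (Finset.mem_univ i))
  have hconvf : Tendsto (fun n => fA (aseq (φ n))) atTop (𝓝 (fA a)) := by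
    simp only [hfA_def]
    apply tendsto_finset_sum
    intro i _
    exact Filter.Tendsto.const_mul _ (tendsto_pi_nhds.mp hconv i)
  obtain ⟨N, hN⟩ := Filter.eventually_atTop.mp (hconvf.eventually_ne hfa)
  set ψ : ℕ → ℕ := fun n => φ (n + N) with hψ_def
  have hα : ∀ n, fA (aseq (ψ n)) ≠ 0 := fun n => hN (n + N) (Nat.le_add_left N n)
  have hψtop : Tendsto ψ atTop atTop :=
    hφ.tendsto_atTop.comp (tendsto_add_atTop_nat N)
  have hconvψ : Tendsto (fun n => aseq (ψ n)) atTop (𝓝 a) :=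
    hconv.comp (tendsto_add_atTop_nat N)
  have hfψ : Tendsto (fun n => fA (aseq (ψ n))) atTop (𝓝 (fA a)) :=
    hconvf.comp (tendsto_add_atTop_nat N)
  have hπaψ : ∀ m, Tendsto (fun n => ∑ i, aseq (ψ n) i * pm m i) atTop (𝓝 0) := by
    intro m
    have h1 : Tendsto (fun n => ∑ i, aseq (ψ n) i * pm m i) atTop (𝓝 (∑ i, a i * pm m i)) :=
      tendsto_finset_sum _ fun i _ => (tendsto_pi_nhds.mp hconvψ i).mul_const _
    rwa [hπa m] at h1
  have hS3 : ∀ i j k, Tendsto (fun n => S (ψ n) i j k) atTop (𝓝 (T i j k)) := by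
    intro i j k
    exact (tendsto_pi_nhds.mp (tendsto_pi_nhds.mp (tendsto_pi_nhds.mp hSlim i) j) k).comp hψtop
  set g : ℕ → Fin (da - 1) → Fin da → ℂ := fun n m i =>
    pm m i - (starRingEnd ℂ) (a i) / fA (aseq (ψ n)) * (∑ i', aseq (ψ n) i' * pm m i')
    with hg_def
  have hgzero : ∀ n m, (∑ i, aseq (ψ n) i * g n m i) = 0 := by
    intro n m
    simp only [hg_def, mul_sub]
    rw [Finset.sum_sub_distrib]
    have h2 : ∑ i, aseq (ψ n) i * ((starRingEnd ℂ) (a i) / fA (aseq (ψ n)) *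
        (∑ i', aseq (ψ n) i' * pm m i'))
        = (∑ i, (starRingEnd ℂ) (a i) * aseq (ψ n) i) / fA (aseq (ψ n)) *
          (∑ i', aseq (ψ n) i' * pm m i') := by
      rw [Finset.sum_div, Finset.sum_mul]
      exact Finset.sum_congr rfl fun i _ => by ring
    rw [h2]
    rw [show (∑ i, (starRingEnd ℂ) (a i) * aseq (ψ n) i) = fA (aseq (ψ n)) from rfl,
      div_self (hα n), one_mul, sub_self]
  have hterm0 : ∀ n m, (∑ i, u (ψ n) 0 i * g n m i) = 0 := by
    intro n m
    obtain ⟨c, hc⟩ := haseq_scal (ψ n)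
    calc ∑ i, u (ψ n) 0 i * g n m i = ∑ i, c * (aseq (ψ n) i * g n m i) := by
          exact Finset.sum_congr rfl fun i _ => by rw [hc i]; ring
      _ = c * ∑ i, aseq (ψ n) i * g n m i := (Finset.mul_sum _ _ _).symm
      _ = 0 := by rw [hgzero n m, mul_zero]
  have hkey : ∀ n m j k,
      (∑ l : Fin r', (∑ i, u (ψ n) l.succ i * g n m i) *
        (v (ψ n) l.succ j * w (ψ n) l.succ k))
        = ∑ i, S (ψ n) i j k * g n m i := by
    intro n m j k
    have expand : ∑ i, S (ψ n) i j k * g n m i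
        = ∑ l : Fin (r' + 1), (∑ i, u (ψ n) l i * g n m i) *
          (v (ψ n) l j * w (ψ n) l k) := by
      have hstep : ∀ i, S (ψ n) i j k * g n m i
          = ∑ l : Fin (r' + 1), u (ψ n) l i * g n m i * (v (ψ n) l j * w (ψ n) l k) := by
        intro i
        rw [huvw (ψ n) i j k, Finset.sum_mul]
        exact Finset.sum_congr rfl fun l _ => by ring
      rw [Finset.sum_congr rfl fun i _ => hstep i, Finset.sum_comm]
      exact Finset.sum_congr rfl fun l _ => by rw [Finset.sum_mul]
    rw [expand, Fin.sum_univ_succ, hterm0 n m, zero_mul, zero_add]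
  show (fun m j k => ∑ i, T i j k * π (Pi.single i 1) m) ∈
    closure {X : Fin (da - 1) → Fin db → Fin dc → ℂ | tensorRankLE (r' + 1 - 1) X}
  apply mem_closure_of_tendsto
    (f := fun n (m : Fin (da - 1)) (j : Fin db) (k : Fin dc) => ∑ i, S (ψ n) i j k * g n m i)
    (b := atTop)
  · rw [tendsto_pi_nhds]
    intro m
    rw [tendsto_pi_nhds]
    intro j
    rw [tendsto_pi_nhds]
    intro k
    apply tendsto_finset_sum
    intro i _
    have hg : Tendsto (fun n => g n m i) atTop (𝓝 (pm m i)) := by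
      have h1 : Tendsto (fun n => (starRingEnd ℂ) (a i) / fA (aseq (ψ n)) *
          (∑ i', aseq (ψ n) i' * pm m i')) atTop
          (𝓝 ((starRingEnd ℂ) (a i) / fA a * 0)) :=
        (tendsto_const_nhds.div hfψ hfa).mul (hπaψ m)
      rw [mul_zero] at h1
      have h2 := (tendsto_const_nhds (x := pm m i)).sub h1
      rw [sub_zero] at h2
      simpa [hg_def] using h2
    exact (hS3 i j k).mul hg
  · apply Filter.Eventually.of_forall
    intro n
    refine ⟨fun l m => ∑ i, u (ψ n) l.succ i * g n m i,
      fun l => v (ψ n) l.succ, fun l => w (ψ n) l.succ, fun m j k => ?_⟩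
    show (∑ i, S (ψ n) i j k * g n m i) = _
    rw [← hkey n m j k]
    exact Finset.sum_congr rfl fun l _ => by ring
end

section
/- Let A, B, C be finite-dimensional complex vector spaces, fix a basis a_1, …, a_m of A, and write T = Σ_{i=1}^m a_i ⊗ M_i with M_i ∈ B ⊗ C. If the rank of T is r and M_1 ≠ 0, then there exist constants λ_2, …, λ_m ∈ ℂ such that the tensor T̃ = Σ_{j=2}^m a_j ⊗ (M_j − λ_j M_1) has rank at most r − 1. -/
open scoped BigOperators

/-- The rank of a tensor: the least `r` such that `T` is a sum of `r` simple tensors. -/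
noncomputable def tensorRank {ιa ιb ιc : Type*} (T : ιa → ιb → ιc → ℂ) : ℕ :=
  sInf {r | tensorRankLE r T}

/-- Every tensor on finite index sets has some finite rank. -/
lemma tensorRankLE_exists (m b c : ℕ) (T : Fin m → Fin b → Fin c → ℂ) :
    ∃ n, tensorRankLE n T := by
  classical
  refine ⟨Fintype.card (Fin m × Fin b × Fin c), ?_⟩
  set e := (Fintype.equivFin (Fin m × Fin b × Fin c)).symm with he
  refine ⟨fun l i => if i = (e l).1 then T (e l).1 (e l).2.1 (e l).2.2 else 0,
          fun l j => if j = (e l).2.1 then 1 else 0,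
          fun l k => if k = (e l).2.2 then 1 else 0, ?_⟩
  intro i j k
  rw [← Equiv.sum_comp e.symm]
  simp [Fintype.sum_prod_type, Finset.sum_ite_eq, mul_ite, ite_mul]

/-- Substitution method (Alexeev–Forbes–Tsimerman): if `T = ∑ aᵢ ⊗ Mᵢ` has rank `r`
and the slice `M₁ = T i₀ ≠ 0`, then there are constants `λⱼ` such that
`T̃ = ∑_{j ≠ i₀} aⱼ ⊗ (Mⱼ − λⱼ M₁)` has rank at most `r − 1`. -/
theorem stmt1 (m b c r : ℕ) (hm : 0 < m) (T : Fin m → Fin b → Fin c → ℂ)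
    (hT : tensorRank T = r) (h1 : T ⟨0, hm⟩ ≠ 0) :
    ∃ lam : Fin m → ℂ,
      tensorRankLE (r - 1)
        (fun i j k => if i = ⟨0, hm⟩ then 0 else T i j k - lam i * T ⟨0, hm⟩ j k) := by
  have hr : tensorRankLE r T := by
    rw [← hT]
    exact Nat.sInf_mem (tensorRankLE_exists m b c T)
  obtain ⟨u, v, w, hw⟩ := hr
  rcases r with _ | r'
  · exact absurd (funext fun j => funext fun k => (hw _ j k).trans (by simp)) h1
  have hex : ∃ l, u l ⟨0, hm⟩ ≠ 0 := by
    by_contra hc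
    push_neg at hc
    apply h1
    funext j k
    rw [hw ⟨0, hm⟩ j k]
    exact Finset.sum_eq_zero fun l _ => by simp [hc l]
  obtain ⟨l₀, hl₀⟩ := hex
  refine ⟨fun i => u l₀ i / u l₀ ⟨0, hm⟩,
    fun l i => u (l₀.succAbove l) i -
      (u l₀ i / u l₀ ⟨0, hm⟩) * u (l₀.succAbove l) ⟨0, hm⟩,
    fun l => v (l₀.succAbove l), fun l => w (l₀.succAbove l), ?_⟩
  intro i j k
  dsimp only
  by_cases hi : i = ⟨0, hm⟩
  · rw [if_pos hi, hi]
    symm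
    refine Finset.sum_eq_zero fun l _ => ?_
    rw [div_self hl₀]
    ring
  · rw [if_neg hi]
    have expand : T i j k - (u l₀ i / u l₀ ⟨0, hm⟩) * T ⟨0, hm⟩ j k =
        ∑ l, (u l i - (u l₀ i / u l₀ ⟨0, hm⟩) * u l ⟨0, hm⟩) * v l j * w l k := by
      rw [hw i j k, hw ⟨0, hm⟩ j k, Finset.mul_sum, ← Finset.sum_sub_distrib]
      exact Finset.sum_congr rfl fun l _ => by ring
    rw [expand, Fin.sum_univ_succAbove _ l₀]
    have h0 : u l₀ i - (u l₀ i / u l₀ ⟨0, hm⟩) * u l₀ ⟨0, hm⟩ = 0 := by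
      rw [div_mul_cancel₀ _ hl₀, sub_self]
    rw [h0, zero_mul, zero_mul, zero_add]
    rfl
end

section
/- With notation as in the substitution method: if T = Σ_{i=1}^m a_i ⊗ M_i has rank r and M_1 ∈ B ⊗ C has rank 1 (as a matrix), then for every choice of constants λ_2, …, λ_m ∈ ℂ, the tensor T̃ = Σ_{j=2}^m a_j ⊗ (M_j − λ_j M_1) has rank at least r − 1. -/
open scoped BigOperators

/-- Every tensor over finite index sets has some finite decomposition. -/
lemma tensorRankLE_card {m b c : ℕ} (T : Fin m → Fin b → Fin c → ℂ) :
    tensorRankLE (b * c) T := by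
  refine ⟨fun l i => T i (finProdFinEquiv.symm l).1 (finProdFinEquiv.symm l).2,
    fun l j => if j = (finProdFinEquiv.symm l).1 then 1 else 0,
    fun l k => if k = (finProdFinEquiv.symm l).2 then 1 else 0, fun i j k => ?_⟩
  rw [← Equiv.sum_comp finProdFinEquiv
    (fun l => T i (finProdFinEquiv.symm l).1 (finProdFinEquiv.symm l).2 *
      (if j = (finProdFinEquiv.symm l).1 then (1:ℂ) else 0) *
      (if k = (finProdFinEquiv.symm l).2 then (1:ℂ) else 0))]
  simp only [Equiv.symm_apply_apply]
  rw [Fintype.sum_prod_type]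
  rw [Finset.sum_eq_single j]
  · rw [Finset.sum_eq_single k]
    · simp
    · intro q _ hq
      simp [Ne.symm hq]
    · simp
  · intro p _ hp
    simp [Ne.symm hp]
  · simp

/-- A matrix of rank one is an outer product. -/
lemma rank_one_outer {b c : ℕ} (M : Matrix (Fin b) (Fin c) ℂ) (h : M.rank = 1) :
    ∃ (v : Fin b → ℂ) (w : Fin c → ℂ), ∀ j k, M j k = v j * w k := by
  rw [Matrix.rank] at h
  rw [finrank_eq_one_iff'] at h
  obtain ⟨⟨v, hv⟩, -, hall⟩ := h
  have hcol : ∀ k : Fin c, ∃ cst : ℂ, ∀ j, cst * v j = M j k := by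
    intro k
    have hmem : (fun j => M j k) ∈ LinearMap.range M.mulVecLin := by
      refine ⟨Pi.single k 1, ?_⟩
      simp [Matrix.mulVecLin]; rfl
    obtain ⟨cst, hcst⟩ := hall ⟨_, hmem⟩
    refine ⟨cst, fun j => ?_⟩
    have := congrFun (congrArg Subtype.val hcst) j
    simpa using this
  choose w hw using hcol
  exact ⟨v, w, fun j k => by rw [← hw k j]; ring⟩

/-- Substitution method, lower-bound direction: if `T = ∑ aᵢ ⊗ Mᵢ` has rank `r` and the slice
`M₁` has rank `1` as a matrix, then for every choice of constants `λⱼ` the tensor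
`T̃ = ∑_{j ≠ 1} aⱼ ⊗ (Mⱼ − λⱼ M₁)` has rank at least `r − 1`. -/
theorem stmt2 (m b c r : ℕ) (hm : 0 < m) (T : Fin m → Fin b → Fin c → ℂ)
    (hT : tensorRank T = r) (h1 : (Matrix.of (T ⟨0, hm⟩)).rank = 1) :
    ∀ lam : Fin m → ℂ,
      r - 1 ≤ tensorRank
        (fun i j k => if i = ⟨0, hm⟩ then 0 else T i j k - lam i * T ⟨0, hm⟩ j k) := by
  intro lam
  set T' : Fin m → Fin b → Fin c → ℂ :=
    fun i j k => if i = ⟨0, hm⟩ then 0 else T i j k - lam i * T ⟨0, hm⟩ j k with hT'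
  set s := tensorRank T' with hs
  -- T' has a decomposition of size s
  have hne : {n | tensorRankLE n T'}.Nonempty := ⟨b * c, tensorRankLE_card T'⟩
  have hmem : tensorRankLE s T' := Nat.sInf_mem hne
  obtain ⟨u, v, w, huvw⟩ := hmem
  obtain ⟨vv, ww, hM⟩ := rank_one_outer (Matrix.of (T ⟨0, hm⟩)) h1
  -- build decomposition of T of size s + 1
  have hle : tensorRankLE (s + 1) T := by
    refine ⟨Fin.cons (fun i => if i = ⟨0, hm⟩ then 1 else lam i) u,
      Fin.cons vv v, Fin.cons ww w, fun i j k => ?_⟩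
    rw [Fin.sum_univ_succ]
    simp only [Fin.cons_zero, Fin.cons_succ]
    have hsum : (∑ l, u l i * v l j * w l k) = T' i j k := (huvw i j k).symm
    rw [hsum]
    have hM' : T ⟨0, hm⟩ j k = vv j * ww k := hM j k
    by_cases hi : i = ⟨0, hm⟩
    · subst hi
      rw [hT']
      simpa using hM'
    · simp only [hT', if_neg hi]
      rw [hM']; ring
  have : tensorRank T ≤ s + 1 := Nat.sInf_le hle
  omega
end

section
/- Let M_⟨n⟩ denote the n×n matrix multiplication tensor and let M_⟨n⟩^red = M_⟨n⟩ − Σ_j x^1_n ⊗ y^n_j ⊗ z^j_1 be the reduced matrix multiplication tensor. Then the border rank of M_⟨n⟩ is at least the border rank of M_⟨n⟩^red plus 1. -/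
open scoped BigOperators
open Filter Topology

/-- The matrix multiplication tensor `M_⟨n⟩ = ∑_{i,j,k} x^i_j ⊗ y^j_k ⊗ z^k_i`, where
`A = U* ⊗ V`, `B = V* ⊗ W`, `C = W* ⊗ U` all have matrix-unit bases indexed by `Fin n × Fin n`. -/
def matMulTensor (n : ℕ) : (Fin n × Fin n) → (Fin n × Fin n) → (Fin n × Fin n) → ℂ :=
  fun a b c => if a.2 = b.1 ∧ b.2 = c.1 ∧ c.2 = a.1 then 1 else 0

/-- The reduced matrix multiplication tensor
`M_⟨n⟩^red = M_⟨n⟩ − ∑_j x^1_n ⊗ y^n_j ⊗ z^j_1` (indices written 0-based). -/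
def matMulRed (n : ℕ) (hn : 0 < n) :
    (Fin n × Fin n) → (Fin n × Fin n) → (Fin n × Fin n) → ℂ :=
  fun a b c =>
    matMulTensor n a b c -
      if a = (⟨0, hn⟩, ⟨n - 1, Nat.sub_lt hn Nat.one_pos⟩) ∧
          b.1 = ⟨n - 1, Nat.sub_lt hn Nat.one_pos⟩ ∧ b.2 = c.1 ∧ c.2 = ⟨0, hn⟩
      then 1 else 0

namespace Stmt3Aux

/-- Scale-and-reindex operation on coordinate tensors. -/
def SP {ι : Type*} (pA pB pC : ι → ℂ) (ρA ρB ρC : ι → ι) (S : ι → ι → ι → ℂ) :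
    ι → ι → ι → ℂ :=
  fun a b c => pA a * pB b * pC c * S (ρA a) (ρB b) (ρC c)

lemma SP_rank {ι : Type*} {r : ℕ} (pA pB pC : ι → ℂ) (ρA ρB ρC : ι → ι)
    {S : ι → ι → ι → ℂ} (h : tensorRankLE r S) :
    tensorRankLE r (SP pA pB pC ρA ρB ρC S) := by
  obtain ⟨u, v, w, huvw⟩ := h
  refine ⟨fun l a => pA a * u l (ρA a), fun l b => pB b * v l (ρB b),
    fun l c => pC c * w l (ρC c), ?_⟩
  intro a b c
  simp only [SP, huvw (ρA a) (ρB b) (ρC c), Finset.mul_sum]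
  exact Finset.sum_congr rfl fun l _ => by ring

lemma SP_cont {ι : Type*} (pA pB pC : ι → ℂ) (ρA ρB ρC : ι → ι) :
    Continuous (SP pA pB pC ρA ρB ρC) := by
  refine continuous_pi fun a => continuous_pi fun b => continuous_pi fun c => ?_
  have h1 : Continuous fun S : ι → ι → ι → ℂ => S (ρA a) := continuous_apply _
  have h2 : Continuous fun f : ι → ι → ℂ => f (ρB b) := continuous_apply _
  have h3 : Continuous fun f : ι → ℂ => f (ρC c) := continuous_apply _
  exact continuous_const.mul (h3.comp (h2.comp h1))

lemma rank_zero {ιa ιb ιc : Type*} {T : ιa → ιb → ιc → ℂ} (h : tensorRankLE 0 T) :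
    T = fun _ _ _ => 0 := by
  obtain ⟨u, v, w, huvw⟩ := h
  funext i j k
  simpa using huvw i j k

lemma rank_all {n : ℕ} (T : (Fin n × Fin n) → (Fin n × Fin n) → (Fin n × Fin n) → ℂ) :
    ∃ r, tensorRankLE r T := by
  classical
  refine ⟨Fintype.card ((Fin n × Fin n) × (Fin n × Fin n)), ?_⟩
  set e := (Fintype.equivFin ((Fin n × Fin n) × (Fin n × Fin n))).symm with he
  refine ⟨fun l a => if a = (e l).1 then 1 else 0,
          fun l b => if b = (e l).2 then 1 else 0,
          fun l c => T (e l).1 (e l).2 c, ?_⟩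
  intro i j k
  rw [← Equiv.sum_comp e.symm
    (fun l => (if i = (e l).1 then 1 else 0) * (if j = (e l).2 then 1 else 0) * T (e l).1 (e l).2 k)]
  simp only [Equiv.apply_symm_apply]
  rw [Fintype.sum_prod_type]
  simp [Finset.sum_ite_eq, ite_mul, Finset.mem_univ]

variable {n : ℕ}

def zi (n : ℕ) (hn : 0 < n) : Fin n := ⟨0, hn⟩
def li (n : ℕ) (hn : 0 < n) : Fin n := ⟨n - 1, Nat.sub_lt hn Nat.one_pos⟩

def pA (n : ℕ) (hn : 0 < n) (t : ℂ) : (Fin n × Fin n) → ℂ :=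
  fun a => (if a.1 = zi n hn then 1 else t) * (if a.2 = li n hn then 1 else t)
noncomputable def pB (n : ℕ) (hn : 0 < n) (t : ℂ) : (Fin n × Fin n) → ℂ :=
  fun b => (if b.1 = li n hn then 1 else t)⁻¹
noncomputable def pC (n : ℕ) (hn : 0 < n) (t : ℂ) : (Fin n × Fin n) → ℂ :=
  fun c => (if c.2 = zi n hn then 1 else t)⁻¹
def rA (n : ℕ) (hn : 0 < n) (p : Fin n × Fin n) : (Fin n × Fin n) → (Fin n × Fin n) :=
  fun a => (Equiv.swap (zi n hn) p.1 a.1, Equiv.swap (li n hn) p.2 a.2)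
def rB (n : ℕ) (hn : 0 < n) (p : Fin n × Fin n) : (Fin n × Fin n) → (Fin n × Fin n) :=
  fun b => (Equiv.swap (li n hn) p.2 b.1, b.2)
def rC (n : ℕ) (hn : 0 < n) (p : Fin n × Fin n) : (Fin n × Fin n) → (Fin n × Fin n) :=
  fun c => (c.1, Equiv.swap (zi n hn) p.1 c.2)

lemma hC1 (hn : 0 < n) (p : Fin n × Fin n) (t : ℂ) (ht : t ≠ 0) (a b c : Fin n × Fin n) :
    pA n hn t a * pB n hn t b * pC n hn t c *
      matMulTensor n (rA n hn p a) (rB n hn p b) (rC n hn p c) = matMulTensor n a b c := by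
  simp only [pA, pB, pC, rA, rB, rC, matMulTensor, EmbeddingLike.apply_eq_iff_eq]
  by_cases h : a.2 = b.1 ∧ b.2 = c.1 ∧ c.2 = a.1
  · obtain ⟨h1, h2, h3⟩ := h
    simp only [h1, h2, h3, and_self, if_true, if_pos trivial, mul_one]
    split_ifs <;> field_simp
  · simp [h]

lemma hC2 (hn : 0 < n) (p : Fin n × Fin n) (t : ℂ) (b c : Fin n × Fin n) :
    pB n hn t b * pC n hn t c * matMulTensor n p (rB n hn p b) (rC n hn p c)
      = if b.1 = li n hn ∧ b.2 = c.1 ∧ c.2 = zi n hn then 1 else 0 := by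
  simp only [pB, pC, rB, rC, matMulTensor]
  have e1 : (p.2 = Equiv.swap (li n hn) p.2 b.1) ↔ b.1 = li n hn := by
    rw [eq_comm, Equiv.swap_apply_eq_iff, Equiv.swap_apply_right]
  have e2 : (Equiv.swap (zi n hn) p.1 c.2 = p.1) ↔ c.2 = zi n hn := by
    rw [Equiv.swap_apply_eq_iff, Equiv.swap_apply_right]
  simp only [e1, e2]
  by_cases h : b.1 = li n hn ∧ b.2 = c.1 ∧ c.2 = zi n hn
  · simp [h.1, h.2.1, h.2.2]
  · simp [h]

lemma key (hn : 0 < n) (p : Fin n × Fin n) (U : (Fin n × Fin n) → ℂ) (t : ℂ) (ht : t ≠ 0)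
    (a b c : Fin n × Fin n) :
    SP (pA n hn t) (pB n hn t) (pC n hn t) (rA n hn p) (rB n hn p) (rC n hn p)
      (fun x y z => matMulTensor n x y z - (U p)⁻¹ * U x * matMulTensor n p y z) a b c
    = matMulTensor n a b c -
        pA n hn t a * ((U p)⁻¹ * U (rA n hn p a)) *
          (if b.1 = li n hn ∧ b.2 = c.1 ∧ c.2 = zi n hn then 1 else 0) := by
  simp only [SP]
  linear_combination hC1 hn p t ht a b c -
    (pA n hn t a * ((U p)⁻¹ * U (rA n hn p a))) * hC2 hn p t b c

end Stmt3Aux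

open Stmt3Aux in
/-- `R̲(M_⟨n⟩) ≥ R̲(M_⟨n⟩^red) + 1`. -/
theorem stmt3 (n : ℕ) (hn : 0 < n) :
    borderRank (matMulRed n hn) + 1 ≤ borderRank (matMulTensor n) := by
  classical
  obtain ⟨r0, hr0⟩ := rank_all (matMulTensor n)
  have hne : {r | borderRankLE r (matMulTensor n)}.Nonempty := ⟨r0, subset_closure hr0⟩
  have hmem : borderRankLE (borderRank (matMulTensor n)) (matMulTensor n) := Nat.sInf_mem hne
  have hpos : borderRank (matMulTensor n) ≠ 0 := by
    intro h0
    rw [h0] at hmem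
    have hsub : {S : (Fin n × Fin n) → (Fin n × Fin n) → (Fin n × Fin n) → ℂ | tensorRankLE 0 S}
        ⊆ {fun _ _ _ => 0} := fun S hS => rank_zero hS
    have hM0 := closure_mono hsub hmem
    rw [closure_singleton, Set.mem_singleton_iff] at hM0
    have h1 := congrFun (congrFun (congrFun hM0 (zi n hn, zi n hn)) (zi n hn, zi n hn))
      (zi n hn, zi n hn)
    simp [matMulTensor] at h1
  obtain ⟨k, hk⟩ : ∃ k, borderRank (matMulTensor n) = k + 1 :=
    ⟨borderRank (matMulTensor n) - 1, by omega⟩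
  suffices h : borderRankLE k (matMulRed n hn) by
    have : borderRank (matMulRed n hn) ≤ k := Nat.sInf_le h
    omega
  rw [hk] at hmem
  obtain ⟨S, hSmem, hSlim⟩ := mem_closure_iff_seq_limit.mp hmem
  simp only [Set.mem_setOf_eq, tensorRankLE] at hSmem
  choose u v w huvw using hSmem
  -- normalized first vectors
  let eV : (Fin n × Fin n) → ℂ := fun _ => 1
  have heV : eV ≠ 0 := by
    intro h
    have := congrFun h (zi n hn, zi n hn)
    simp [eV] at this
  let x : ℕ → (Fin n × Fin n) → ℂ := fun m => if u m 0 = 0 then eV else u m 0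
  have hx : ∀ m, x m ≠ 0 := by
    intro m; by_cases h : u m 0 = 0 <;> simp [x, h, heV]
  let uh : ℕ → (Fin n × Fin n) → ℂ := fun m => ‖x m‖⁻¹ • x m
  have huh : ∀ m, uh m ∈ Metric.sphere (0 : (Fin n × Fin n) → ℂ) 1 := by
    intro m
    rw [mem_sphere_zero_iff_norm]
    exact norm_smul_inv_norm (hx m)
  obtain ⟨U, hUs, φ, hφ, hUl⟩ :=
    (isCompact_sphere (0 : (Fin n × Fin n) → ℂ) 1).tendsto_subseq huh
  have hU1 : ‖U‖ = 1 := mem_sphere_zero_iff_norm.mp hUs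
  have hUne : U ≠ 0 := by intro h; rw [h] at hU1; simp at hU1
  obtain ⟨p, hp⟩ : ∃ p, U p ≠ 0 := by
    by_contra h; push_neg at h; exact hUne (funext h)
  have hUc : ∀ a, Tendsto (fun m => uh (φ m) a) atTop (𝓝 (U a)) := fun a =>
    tendsto_pi_nhds.mp hUl a
  let cm : ℕ → ℂ := fun m => (uh (φ m) p)⁻¹
  have hcm : Tendsto cm atTop (𝓝 (U p)⁻¹) := (hUc p).inv₀ hp
  let S' : ℕ → (Fin n × Fin n) → (Fin n × Fin n) → (Fin n × Fin n) → ℂ := fun m a b c =>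
    S (φ m) a b c - cm m * uh (φ m) a * S (φ m) p b c
  have hev : ∀ᶠ m in atTop, uh (φ m) p ≠ 0 := (hUc p).eventually_ne hp
  have hS'rank : ∀ᶠ m in atTop, tensorRankLE k (S' m) := by
    filter_upwards [hev] with m hm
    refine ⟨fun l a => u (φ m) l.succ a - cm m * u (φ m) l.succ p * uh (φ m) a,
            fun l b => v (φ m) l.succ b, fun l c => w (φ m) l.succ c, ?_⟩
    intro a b c
    have hexp : S' m a b c =
        ∑ l : Fin (k+1), (u (φ m) l a - cm m * u (φ m) l p * uh (φ m) a)
          * v (φ m) l b * w (φ m) l c := by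
      simp only [S', huvw (φ m) a b c, huvw (φ m) p b c, Finset.mul_sum,
        ← Finset.sum_sub_distrib]
      exact Finset.sum_congr rfl fun l _ => by ring
    rw [hexp, Fin.sum_univ_succ]
    have h0 : u (φ m) 0 a - cm m * u (φ m) 0 p * uh (φ m) a = 0 := by
      by_cases h : u (φ m) 0 = 0
      · simp [congrFun h a, congrFun h p]
      · have hxm : x (φ m) = u (φ m) 0 := by simp [x, h]
        have huha : ∀ a', uh (φ m) a' = (‖u (φ m) 0‖ : ℂ)⁻¹ * u (φ m) 0 a' := by
          intro a'
          simp [uh, hxm, Complex.real_smul]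
        have hcu : (‖u (φ m) 0‖ : ℂ)⁻¹ * u (φ m) 0 p ≠ 0 := by
          rw [← huha p]; exact hm
        have hone : ((‖u (φ m) 0‖ : ℂ)⁻¹ * u (φ m) 0 p)⁻¹ *
            ((‖u (φ m) 0‖ : ℂ)⁻¹ * u (φ m) 0 p) = 1 := inv_mul_cancel₀ hcu
        simp only [cm, huha]
        linear_combination (-(u (φ m) 0 a)) * hone
    rw [h0, zero_mul, zero_mul, zero_add]
  set T : (Fin n × Fin n) → (Fin n × Fin n) → (Fin n × Fin n) → ℂ := fun a b c =>
    matMulTensor n a b c - (U p)⁻¹ * U a * matMulTensor n p b c with hTdef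
  have hSφ : Tendsto (fun m => S (φ m)) atTop (𝓝 (matMulTensor n)) :=
    hSlim.comp (hφ.tendsto_atTop)
  have hSc : ∀ a b c, Tendsto (fun m => S (φ m) a b c) atTop (𝓝 (matMulTensor n a b c)) := by
    intro a b c
    exact tendsto_pi_nhds.mp (tendsto_pi_nhds.mp (tendsto_pi_nhds.mp hSφ a) b) c
  have hTlim : Tendsto S' atTop (𝓝 T) := by
    rw [tendsto_pi_nhds]; intro a; rw [tendsto_pi_nhds]; intro b; rw [tendsto_pi_nhds]; intro c
    exact (hSc a b c).sub ((hcm.mul (hUc a)).mul (hSc p b c))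
  have hT : T ∈ closure {S : (Fin n × Fin n) → (Fin n × Fin n) → (Fin n × Fin n) → ℂ |
      tensorRankLE k S} := mem_closure_of_tendsto hTlim hS'rank
  -- endgame: degenerate T to the reduced tensor
  let ts : ℕ → ℂ := fun m => ((m : ℂ) + 1)⁻¹
  have hts : ∀ m, ts m ≠ 0 := by
    intro m
    have : ((m : ℂ) + 1) ≠ 0 := by exact_mod_cast Nat.succ_ne_zero m
    exact inv_ne_zero this
  have hts0 : Tendsto ts atTop (𝓝 0) := by
    have hr0 : Tendsto (fun m : ℕ => (((m : ℝ) + 1)⁻¹ : ℝ)) atTop (𝓝 0) := by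
      simpa [one_div] using (tendsto_one_div_add_atTop_nhds_zero_nat :
        Tendsto (fun m : ℕ => 1 / ((m : ℝ) + 1)) atTop (𝓝 0))
    have hr : Tendsto (fun m : ℕ => ((((m : ℝ) + 1)⁻¹ : ℝ) : ℂ)) atTop (𝓝 0) := by
      simpa [Function.comp_def] using (Complex.continuous_ofReal.tendsto 0).comp hr0
    have heq : (fun m : ℕ => ((m : ℂ) + 1)⁻¹) = fun m : ℕ => ((((m : ℝ) + 1)⁻¹ : ℝ) : ℂ) := by
      funext m; push_cast; rfl
    show Tendsto (fun m : ℕ => ((m : ℂ) + 1)⁻¹) atTop (𝓝 0)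
    rw [heq]
    exact hr
  let X : ℕ → (Fin n × Fin n) → (Fin n × Fin n) → (Fin n × Fin n) → ℂ := fun m =>
    SP (pA n hn (ts m)) (pB n hn (ts m)) (pC n hn (ts m)) (rA n hn p) (rB n hn p) (rC n hn p) T
  have hXmem : ∀ m, X m ∈ closure {S : (Fin n × Fin n) → (Fin n × Fin n) → (Fin n × Fin n) → ℂ |
      tensorRankLE k S} := by
    intro m
    show SP (pA n hn (ts m)) (pB n hn (ts m)) (pC n hn (ts m)) (rA n hn p) (rB n hn p)
      (rC n hn p) T ∈ _
    exact map_mem_closure (SP_cont _ _ _ _ _ _) hT (fun Z hZ => SP_rank _ _ _ _ _ _ hZ)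
  have hXeq : ∀ m a b c, X m a b c = matMulTensor n a b c -
      pA n hn (ts m) a * ((U p)⁻¹ * U (rA n hn p a)) *
        (if b.1 = li n hn ∧ b.2 = c.1 ∧ c.2 = zi n hn then 1 else 0) := by
    intro m a b c
    show SP (pA n hn (ts m)) (pB n hn (ts m)) (pC n hn (ts m)) (rA n hn p) (rB n hn p)
      (rC n hn p) (fun x y z => matMulTensor n x y z - (U p)⁻¹ * U x * matMulTensor n p y z)
      a b c = _
    exact key hn p U (ts m) (hts m) a b c
  have hXlim : Tendsto X atTop (𝓝 (matMulRed n hn)) := by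
    rw [tendsto_pi_nhds]; intro a; rw [tendsto_pi_nhds]; intro b; rw [tendsto_pi_nhds]; intro c
    simp only [hXeq]
    have hred : matMulRed n hn a b c = matMulTensor n a b c -
        (if a.1 = zi n hn ∧ a.2 = li n hn then 1 else 0) * ((U p)⁻¹ * U (rA n hn p a)) *
          (if b.1 = li n hn ∧ b.2 = c.1 ∧ c.2 = zi n hn then 1 else 0) := by
      by_cases ha : a.1 = zi n hn ∧ a.2 = li n hn
      · have hae : a = (zi n hn, li n hn) := Prod.ext ha.1 ha.2
        have hra : rA n hn p a = p := by
          rw [hae]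
          simp [rA, Equiv.swap_apply_left]
        rw [hra, if_pos ha, inv_mul_cancel₀ hp]
        simp only [matMulRed, one_mul]
        congr 1
        have : (a = ((⟨0, hn⟩ : Fin n), (⟨n - 1, Nat.sub_lt hn Nat.one_pos⟩ : Fin n))) := hae
        simp [this, zi, li]
        exact if_congr Iff.rfl rfl rfl
      · rw [if_neg ha, zero_mul, zero_mul]
        have hane : ¬(a = ((⟨0, hn⟩ : Fin n), (⟨n - 1, Nat.sub_lt hn Nat.one_pos⟩ : Fin n))) := by
          intro hae
          exact ha ⟨by rw [hae]; rfl, by rw [hae]; rfl⟩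
        simp [matMulRed, hane]
    rw [hred]
    refine tendsto_const_nhds.sub ((Filter.Tendsto.mul (Filter.Tendsto.mul ?_
      tendsto_const_nhds) tendsto_const_nhds))
    -- Tendsto (fun m => pA n hn (ts m) a) atTop (𝓝 (if a.1 = zi n hn ∧ a.2 = li n hn then 1 else 0))
    simp only [pA]
    by_cases h1 : a.1 = zi n hn <;> by_cases h2 : a.2 = li n hn
    · simp only [h1, h2, if_true, and_self, mul_one]
      exact tendsto_const_nhds
    · simp only [h1, h2, if_true, if_false, one_mul]
      have : ¬(a.1 = zi n hn ∧ a.2 = li n hn) := fun hc => h2 hc.2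
      simpa [this] using hts0
    · simp only [h1, h2, if_true, if_false, mul_one]
      have : ¬(a.1 = zi n hn ∧ a.2 = li n hn) := fun hc => h1 hc.1
      simpa [this] using hts0
    · simp only [h1, h2, if_false]
      have : ¬(a.1 = zi n hn ∧ a.2 = li n hn) := fun hc => h1 hc.1
      simpa [this] using hts0.mul hts0
  have hfinal : matMulRed n hn ∈ closure (closure
      {S : (Fin n × Fin n) → (Fin n × Fin n) → (Fin n × Fin n) → ℂ | tensorRankLE k S}) :=
    mem_closure_of_tendsto hXlim (Filter.Eventually.of_forall hXmem)
  rwa [closure_closure] at hfinal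
end

section
/- Let K := { [μ ⊗ v ⊗ ν ⊗ w ⊗ ω ⊗ u] ∈ Seg(ℙU* × ℙV × ℙV* × ℙW × ℙW* × ℙU) : μ(u) = ω(w) = ν(v) = 0 }. Then K is the unique closed orbit of the group G_{M_⟨U,V,W⟩} = GL(U) × GL(V) × GL(W) acting on the Segre variety Seg(ℙA × ℙB × ℙC), where A = U* ⊗ V, B = V* ⊗ W, C = W* ⊗ U. -/
open scoped BigOperators

/-- Coordinate tensors in `A ⊗ B ⊗ C` where `A = U* ⊗ V`, `B = V* ⊗ W`, `C = W* ⊗ U`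
with `U = ℂ^p`, `V = ℂ^q`, `W = ℂ^s`, in the standard (matrix-unit) bases. -/
abbrev TSp (p q s : ℕ) := (Fin p × Fin q) → (Fin q × Fin s) → (Fin s × Fin p) → ℂ

/-- The natural action of `GL(U) × GL(V) × GL(W)` on `A ⊗ B ⊗ C = (U*⊗V) ⊗ (V*⊗W) ⊗ (W*⊗U)`,
written in coordinates. -/
noncomputable def gact {p q s : ℕ}
    (g : GL (Fin p) ℂ × GL (Fin q) ℂ × GL (Fin s) ℂ) (T : TSp p q s) : TSp p q s :=
  fun a b c =>
    ∑ a' : Fin p × Fin q, ∑ b' : Fin q × Fin s, ∑ c' : Fin s × Fin p,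
      ((g.1⁻¹ : GL (Fin p) ℂ) : Matrix (Fin p) (Fin p) ℂ) a'.1 a.1 *
        ((g.2.1 : Matrix (Fin q) (Fin q) ℂ) a.2 a'.2) *
        ((g.2.1⁻¹ : GL (Fin q) ℂ) : Matrix (Fin q) (Fin q) ℂ) b'.1 b.1 *
        ((g.2.2 : Matrix (Fin s) (Fin s) ℂ) b.2 b'.2) *
        ((g.2.2⁻¹ : GL (Fin s) ℂ) : Matrix (Fin s) (Fin s) ℂ) c'.1 c.1 *
        ((g.1 : Matrix (Fin p) (Fin p) ℂ) c.2 c'.2) *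
        T a' b' c'

/-- The cone over the Segre variety: simple tensors `a ⊗ b ⊗ c` (including `0`). -/
def segreCone (p q s : ℕ) : Set (TSp p q s) :=
  {T | ∃ (a : Fin p × Fin q → ℂ) (b : Fin q × Fin s → ℂ) (c : Fin s × Fin p → ℂ),
    T = fun x y z => a x * b y * c z}

/-- The cone over
`K = { [μ⊗v ⊗ ν⊗w ⊗ ω⊗u] ∈ Seg(ℙU*×ℙV×ℙV*×ℙW×ℙW*×ℙU) : μ(u) = ν(v) = ω(w) = 0 }`. -/
def Kcone (p q s : ℕ) : Set (TSp p q s) :=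
  {T | ∃ (μ : Fin p → ℂ) (v : Fin q → ℂ) (ν : Fin q → ℂ) (w : Fin s → ℂ)
      (ω : Fin s → ℂ) (u : Fin p → ℂ),
    (∑ i, μ i * u i = 0) ∧ (∑ j, ν j * v j = 0) ∧ (∑ k, ω k * w k = 0) ∧
      T = fun x y z => μ x.1 * v x.2 * ν y.1 * w y.2 * ω z.1 * u z.2}

/-- The matrix multiplication tensor `M_⟨U,V,W⟩ = Id_U ⊗ Id_V ⊗ Id_W` in coordinates. -/
def mmT (p q s : ℕ) : TSp p q s :=
  fun a b c => if a.2 = b.1 ∧ b.2 = c.1 ∧ c.2 = a.1 then 1 else 0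

namespace Stmt7aux

abbrev GLg (p q s : ℕ) := GL (Fin p) ℂ × GL (Fin q) ℂ × GL (Fin s) ℂ

variable {p q s : ℕ}

def rk1 {p q s : ℕ} (μ : Fin p → ℂ) (v : Fin q → ℂ) (ν : Fin q → ℂ) (w : Fin s → ℂ)
    (ω : Fin s → ℂ) (u : Fin p → ℂ) : TSp p q s :=
  fun x y z => μ x.1 * v x.2 * ν y.1 * w y.2 * ω z.1 * u z.2

lemma gact_rk1 (g : GLg p q s)
    (μ : Fin p → ℂ) (v : Fin q → ℂ) (ν : Fin q → ℂ) (w : Fin s → ℂ)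
    (ω : Fin s → ℂ) (u : Fin p → ℂ) :
    gact g (rk1 μ v ν w ω u) =
      rk1 (Matrix.vecMul μ ((g.1⁻¹ : GL (Fin p) ℂ) : Matrix (Fin p) (Fin p) ℂ))
        (Matrix.mulVec ((g.2.1 : Matrix (Fin q) (Fin q) ℂ)) v)
        (Matrix.vecMul ν ((g.2.1⁻¹ : GL (Fin q) ℂ) : Matrix (Fin q) (Fin q) ℂ))
        (Matrix.mulVec ((g.2.2 : Matrix (Fin s) (Fin s) ℂ)) w)
        (Matrix.vecMul ω ((g.2.2⁻¹ : GL (Fin s) ℂ) : Matrix (Fin s) (Fin s) ℂ))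
        (Matrix.mulVec ((g.1 : Matrix (Fin p) (Fin p) ℂ)) u) := by
  funext a b c
  rw [gact]
  have hsummand : ∀ (a' : Fin p × Fin q) (b' : Fin q × Fin s) (c' : Fin s × Fin p),
      ((g.1⁻¹ : GL (Fin p) ℂ) : Matrix (Fin p) (Fin p) ℂ) a'.1 a.1 *
        ((g.2.1 : Matrix (Fin q) (Fin q) ℂ) a.2 a'.2) *
        ((g.2.1⁻¹ : GL (Fin q) ℂ) : Matrix (Fin q) (Fin q) ℂ) b'.1 b.1 *
        ((g.2.2 : Matrix (Fin s) (Fin s) ℂ) b.2 b'.2) *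
        ((g.2.2⁻¹ : GL (Fin s) ℂ) : Matrix (Fin s) (Fin s) ℂ) c'.1 c.1 *
        ((g.1 : Matrix (Fin p) (Fin p) ℂ) c.2 c'.2) *
        rk1 μ v ν w ω u a' b' c'
      = ((μ a'.1 * ((g.1⁻¹ : GL (Fin p) ℂ) : Matrix (Fin p) (Fin p) ℂ) a'.1 a.1) *
          (((g.2.1 : Matrix (Fin q) (Fin q) ℂ)) a.2 a'.2 * v a'.2)) *
        (((ν b'.1 * ((g.2.1⁻¹ : GL (Fin q) ℂ) : Matrix (Fin q) (Fin q) ℂ) b'.1 b.1) *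
          (((g.2.2 : Matrix (Fin s) (Fin s) ℂ)) b.2 b'.2 * w b'.2)) *
         ((ω c'.1 * ((g.2.2⁻¹ : GL (Fin s) ℂ) : Matrix (Fin s) (Fin s) ℂ) c'.1 c.1) *
          (((g.1 : Matrix (Fin p) (Fin p) ℂ)) c.2 c'.2 * u c'.2))) := by
    intro a' b' c'; rw [rk1]; ring
  simp only [hsummand]
  simp only [Fintype.sum_prod_type]
  simp only [← Finset.mul_sum, ← Finset.sum_mul]
  simp only [rk1, Matrix.vecMul, Matrix.mulVec, dotProduct]
  ring

lemma gact_smul (g : GLg p q s) (t : ℂ) (T : TSp p q s) : gact g (t • T) = t • gact g T := by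
  funext a b c
  simp only [gact, Pi.smul_apply, smul_eq_mul, Finset.mul_sum]
  refine Finset.sum_congr rfl fun a' _ => Finset.sum_congr rfl fun b' _ =>
    Finset.sum_congr rfl fun c' _ => ?_
  ring

lemma gact_add (g : GLg p q s) (T T' : TSp p q s) :
    gact g (T + T') = gact g T + gact g T' := by
  funext a b c
  simp only [gact, Pi.add_apply, mul_add, Finset.sum_add_distrib]

lemma gact_zero (g : GLg p q s) : gact g (0 : TSp p q s) = 0 := by
  funext a b c; simp [gact]

lemma gact_sum {ι : Type*} (g : GLg p q s) (t : Finset ι) (F : ι → TSp p q s) :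
    gact g (∑ i ∈ t, F i) = ∑ i ∈ t, gact g (F i) := by
  classical
  induction t using Finset.induction_on with
  | empty => simpa using gact_zero g
  | insert _ _ h ih => rw [Finset.sum_insert h, Finset.sum_insert h, gact_add, ih]

def esingle (n : ℕ) (i : Fin n) : Fin n → ℂ := fun j => if j = i then 1 else 0

def delta (x' : Fin p × Fin q) (y' : Fin q × Fin s) (z' : Fin s × Fin p) : TSp p q s :=
  rk1 (esingle p x'.1) (esingle q x'.2) (esingle q y'.1) (esingle s y'.2)
    (esingle s z'.1) (esingle p z'.2)

lemma delta_apply (x' : Fin p × Fin q) (y' : Fin q × Fin s) (z' : Fin s × Fin p)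
    (x : Fin p × Fin q) (y : Fin q × Fin s) (z : Fin s × Fin p) :
    delta x' y' z' x y z = if x = x' ∧ y = y' ∧ z = z' then 1 else 0 := by
  simp only [delta, rk1, esingle, Prod.ext_iff]
  by_cases h1 : x.1 = x'.1 <;> by_cases h2 : x.2 = x'.2 <;> by_cases h3 : y.1 = y'.1 <;>
    by_cases h4 : y.2 = y'.2 <;> by_cases h5 : z.1 = z'.1 <;> by_cases h6 : z.2 = z'.2 <;>
    simp [h1, h2, h3, h4, h5, h6]

lemma tsp_eq_sum_delta (T : TSp p q s) :
    T = ∑ m : (Fin p × Fin q) × (Fin q × Fin s) × (Fin s × Fin p),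
      T m.1 m.2.1 m.2.2 • delta m.1 m.2.1 m.2.2 := by
  funext x y z
  have : (∑ m : (Fin p × Fin q) × (Fin q × Fin s) × (Fin s × Fin p),
      T m.1 m.2.1 m.2.2 • delta m.1 m.2.1 m.2.2) x y z
      = ∑ m : (Fin p × Fin q) × (Fin q × Fin s) × (Fin s × Fin p),
        T m.1 m.2.1 m.2.2 * delta m.1 m.2.1 m.2.2 x y z := by
    simp [Finset.sum_apply]
  rw [this]
  simp only [delta_apply]
  rw [Fintype.sum_eq_single (x, y, z) ?_]
  · simp
  · intro m hm
    have : ¬(x = m.1 ∧ y = m.2.1 ∧ z = m.2.2) := by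
      rintro ⟨h1, h2, h3⟩; exact hm (by simp [Prod.ext_iff, h1, h2, h3])
    simp [this]

lemma gact_one (T : TSp p q s) : gact (1 : GLg p q s) T = T := by
  conv_lhs => rw [tsp_eq_sum_delta T]
  rw [gact_sum]
  conv_rhs => rw [tsp_eq_sum_delta T]
  refine Finset.sum_congr rfl fun m _ => ?_
  rw [gact_smul, delta, gact_rk1]
  simp

lemma gact_gact (g h : GLg p q s) (T : TSp p q s) :
    gact g (gact h T) = gact (g * h) T := by
  conv_lhs => rw [tsp_eq_sum_delta T]
  conv_rhs => rw [tsp_eq_sum_delta T]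
  rw [gact_sum, gact_sum, gact_sum]
  refine Finset.sum_congr rfl fun m _ => ?_
  rw [gact_smul, gact_smul, gact_smul, delta, gact_rk1, gact_rk1, gact_rk1]
  simp [Prod.fst_mul, Prod.snd_mul, mul_inv_rev, Units.val_mul, Matrix.vecMul_vecMul,
    Matrix.mulVec_mulVec]


lemma sum_two {n : ℕ} (r m : Fin n) (h : m ≠ r) (x y : ℂ) (f : Fin n → ℂ) :
    ∑ k, (if k = r then x else if k = m then y else 0) * f k = x * f r + y * f m := by
  have key : ∀ k, (if k = r then x else if k = m then y else 0) * f k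
      = (if k = r then x * f k else 0) + (if k = m then y * f k else 0) := by
    intro k
    by_cases hk : k = r
    · subst hk
      have : k ≠ m := fun hm => h (hm ▸ rfl)
      simp [this]
    · by_cases hk2 : k = m <;> simp [hk, hk2, h]
  simp only [key, Finset.sum_add_distrib, Finset.sum_ite_eq', Finset.mem_univ, if_true]

lemma sum_pick {n : ℕ} (i0 : Fin n) (f : Fin n → ℂ) :
    ∑ k, (if k = i0 then (1:ℂ) else 0) * f k = f i0 := by
  rw [Finset.sum_eq_single i0]
  · simp
  · intro b _ hb; simp [hb]
  · simp

lemma sum_pick' {n : ℕ} (i0 : Fin n) (f : Fin n → ℂ) :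
    ∑ k, (if i0 = k then (1:ℂ) else 0) * f k = f i0 := by
  rw [Finset.sum_eq_single i0]
  · simp
  · intro b _ hb; simp [Ne.symm hb]
  · simp

lemma fix_unit {n : ℕ} (r m : Fin n) (hrm : m ≠ r) (ε : ℂ) (hε : ε ≠ 0) :
    ∃ g : GL (Fin n) ℂ,
      Matrix.vecMul (esingle n r) ((g⁻¹ : GL (Fin n) ℂ) : Matrix (Fin n) (Fin n) ℂ)
        = (fun j => if j = r then ε else if j = m then 1 else 0) ∧
      Matrix.mulVec ((g : GL (Fin n) ℂ) : Matrix (Fin n) (Fin n) ℂ) (esingle n r)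
        = ε⁻¹ • esingle n r := by
  classical
  set M : Matrix (Fin n) (Fin n) ℂ :=
    Matrix.of (fun i j => if i = r then (if j = r then ε else if j = m then 1 else 0)
      else if i = j then 1 else 0) with hM
  set G : Matrix (Fin n) (Fin n) ℂ :=
    Matrix.of (fun i j => if i = r then (if j = r then ε⁻¹ else if j = m then -ε⁻¹ else 0)
      else if i = j then 1 else 0) with hG
  have hMapp : ∀ i j, M i j = if i = r then (if j = r then ε else if j = m then 1 else 0)
      else if i = j then 1 else 0 := fun i j => rfl
  have hGapp : ∀ i j, G i j = if i = r then (if j = r then ε⁻¹ else if j = m then -ε⁻¹ else 0)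
      else if i = j then 1 else 0 := fun i j => rfl
  have hGM : G * M = 1 := by
    ext i j
    rw [Matrix.mul_apply]
    by_cases hi : i = r
    · subst hi
      have h1 : ∀ k, G i k * M k j = (if k = i then ε⁻¹ else if k = m then -ε⁻¹ else 0) * M k j := by
        intro k; rw [hGapp]; simp
      simp only [h1]
      rw [sum_two i m hrm ε⁻¹ (-ε⁻¹) (fun k => M k j)]
      rw [hMapp, hMapp]
      simp only [if_pos rfl, if_neg hrm]
      by_cases hj : j = i
      · simp [hj, Matrix.one_apply, inv_mul_cancel₀ hε, hrm]
      · by_cases hj2 : j = m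
        · simp [hj, hj2, Matrix.one_apply, Ne.symm hj, Ne.symm hrm, hrm]
        · simp [hj, hj2, Matrix.one_apply, Ne.symm hj, Ne.symm hj2]
    · have h1 : ∀ k, G i k * M k j = (if i = k then (1:ℂ) else 0) * M k j := by
        intro k; rw [hGapp]; simp [hi, eq_comm]
      simp only [h1, sum_pick']
      rw [hMapp]
      simp [hi, Matrix.one_apply]
  have hMG : M * G = 1 := by
    ext i j
    rw [Matrix.mul_apply]
    by_cases hi : i = r
    · subst hi
      have h1 : ∀ k, M i k * G k j = (if k = i then ε else if k = m then 1 else 0) * G k j := by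
        intro k; rw [hMapp]; simp
      simp only [h1]
      rw [sum_two i m hrm ε 1 (fun k => G k j)]
      rw [hGapp, hGapp]
      simp only [if_pos rfl, if_neg hrm]
      by_cases hj : j = i
      · simp [hj, Matrix.one_apply, mul_inv_cancel₀ hε, hrm]
      · by_cases hj2 : j = m
        · simp [hj, hj2, Matrix.one_apply, Ne.symm hj, hrm, Ne.symm hrm, mul_neg,
            mul_inv_cancel₀ hε, hε]
        · simp [hj, hj2, Matrix.one_apply, Ne.symm hj, Ne.symm hj2]
    · have h1 : ∀ k, M i k * G k j = (if i = k then (1:ℂ) else 0) * G k j := by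
        intro k; rw [hMapp]; simp [hi, eq_comm]
      simp only [h1, sum_pick']
      rw [hGapp]
      simp [hi, Matrix.one_apply]
  refine ⟨⟨G, M, hGM, hMG⟩, ?_, ?_⟩
  · funext j
    show Matrix.vecMul (esingle n r) M j = _
    rw [Matrix.vecMul, dotProduct]
    have h2 : ∀ i, esingle n r i * M i j = (if i = r then (1:ℂ) else 0) * M i j := fun i => rfl
    simp only [h2, sum_pick]
    rw [hMapp]; simp
  · funext i
    show Matrix.mulVec G (esingle n r) i = _
    rw [Matrix.mulVec, dotProduct]
    have h2 : ∀ j, G i j * esingle n r j = (if j = r then (1:ℂ) else 0) * G i j := by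
      intro j; simp only [esingle]; by_cases hj : j = r <;> simp [hj] <;> ring
    simp only [h2, sum_pick]
    rw [hGapp]
    simp only [Pi.smul_apply, esingle, smul_eq_mul]
    by_cases hi : i = r <;> simp [hi]

lemma pair_normalize {n : ℕ} (hn : 2 ≤ n) (μ u : Fin n → ℂ) (hμ : μ ≠ 0) (hu : u ≠ 0)
    (h0 : ∑ i, μ i * u i = 0) :
    ∃ g : GL (Fin n) ℂ,
      Matrix.vecMul μ ((g⁻¹ : GL (Fin n) ℂ) : Matrix (Fin n) (Fin n) ℂ)
          = esingle n ⟨0, by omega⟩ ∧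
      Matrix.mulVec ((g : GL (Fin n) ℂ) : Matrix (Fin n) (Fin n) ℂ) u
          = esingle n ⟨1, by omega⟩ := by
  classical
  set i0 : Fin n := ⟨0, by omega⟩ with hi0
  set i1 : Fin n := ⟨1, by omega⟩ with hi1
  set dot : (Fin n → ℂ) → (Fin n → ℂ) → ℂ := fun f g => ∑ i, f i * g i with hdot
  obtain ⟨iμ, hiμ⟩ : ∃ i, μ i ≠ 0 := by
    by_contra h; push_neg at h; exact hμ (funext fun i => h i)
  set x : Fin n → ℂ := fun j => if j = iμ then (μ iμ)⁻¹ else 0 with hx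
  have hμx : dot μ x = 1 := by
    simp only [hdot, hx]
    rw [Finset.sum_eq_single iμ]
    · simp [mul_inv_cancel₀ hiμ]
    · intro b _ hb; simp [hb]
    · simp
  have hμu : dot μ u = 0 := h0
  have hxu : x ≠ u := by
    intro h; rw [← h] at hμu; rw [hμx] at hμu; exact one_ne_zero hμu
  have hli : LinearIndependent ℂ ![x, u] := by
    rw [LinearIndependent.pair_iff]
    intro a b hab
    have h1 : a * dot μ x + b * dot μ u = 0 := by
      have := congrArg (fun y => dot μ y) hab
      simpa [hdot, Finset.mul_sum, Finset.sum_add_distrib, mul_add, mul_assoc,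
        mul_left_comm] using this
    rw [hμx, hμu] at h1
    have ha : a = 0 := by simpa using h1
    subst ha
    simp only [zero_smul, zero_add] at hab
    have hb : b = 0 := by
      by_contra hb
      exact hu (by simpa [hb] using congrArg (fun y => b⁻¹ • y) hab)
    exact ⟨rfl, hb⟩
  have hliS : LinearIndepOn ℂ id ({x, u} : Set (Fin n → ℂ)) := by
    have h2 := hli.linearIndepOn_id
    have hr : Set.range ![x, u] = ({x, u} : Set (Fin n → ℂ)) := by
      ext y; simp [Matrix.range_cons, Matrix.range_empty]; tauto
    rwa [hr] at h2
  -- extend to a basis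
  set tset := hliS.extend (Set.subset_univ _) with htset
  have hxmem : x ∈ tset := hliS.subset_extend _ (by simp)
  have humem : u ∈ tset := hliS.subset_extend _ (by simp)
  let B : Module.Basis ↥tset ℂ (Fin n → ℂ) := Module.Basis.extend hliS
  haveI : Fintype ↥tset := FiniteDimensional.fintypeBasisIndex B
  have hcard : Fintype.card ↥tset = n := by
    have h3 := Module.finrank_eq_card_basis B
    rw [Module.finrank_pi] at h3
    simpa using h3.symm
  -- equiv sending x to i0, u to i1
  obtain ⟨e⟩ : Nonempty (↥tset ≃ Fin n) := ⟨Fintype.equivFinOfCardEq hcard⟩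
  set xx : ↥tset := ⟨x, hxmem⟩
  set uu : ↥tset := ⟨u, humem⟩
  set e1 : ↥tset ≃ Fin n := e.trans (Equiv.swap (e xx) i0) with he1
  have he1x : e1 xx = i0 := by simp [he1]
  set e2 : ↥tset ≃ Fin n := e1.trans (Equiv.swap (e1 uu) i1) with he2
  have hxune : xx ≠ uu := by simp [xx, uu, hxu]
  have he2u : e2 uu = i1 := by simp [he2]
  have he2x : e2 xx = i0 := by
    have h4 : e1 uu ≠ i0 := by
      rw [← he1x]; exact fun h => hxune (e1.injective h.symm)
    have h5 : i1 ≠ i0 := by simp [hi0, hi1, Fin.ext_iff]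
    rw [he2, Equiv.trans_apply, he1x, Equiv.swap_apply_of_ne_of_ne h4.symm h5.symm]
  let C : Module.Basis (Fin n) ℂ (Fin n → ℂ) := B.reindex e2
  have hC0 : C i0 = x := by
    rw [Module.Basis.reindex_apply, ← he2x, Equiv.symm_apply_apply]
    exact Module.Basis.extend_apply_self hliS xx
  have hC1 : C i1 = u := by
    rw [Module.Basis.reindex_apply, ← he2u, Equiv.symm_apply_apply]
    exact Module.Basis.extend_apply_self hliS uu
  have h10 : i1 ≠ i0 := by simp [hi0, hi1, Fin.ext_iff]
  set d : Fin n → (Fin n → ℂ) := fun j => if j = i0 then x else C j - (dot μ (C j)) • x with hd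
  have hd0 : d i0 = x := by simp [hd]
  have hd1 : d i1 = u := by
    simp only [hd, if_neg h10, hC1, hμu, zero_smul, sub_zero]
  have hdlin : ∀ (f : Fin n → ℂ) (k : ℂ), dot μ (f - k • x) = dot μ f - k * dot μ x := by
    intro f k
    simp only [hdot, Pi.sub_apply, Pi.smul_apply, smul_eq_mul, mul_sub, Finset.sum_sub_distrib,
      Finset.mul_sum]
    congr 1
    exact Finset.sum_congr rfl fun i _ => by ring
  have hdotd : ∀ j, dot μ (d j) = if j = i0 then 1 else 0 := by
    intro j
    by_cases hj : j = i0
    · simp [hd, hj, hμx]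
    · simp only [hd, if_neg hj, hdlin, hμx, mul_one, sub_self]
  have hspan : ⊤ ≤ Submodule.span ℂ (Set.range d) := by
    rw [← C.span_eq]
    refine Submodule.span_le.mpr ?_
    rintro y ⟨j, rfl⟩
    by_cases hj : j = i0
    · subst hj; rw [hC0, ← hd0]; exact Submodule.subset_span ⟨i0, rfl⟩
    · have : C j = d j + (dot μ (C j)) • d i0 := by
        rw [hd0]; simp [hd, if_neg hj]
      rw [this]
      exact Submodule.add_mem _ (Submodule.subset_span ⟨j, rfl⟩)
        (Submodule.smul_mem _ _ (Submodule.subset_span ⟨i0, rfl⟩))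
  have hcard' : Fintype.card (Fin n) = Module.finrank ℂ (Fin n → ℂ) := by
    simp [Module.finrank_pi]
  let D := basisOfTopLeSpanOfCardEqFinrank d hspan hcard'
  have hD : ⇑D = d := coe_basisOfTopLeSpanOfCardEqFinrank d hspan hcard'
  set M := (Pi.basisFun ℂ (Fin n)).toMatrix ⇑D with hMdef
  haveI : Invertible M := (Pi.basisFun ℂ (Fin n)).invertibleToMatrix D
  have hM : ∀ i j, M i j = d j i := by
    intro i j; rw [hMdef, Module.Basis.toMatrix_apply, Pi.basisFun_repr, hD]
  set gu : (Matrix (Fin n) (Fin n) ℂ)ˣ := ⟨M, ⅟M, mul_invOf_self M, invOf_mul_self M⟩ with hgu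
  refine ⟨(gu⁻¹ : (Matrix (Fin n) (Fin n) ℂ)ˣ), ?_, ?_⟩
  · have hinv : ((gu⁻¹)⁻¹ : (Matrix (Fin n) (Fin n) ℂ)ˣ) = gu := inv_inv gu
    show Matrix.vecMul μ ((gu⁻¹)⁻¹ : (Matrix (Fin n) (Fin n) ℂ)ˣ).val = _
    rw [hinv]
    funext j
    have : Matrix.vecMul μ (gu.val) j = dot μ (d j) := by
      simp only [Matrix.vecMul, dotProduct, hgu, hdot]
      exact Finset.sum_congr rfl fun i _ => by rw [hM]
    rw [this, hdotd, esingle]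
  · show Matrix.mulVec (gu⁻¹ : (Matrix (Fin n) (Fin n) ℂ)ˣ).val u = _
    have hval : (gu⁻¹ : (Matrix (Fin n) (Fin n) ℂ)ˣ).val = ⅟M := rfl
    have hueq : u = Matrix.mulVec M (esingle n i1) := by
      funext i
      simp only [Matrix.mulVec, dotProduct, esingle]
      rw [Finset.sum_eq_single i1]
      · rw [hM, hd1]; simp
      · intro b _ hb; simp [hb]
      · simp
    rw [hval, hueq, Matrix.mulVec_mulVec, invOf_mul_self, Matrix.one_mulVec]

open Filter Topology

lemma closed_cone {E : Type*} [NormedAddCommGroup E] [NormedSpace ℂ E]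
    (C : Set E) (hC : IsCompact C) (h0 : (0:E) ∉ C) :
    IsClosed {x | ∃ c : ℂ, ∃ v ∈ C, x = c • v} := by
  rcases C.eq_empty_or_nonempty with hCe | hCne
  · simp [hCe]
  refine IsSeqClosed.isClosed ?_
  intro f x hf hx
  choose cs vs hvs hfs using hf
  -- min norm on C
  obtain ⟨v0, hv0C, hv0min⟩ := hC.exists_isMinOn hCne continuous_norm.continuousOn
  have hε : 0 < ‖v0‖ := by
    rcases eq_or_ne v0 0 with h | h
    · exact absurd (h ▸ hv0C) h0
    · exact norm_pos_iff.mpr h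
  -- subsequence of vs converging
  obtain ⟨v, hvC, φ, hφ, hvlim⟩ := hC.tendsto_subseq hvs
  -- norms of f bounded
  obtain ⟨R, hR⟩ : ∃ R, ∀ n, ‖f n‖ ≤ R := by
    have hb : Bornology.IsBounded (Set.range f) := hx.cauchySeq.isBounded_range
    obtain ⟨R, hR⟩ := hb.exists_norm_le
    exact ⟨R, fun n => hR _ ⟨n, rfl⟩⟩
  have hcb : ∀ n, ‖cs (φ n)‖ ≤ R / ‖v0‖ := by
    intro n
    have h1 : ‖v0‖ ≤ ‖vs (φ n)‖ := hv0min (hvs (φ n))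
    have h2 : ‖cs (φ n)‖ * ‖vs (φ n)‖ = ‖f (φ n)‖ := by rw [← norm_smul, ← hfs]
    have h3 : ‖cs (φ n)‖ * ‖v0‖ ≤ R := by
      calc ‖cs (φ n)‖ * ‖v0‖ ≤ ‖cs (φ n)‖ * ‖vs (φ n)‖ := by
            exact mul_le_mul_of_nonneg_left h1 (norm_nonneg _)
        _ = ‖f (φ n)‖ := h2
        _ ≤ R := hR _
    rw [le_div_iff₀ hε]
    exact h3
  obtain ⟨c, -, ψ, hψ, hclim⟩ := tendsto_subseq_of_bounded
    (Metric.isBounded_closedBall (x := (0:ℂ)) (r := R / ‖v0‖)) (x := fun n => cs (φ n))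
    (fun n => by simpa using hcb n)
  have hlim2 : Tendsto (fun n => cs (φ (ψ n)) • vs (φ (ψ n))) atTop (𝓝 (c • v)) :=
    hclim.smul (hvlim.comp hψ.tendsto_atTop)
  have hlim3 : Tendsto (fun n => f (φ (ψ n))) atTop (𝓝 x) :=
    hx.comp ((hφ.comp hψ).tendsto_atTop)
  have : x = c • v := by
    refine tendsto_nhds_unique hlim3 ?_
    convert hlim2 using 2
    exact hfs _
  exact ⟨c, v, hvC, this⟩

abbrev Vec6 (p q s : ℕ) :=
  (Fin p → ℂ) × (Fin q → ℂ) × (Fin q → ℂ) × (Fin s → ℂ) × (Fin s → ℂ) × (Fin p → ℂ)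

def Phi (y : Vec6 p q s) : TSp p q s :=
  rk1 y.1 y.2.1 y.2.2.1 y.2.2.2.1 y.2.2.2.2.1 y.2.2.2.2.2

def Sset (p q s : ℕ) : Set (Vec6 p q s) :=
  {y | (‖y.1‖ = 1 ∧ ‖y.2.1‖ = 1 ∧ ‖y.2.2.1‖ = 1 ∧ ‖y.2.2.2.1‖ = 1 ∧ ‖y.2.2.2.2.1‖ = 1 ∧
      ‖y.2.2.2.2.2‖ = 1) ∧
    (∑ i, y.1 i * y.2.2.2.2.2 i = 0) ∧ (∑ j, y.2.2.1 j * y.2.1 j = 0) ∧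
      (∑ k, y.2.2.2.2.1 k * y.2.2.2.1 k = 0)}

lemma continuous_Phi : Continuous (Phi : Vec6 p q s → TSp p q s) := by
  refine continuous_pi fun a => continuous_pi fun b => continuous_pi fun c => ?_
  unfold Phi rk1
  fun_prop

lemma kcone_smul (c : ℂ) {T : TSp p q s} (hT : T ∈ Kcone p q s) : c • T ∈ Kcone p q s := by
  obtain ⟨μ, v, ν, w, ω, u, h1, h2, h3, hT⟩ := hT
  refine ⟨c • μ, v, ν, w, ω, u, ?_, h2, h3, ?_⟩
  · simp only [Pi.smul_apply, smul_eq_mul, mul_assoc, ← Finset.mul_sum, h1, mul_zero]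
  · funext x y z
    simp only [hT, Pi.smul_apply, smul_eq_mul]
    ring


lemma esingle_pair_zero {n : ℕ} (a b : Fin n) (h : a ≠ b) :
    ∑ i, (if i = a then (1:ℂ) else 0) * (if i = b then (1:ℂ) else 0) = 0 := by
  refine Finset.sum_eq_zero fun i _ => ?_
  by_cases hia : i = a
  · have : i ≠ b := fun hib => h (hia ▸ hib ▸ rfl)
    simp [this]
  · simp [hia]

lemma norm_esingle_one {n : ℕ} (i : Fin n) :
    ‖(fun j => if j = i then (1:ℂ) else 0 : Fin n → ℂ)‖ = 1 := by
  have : (fun j => if j = i then (1:ℂ) else 0 : Fin n → ℂ) = Pi.single i 1 := by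
    funext j; simp [Pi.single_apply]
  rw [this, Pi.norm_single]; simp

lemma rk1_smul_all {p q s : ℕ} (c1 c2 c3 c4 c5 c6 : ℂ) (μ : Fin p → ℂ) (v : Fin q → ℂ)
    (ν : Fin q → ℂ) (w : Fin s → ℂ) (ω : Fin s → ℂ) (u : Fin p → ℂ) :
    rk1 (c1 • μ) (c2 • v) (c3 • ν) (c4 • w) (c5 • ω) (c6 • u)
      = (c1 * c2 * c3 * c4 * c5 * c6) • rk1 μ v ν w ω u := by
  funext x y z
  simp only [rk1, Pi.smul_apply, smul_eq_mul]
  ring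

lemma stdSsetMem (hp : 2 ≤ p) (hq : 2 ≤ q) (hs : 2 ≤ s) :
    ∃ y : Vec6 p q s, y ∈ Sset p q s := by
  refine ⟨((fun j => if j = (⟨0, by omega⟩ : Fin p) then (1:ℂ) else 0),
    (fun j => if j = (⟨0, by omega⟩ : Fin q) then (1:ℂ) else 0),
    (fun j => if j = (⟨1, by omega⟩ : Fin q) then (1:ℂ) else 0),
    (fun j => if j = (⟨0, by omega⟩ : Fin s) then (1:ℂ) else 0),
    (fun j => if j = (⟨1, by omega⟩ : Fin s) then (1:ℂ) else 0),
    (fun j => if j = (⟨1, by omega⟩ : Fin p) then (1:ℂ) else 0)), ?_, ?_, ?_, ?_⟩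
  · exact ⟨norm_esingle_one _, norm_esingle_one _, norm_esingle_one _, norm_esingle_one _,
      norm_esingle_one _, norm_esingle_one _⟩
  · exact esingle_pair_zero _ _ (by simp [Fin.ext_iff])
  · exact esingle_pair_zero _ _ (by simp [Fin.ext_iff])
  · exact esingle_pair_zero _ _ (by simp [Fin.ext_iff])

set_option maxHeartbeats 1600000 in
lemma isClosed_Kcone (hp : 2 ≤ p) (hq : 2 ≤ q) (hs : 2 ≤ s) : IsClosed (Kcone p q s) := by
  classical
  have hSc : IsCompact (Sset p q s) := by
    have hsub : Sset p q s ⊆ (Metric.sphere 0 1) ×ˢ (Metric.sphere 0 1) ×ˢ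
        (Metric.sphere 0 1) ×ˢ (Metric.sphere 0 1) ×ˢ (Metric.sphere 0 1) ×ˢ
        (Metric.sphere 0 1) := by
      rintro y ⟨⟨h1, h2, h3, h4, h5, h6⟩, -⟩
      refine ⟨?_, ?_, ?_, ?_, ?_, ?_⟩ <;> simp [mem_sphere_iff_norm, *]
    have hcomp : IsCompact ((Metric.sphere (0 : Fin p → ℂ) 1) ×ˢ
        (Metric.sphere (0 : Fin q → ℂ) 1) ×ˢ (Metric.sphere (0 : Fin q → ℂ) 1) ×ˢ
        (Metric.sphere (0 : Fin s → ℂ) 1) ×ˢ (Metric.sphere (0 : Fin s → ℂ) 1) ×ˢ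
        (Metric.sphere (0 : Fin p → ℂ) 1)) :=
      (isCompact_sphere _ _).prod ((isCompact_sphere _ _).prod ((isCompact_sphere _ _).prod
        ((isCompact_sphere _ _).prod ((isCompact_sphere _ _).prod (isCompact_sphere _ _)))))
    refine IsCompact.of_isClosed_subset hcomp ?_ hsub
    have c1 : Continuous fun y : Vec6 p q s => y.1 := continuous_fst
    have c2 : Continuous fun y : Vec6 p q s => y.2.1 := continuous_fst.comp continuous_snd
    have c3 : Continuous fun y : Vec6 p q s => y.2.2.1 := by fun_prop
    have c4 : Continuous fun y : Vec6 p q s => y.2.2.2.1 := by fun_prop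
    have c5 : Continuous fun y : Vec6 p q s => y.2.2.2.2.1 := by fun_prop
    have c6 : Continuous fun y : Vec6 p q s => y.2.2.2.2.2 := by fun_prop
    refine IsClosed.inter ?_ ?_
    · refine IsClosed.inter (isClosed_eq c1.norm continuous_const) ?_
      refine IsClosed.inter (isClosed_eq c2.norm continuous_const) ?_
      refine IsClosed.inter (isClosed_eq c3.norm continuous_const) ?_
      refine IsClosed.inter (isClosed_eq c4.norm continuous_const) ?_
      exact IsClosed.inter (isClosed_eq c5.norm continuous_const)
        (isClosed_eq c6.norm continuous_const)
    · refine IsClosed.inter (isClosed_eq (by fun_prop) continuous_const) ?_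
      exact IsClosed.inter (isClosed_eq (by fun_prop) continuous_const)
        (isClosed_eq (by fun_prop) continuous_const)
  -- 0 not in image, image compact
  have himc : IsCompact (Phi '' Sset p q s) := hSc.image continuous_Phi
  have h0im : (0 : TSp p q s) ∉ Phi '' Sset p q s := by
    rintro ⟨y, hy, hy0⟩
    obtain ⟨⟨h1, h2, h3, h4, h5, h6⟩, -⟩ := hy
    have n1 : y.1 ≠ 0 := by intro h; rw [h] at h1; simp at h1
    have n2 : y.2.1 ≠ 0 := by intro h; rw [h] at h2; simp at h2
    have n3 : y.2.2.1 ≠ 0 := by intro h; rw [h] at h3; simp at h3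
    have n4 : y.2.2.2.1 ≠ 0 := by intro h; rw [h] at h4; simp at h4
    have n5 : y.2.2.2.2.1 ≠ 0 := by intro h; rw [h] at h5; simp at h5
    have n6 : y.2.2.2.2.2 ≠ 0 := by intro h; rw [h] at h6; simp at h6
    obtain ⟨i1, hi1⟩ := Function.ne_iff.mp n1
    obtain ⟨i2, hi2⟩ := Function.ne_iff.mp n2
    obtain ⟨i3, hi3⟩ := Function.ne_iff.mp n3
    obtain ⟨i4, hi4⟩ := Function.ne_iff.mp n4
    obtain ⟨i5, hi5⟩ := Function.ne_iff.mp n5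
    obtain ⟨i6, hi6⟩ := Function.ne_iff.mp n6
    have := congrFun (congrFun (congrFun hy0 (i1, i2)) (i3, i4)) (i5, i6)
    simp only [Phi, rk1, Pi.zero_apply] at this
    simp only [Pi.zero_apply] at hi1 hi2 hi3 hi4 hi5 hi6
    exact (mul_ne_zero (mul_ne_zero (mul_ne_zero (mul_ne_zero (mul_ne_zero hi1 hi2) hi3) hi4)
      hi5) hi6) this
  have hKeq : Kcone p q s = {x | ∃ c : ℂ, ∃ v ∈ Phi '' Sset p q s, x = c • v} := by
    ext T
    constructor
    · rintro ⟨μ, v, ν, w, ω, u, h1, h2, h3, hT⟩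
      by_cases hz : μ = 0 ∨ v = 0 ∨ ν = 0 ∨ w = 0 ∨ ω = 0 ∨ u = 0
      · -- T = 0
        have hT0 : T = 0 := by
          funext x y z
          rcases hz with h|h|h|h|h|h <;> simp [hT, h]
        obtain ⟨y0, hy0⟩ := stdSsetMem hp hq hs
        exact ⟨0, _, ⟨y0, hy0, rfl⟩, by rw [hT0, zero_smul]⟩
      · push_neg at hz
        obtain ⟨z1, z2, z3, z4, z5, z6⟩ := hz
        set y : Vec6 p q s := ((((‖μ‖:ℂ))⁻¹ • μ), (((‖v‖:ℂ))⁻¹ • v), (((‖ν‖:ℂ))⁻¹ • ν),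
          (((‖w‖:ℂ))⁻¹ • w), (((‖ω‖:ℂ))⁻¹ • ω), (((‖u‖:ℂ))⁻¹ • u)) with hy
        have hnorm1 : ∀ {n : ℕ} (f : Fin n → ℂ), f ≠ 0 → ‖((‖f‖:ℂ))⁻¹ • f‖ = 1 := by
          intro n f hf
          rw [norm_smul]
          simp [norm_ne_zero_iff.mpr hf, abs_of_nonneg (norm_nonneg f)]
        have hpair : ∀ {n : ℕ} (f g : Fin n → ℂ) (cf cg : ℂ), (∑ i, f i * g i = 0) →
            ∑ i, (cf • f) i * (cg • g) i = 0 := by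
          intro n f g cf cg hfg
          have : ∀ i, (cf • f) i * (cg • g) i = (cf * cg) * (f i * g i) := by
            intro i; simp [mul_assoc, mul_comm, mul_left_comm]
          simp only [this, ← Finset.mul_sum, hfg, mul_zero]
        have hyS : y ∈ Sset p q s := by
          refine ⟨⟨hnorm1 μ z1, hnorm1 v z2, hnorm1 ν z3, hnorm1 w z4, hnorm1 ω z5,
            hnorm1 u z6⟩, ?_, ?_, ?_⟩
          · exact hpair μ u _ _ h1
          · exact hpair ν v _ _ h2
          · exact hpair ω w _ _ h3
        have e1 : (‖μ‖:ℂ) ≠ 0 := by simpa using norm_ne_zero_iff.mpr z1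
        have e2 : (‖v‖:ℂ) ≠ 0 := by simpa using norm_ne_zero_iff.mpr z2
        have e3 : (‖ν‖:ℂ) ≠ 0 := by simpa using norm_ne_zero_iff.mpr z3
        have e4 : (‖w‖:ℂ) ≠ 0 := by simpa using norm_ne_zero_iff.mpr z4
        have e5 : (‖ω‖:ℂ) ≠ 0 := by simpa using norm_ne_zero_iff.mpr z5
        have e6 : (‖u‖:ℂ) ≠ 0 := by simpa using norm_ne_zero_iff.mpr z6
        refine ⟨(‖μ‖:ℂ) * (‖v‖:ℂ) * (‖ν‖:ℂ) * (‖w‖:ℂ) * (‖ω‖:ℂ) * (‖u‖:ℂ), _,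
          ⟨y, hyS, rfl⟩, ?_⟩
        have hPhiy : Phi y = ((‖μ‖:ℂ)⁻¹ * (‖v‖:ℂ)⁻¹ * (‖ν‖:ℂ)⁻¹ * (‖w‖:ℂ)⁻¹ * (‖ω‖:ℂ)⁻¹ *
            (‖u‖:ℂ)⁻¹) • rk1 μ v ν w ω u := by
          rw [hy]
          exact rk1_smul_all _ _ _ _ _ _ μ v ν w ω u
        rw [hPhiy, smul_smul, hT]
        have : ((‖μ‖:ℂ) * (‖v‖:ℂ) * (‖ν‖:ℂ) * (‖w‖:ℂ) * (‖ω‖:ℂ) * (‖u‖:ℂ)) *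
            ((‖μ‖:ℂ)⁻¹ * (‖v‖:ℂ)⁻¹ * (‖ν‖:ℂ)⁻¹ * (‖w‖:ℂ)⁻¹ * (‖ω‖:ℂ)⁻¹ * (‖u‖:ℂ)⁻¹) = 1 := by
          field_simp
        rw [this, one_smul]
        rfl
    · rintro ⟨c, _, ⟨y, hyS, rfl⟩, rfl⟩
      have hPhiK : Phi y ∈ Kcone p q s := by
        obtain ⟨-, hp1, hp2, hp3⟩ := hyS
        exact ⟨y.1, y.2.1, y.2.2.1, y.2.2.2.1, y.2.2.2.2.1, y.2.2.2.2.2, hp1, hp2, hp3, rfl⟩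
      exact kcone_smul c hPhiK
  rw [hKeq]
  exact closed_cone _ himc h0im


noncomputable def diagGL {n : ℕ} (d : Fin n → ℂ) (hd : ∀ i, d i ≠ 0) : GL (Fin n) ℂ :=
  ⟨Matrix.diagonal d, Matrix.diagonal (fun i => (d i)⁻¹),
    by rw [Matrix.diagonal_mul_diagonal]; convert Matrix.diagonal_one; exact mul_inv_cancel₀ (hd _),
    by rw [Matrix.diagonal_mul_diagonal]; convert Matrix.diagonal_one; exact inv_mul_cancel₀ (hd _)⟩

lemma diagGL_val {n : ℕ} (d : Fin n → ℂ) (hd : ∀ i, d i ≠ 0) :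
    ((diagGL d hd : GL (Fin n) ℂ) : Matrix (Fin n) (Fin n) ℂ) = Matrix.diagonal d := rfl

lemma diagGL_inv_val {n : ℕ} (d : Fin n → ℂ) (hd : ∀ i, d i ≠ 0) :
    (((diagGL d hd)⁻¹ : GL (Fin n) ℂ) : Matrix (Fin n) (Fin n) ℂ)
      = Matrix.diagonal (fun i => (d i)⁻¹) := rfl

lemma gact_diag {p q s : ℕ} (x : Fin p → ℂ) (y : Fin q → ℂ) (z : Fin s → ℂ)
    (hx : ∀ i, x i ≠ 0) (hy : ∀ i, y i ≠ 0) (hz : ∀ i, z i ≠ 0) (T : TSp p q s) :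
    gact (diagGL x hx, diagGL y hy, diagGL z hz) T
      = fun a b c => (x a.1)⁻¹ * y a.2 * (y b.1)⁻¹ * z b.2 * (z c.1)⁻¹ * x c.2 * T a b c := by
  funext a b c
  rw [gact]
  simp only [diagGL_val, diagGL_inv_val, Matrix.diagonal_apply, Fintype.sum_prod_type]
  simp only [ite_mul, zero_mul, mul_ite, mul_zero, Finset.sum_ite_eq, Finset.sum_ite_eq',
    Finset.mem_univ, if_true]


def orb {p q s : ℕ} (T0 : TSp p q s) : Set (TSp p q s) :=
  {S | ∃ g, ∃ c : ℂ, c ≠ 0 ∧ S = c • gact g T0}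

lemma orb_self (T0 : TSp p q s) : T0 ∈ orb T0 :=
  ⟨1, 1, one_ne_zero, by rw [gact_one, one_smul]⟩

lemma orb_trans {X Y : TSp p q s} (h : X ∈ orb Y) : orb X ⊆ orb Y := by
  obtain ⟨g, c, hc, rfl⟩ := h
  rintro S ⟨g', c', hc', rfl⟩
  exact ⟨g' * g, c' * c, mul_ne_zero hc' hc, by rw [gact_smul, gact_gact, smul_smul]⟩

lemma orb_symm {X Y : TSp p q s} (h : X ∈ orb Y) : Y ∈ orb X := by
  obtain ⟨g, c, hc, rfl⟩ := h
  refine ⟨g⁻¹, c⁻¹, inv_ne_zero hc, ?_⟩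
  rw [gact_smul, gact_gact, inv_mul_cancel, gact_one, smul_smul, inv_mul_cancel₀ hc, one_smul]

lemma pairing_inv {n : ℕ} (g : GL (Fin n) ℂ) (μ u : Fin n → ℂ) :
    ∑ i, Matrix.vecMul μ ((g⁻¹ : GL (Fin n) ℂ) : Matrix (Fin n) (Fin n) ℂ) i *
      Matrix.mulVec ((g : GL (Fin n) ℂ) : Matrix (Fin n) (Fin n) ℂ) u i = ∑ i, μ i * u i := by
  have h1 : ∑ i, Matrix.vecMul μ ((g⁻¹ : GL (Fin n) ℂ) : Matrix (Fin n) (Fin n) ℂ) i *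
      Matrix.mulVec ((g : GL (Fin n) ℂ) : Matrix (Fin n) (Fin n) ℂ) u i
      = dotProduct (Matrix.vecMul μ ((g⁻¹ : GL (Fin n) ℂ) : Matrix (Fin n) (Fin n) ℂ))
        (Matrix.mulVec ((g : GL (Fin n) ℂ) : Matrix (Fin n) (Fin n) ℂ) u) := rfl
  rw [h1, Matrix.dotProduct_mulVec, Matrix.vecMul_vecMul, ← Units.val_mul, inv_mul_cancel,
    Units.val_one, Matrix.vecMul_one]
  rfl

lemma kcone_gact (g : GLg p q s) {T : TSp p q s} (hT : T ∈ Kcone p q s) :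
    gact g T ∈ Kcone p q s := by
  obtain ⟨μ, v, ν, w, ω, u, h1, h2, h3, rfl⟩ := hT
  have hrk : (fun (x : Fin p × Fin q) (y : Fin q × Fin s) (z : Fin s × Fin p) =>
      μ x.1 * v x.2 * ν y.1 * w y.2 * ω z.1 * u z.2) = rk1 μ v ν w ω u := rfl
  rw [hrk, gact_rk1]
  exact ⟨_, _, _, _, _, _, by rw [pairing_inv g.1 μ u]; exact h1,
    by rw [pairing_inv g.2.1 ν v]; exact h2, by rw [pairing_inv g.2.2 ω w]; exact h3, rfl⟩

lemma rk1_components_ne_zero {μ : Fin p → ℂ} {v : Fin q → ℂ} {ν : Fin q → ℂ} {w : Fin s → ℂ}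
    {ω : Fin s → ℂ} {u : Fin p → ℂ} (h : rk1 (p := p) (q := q) (s := s) μ v ν w ω u ≠ 0) :
    μ ≠ 0 ∧ v ≠ 0 ∧ ν ≠ 0 ∧ w ≠ 0 ∧ ω ≠ 0 ∧ u ≠ 0 := by
  refine ⟨?_, ?_, ?_, ?_, ?_, ?_⟩ <;>
    · intro h0
      apply h
      funext x y z
      simp [rk1, h0]

lemma kcone_transitive (hp : 2 ≤ p) (hq : 2 ≤ q) (hs : 2 ≤ s) :
    ∀ T₁ ∈ Kcone p q s, ∀ T₂ ∈ Kcone p q s, T₁ ≠ 0 → T₂ ≠ 0 →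
      ∃ g, ∃ c : ℂ, c ≠ 0 ∧ c • gact g T₁ = T₂ := by
  have key : ∀ T ∈ Kcone p q s, T ≠ 0 → ∃ g : GLg p q s,
      gact g T = rk1 (esingle p ⟨0, by omega⟩) (esingle q ⟨1, by omega⟩)
        (esingle q ⟨0, by omega⟩) (esingle s ⟨1, by omega⟩)
        (esingle s ⟨0, by omega⟩) (esingle p ⟨1, by omega⟩) := by
    rintro T ⟨μ, v, ν, w, ω, u, h1, h2, h3, rfl⟩ hne
    have hrk : (fun (x : Fin p × Fin q) (y : Fin q × Fin s) (z : Fin s × Fin p) =>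
        μ x.1 * v x.2 * ν y.1 * w y.2 * ω z.1 * u z.2) = rk1 μ v ν w ω u := rfl
    rw [hrk] at hne ⊢
    obtain ⟨hμ, hv, hν, hw, hω, hu⟩ := rk1_components_ne_zero hne
    obtain ⟨gU, hgU1, hgU2⟩ := pair_normalize hp μ u hμ hu h1
    obtain ⟨gV, hgV1, hgV2⟩ := pair_normalize hq ν v hν hv h2
    obtain ⟨gW, hgW1, hgW2⟩ := pair_normalize hs ω w hω hw h3
    refine ⟨(gU, gV, gW), ?_⟩
    rw [gact_rk1]
    simp only [hgU1, hgU2, hgV1, hgV2, hgW1, hgW2]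
  intro T₁ h₁ T₂ h₂ hne₁ hne₂
  obtain ⟨g, hg⟩ := key T₁ h₁ hne₁
  obtain ⟨h, hh⟩ := key T₂ h₂ hne₂
  refine ⟨h⁻¹ * g, 1, one_ne_zero, ?_⟩
  rw [one_smul, ← gact_gact, hg, ← hh, gact_gact, inv_mul_cancel, gact_one]

lemma kcone_zero_mem : (0 : TSp p q s) ∈ Kcone p q s := by
  refine ⟨0, 0, 0, 0, 0, 0, by simp, by simp, by simp, ?_⟩
  funext x y z
  simp

lemma smul_delta_mem_Kcone (α : ℂ) {i₁ : Fin p} {i₂ : Fin q} {j₁ : Fin q} {j₂ : Fin s}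
    {k₁ : Fin s} {k₂ : Fin p} (hU : i₁ ≠ k₂) (hV : j₁ ≠ i₂) (hW : k₁ ≠ j₂) :
    α • delta (i₁, i₂) (j₁, j₂) (k₁, k₂) ∈ Kcone p q s := by
  refine ⟨α • esingle p i₁, esingle q i₂, esingle q j₁, esingle s j₂, esingle s k₁,
    esingle p k₂, ?_, ?_, ?_, ?_⟩
  · have : ∀ i, (α • esingle p i₁) i * esingle p k₂ i
        = α * ((if i = i₁ then (1:ℂ) else 0) * (if i = k₂ then 1 else 0)) := by
      intro i
      simp only [Pi.smul_apply, smul_eq_mul, esingle]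
      ring
    simp only [this, ← Finset.mul_sum, esingle_pair_zero i₁ k₂ hU, mul_zero]
  · exact esingle_pair_zero j₁ i₂ hV
  · exact esingle_pair_zero k₁ j₂ hW
  · funext x y z
    simp only [Pi.smul_apply, smul_eq_mul, delta, rk1, esingle]
    ring

lemma mem_closure_orb_of_tendsto {X L : TSp p q s} {F : ℂ → TSp p q s}
    (hF : ∀ t : ℂ, t ≠ 0 → F t ∈ orb X) (hlim : Tendsto F (𝓝[≠] (0:ℂ)) (𝓝 L)) :
    L ∈ closure (orb X) := by
  refine mem_closure_of_tendsto hlim ?_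
  filter_upwards [self_mem_nhdsWithin] with t ht
  exact hF t ht

lemma digit_inj {Q a b c d : ℕ} (hQ : 0 < Q) (ha : a < Q) (hc : c < Q)
    (h : a + Q * b = c + Q * d) : a = c ∧ b = d := by
  have h1 := congrArg (· % Q) h
  simp only [Nat.add_mul_mod_self_left, Nat.mod_eq_of_lt ha, Nat.mod_eq_of_lt hc] at h1
  refine ⟨h1, ?_⟩
  have h2 : Q * b = Q * d := by omega
  exact Nat.eq_of_mul_eq_mul_left hQ h2

lemma injA {p q : ℕ} (M : ℕ) (hM : q ≤ M) (x y : Fin p × Fin q)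
    (h : ((x.2 : ℕ) : ℤ) - (M : ℤ) * ((x.1 : ℕ) : ℤ)
        = ((y.2 : ℕ) : ℤ) - (M : ℤ) * ((y.1 : ℕ) : ℤ)) : x = y := by
  have hx2 : (x.2 : ℕ) < q := x.2.isLt
  have hy2 : (y.2 : ℕ) < q := y.2.isLt
  have hM0 : 0 < M := by omega
  have hz : ((x.2 : ℕ) : ℤ) + (M:ℤ) * ((y.1:ℕ):ℤ) = ((y.2:ℕ):ℤ) + (M:ℤ) * ((x.1:ℕ):ℤ) := by
    linarith
  have hn : (x.2 : ℕ) + M * (y.1 : ℕ) = (y.2 : ℕ) + M * (x.1 : ℕ) := by exact_mod_cast hz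
  obtain ⟨e2, e1⟩ := digit_inj hM0 (lt_of_lt_of_le hx2 hM) (lt_of_lt_of_le hy2 hM) hn
  have : x.1 = y.1 := Fin.ext e1.symm
  have h2 : x.2 = y.2 := Fin.ext e2
  exact Prod.ext this h2

lemma injB {p q : ℕ} (M : ℕ) (hM : q ≤ M) (x y : Fin q × Fin p)
    (h : (M : ℤ) * ((x.2 : ℕ) : ℤ) - ((x.1 : ℕ) : ℤ)
        = (M : ℤ) * ((y.2 : ℕ) : ℤ) - ((y.1 : ℕ) : ℤ)) : x = y := by
  have hx1 : (x.1 : ℕ) < q := x.1.isLt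
  have hy1 : (y.1 : ℕ) < q := y.1.isLt
  have hM0 : 0 < M := by omega
  have hz : ((y.1 : ℕ) : ℤ) + (M:ℤ) * ((x.2:ℕ):ℤ) = ((x.1:ℕ):ℤ) + (M:ℤ) * ((y.2:ℕ):ℤ) := by
    linarith
  have hn : (y.1 : ℕ) + M * (x.2 : ℕ) = (x.1 : ℕ) + M * (y.2 : ℕ) := by exact_mod_cast hz
  obtain ⟨e1, e2⟩ := digit_inj hM0 (lt_of_lt_of_le hy1 hM) (lt_of_lt_of_le hx1 hM) hn
  exact Prod.ext (Fin.ext e1.symm) (Fin.ext e2)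

lemma torus_step {aa : Fin p × Fin q → ℂ} {bb : Fin q × Fin s → ℂ} {cc : Fin s × Fin p → ℂ}
    (hne : ∃ x y z, aa x * bb y * cc z ≠ 0) :
    ∃ (xs : Fin p × Fin q) (ys : Fin q × Fin s) (zs : Fin s × Fin p) (α : ℂ), α ≠ 0 ∧
      α • delta xs ys zs ∈ closure (orb (fun x y z => aa x * bb y * cc z : TSp p q s)) := by
  classical
  obtain ⟨x0, y0, z0, hxyz⟩ := hne
  have ha0 : aa x0 ≠ 0 := fun h => hxyz (by simp [h])
  have hb0 : bb y0 ≠ 0 := fun h => hxyz (by simp [h])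
  have hc0 : cc z0 ≠ 0 := fun h => hxyz (by simp [h])
  set fA : Fin p × Fin q → ℤ := fun x => ((x.2 : ℕ) : ℤ) - ((q*s : ℕ) : ℤ) * ((x.1 : ℕ) : ℤ)
    with hfA
  set fB : Fin q × Fin s → ℤ := fun y => ((q : ℕ) : ℤ) * ((y.2 : ℕ) : ℤ) - ((y.1 : ℕ) : ℤ)
    with hfB
  set fC : Fin s × Fin p → ℤ := fun z =>
    ((q*s : ℕ) : ℤ) * ((z.2 : ℕ) : ℤ) - ((q : ℕ) : ℤ) * ((z.1 : ℕ) : ℤ) with hfC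
  have hq0 : 0 < q := Fin.pos x0.2
  have hs0 : 0 < s := Fin.pos y0.2
  have hfAinj : ∀ x y, fA x = fA y → x = y := by
    intro x y h
    exact injA (q*s) (Nat.le_mul_of_pos_right q hs0) x y h
  have hfBinj : ∀ x y, fB x = fB y → x = y := fun x y h => injB q le_rfl x y h
  have hfCinj : ∀ x y, fC x = fC y → x = y := by
    intro x y h
    have h2 : ((q:ℕ):ℤ) * (((s:ℕ):ℤ) * ((x.2:ℕ):ℤ) - ((x.1:ℕ):ℤ))
        = ((q:ℕ):ℤ) * (((s:ℕ):ℤ) * ((y.2:ℕ):ℤ) - ((y.1:ℕ):ℤ)) := by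
      rw [hfC] at h
      push_cast at h ⊢
      linarith
    have h3 := mul_left_cancel₀ (by exact_mod_cast hq0.ne' : ((q:ℕ):ℤ) ≠ 0) h2
    exact injB s le_rfl x y h3
  set suppA : Finset (Fin p × Fin q) := Finset.univ.filter (fun x => aa x ≠ 0) with hsuppA
  set suppB : Finset (Fin q × Fin s) := Finset.univ.filter (fun y => bb y ≠ 0) with hsuppB
  set suppC : Finset (Fin s × Fin p) := Finset.univ.filter (fun z => cc z ≠ 0) with hsuppC
  have hAne : suppA.Nonempty := ⟨x0, by simp [hsuppA, ha0]⟩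
  have hBne : suppB.Nonempty := ⟨y0, by simp [hsuppB, hb0]⟩
  have hCne : suppC.Nonempty := ⟨z0, by simp [hsuppC, hc0]⟩
  obtain ⟨xs, hxsmem, hxsmin⟩ := Finset.exists_min_image suppA fA hAne
  obtain ⟨ys, hysmem, hysmin⟩ := Finset.exists_min_image suppB fB hBne
  obtain ⟨zs, hzsmem, hzsmin⟩ := Finset.exists_min_image suppC fC hCne
  have haxs : aa xs ≠ 0 := by simpa [hsuppA] using hxsmem
  have hbys : bb ys ≠ 0 := by simpa [hsuppB] using hysmem
  have hczs : cc zs ≠ 0 := by simpa [hsuppC] using hzsmem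
  set dA : Fin p × Fin q → ℕ := fun x => (fA x - fA xs).toNat with hdA
  set dB : Fin q × Fin s → ℕ := fun y => (fB y - fB ys).toNat with hdB
  set dC : Fin s × Fin p → ℕ := fun z => (fC z - fC zs).toNat with hdC
  set α : ℂ := aa xs * bb ys * cc zs with hα
  have hαne : α ≠ 0 := mul_ne_zero (mul_ne_zero haxs hbys) hczs
  set F : ℂ → TSp p q s :=
    fun t x y z => t ^ (dA x + dB y + dC z) * (aa x * bb y * cc z) with hF
  refine ⟨xs, ys, zs, α, hαne, ?_⟩
  have hF0 : F 0 = α • delta xs ys zs := by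
    funext x y z
    rw [hF]
    simp only [Pi.smul_apply, smul_eq_mul, delta_apply]
    by_cases hx : x = xs ∧ y = ys ∧ z = zs
    · obtain ⟨h1, h2, h3⟩ := hx
      subst h1; subst h2; subst h3
      have e1 : dA x = 0 := by simp [hdA]
      have e2 : dB y = 0 := by simp [hdB]
      have e3 : dC z = 0 := by simp [hdC]
      rw [e1, e2, e3]
      simp [hα]
    · rw [if_neg hx]
      by_cases hc : aa x * bb y * cc z = 0
      · rw [hc, mul_zero, mul_zero]
      · have hax : aa x ≠ 0 := fun h => hc (by simp [h])
        have hby : bb y ≠ 0 := fun h => hc (by simp [h])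
        have hcz : cc z ≠ 0 := fun h => hc (by simp [h])
        have hxm : x ∈ suppA := by simp [hsuppA, hax]
        have hym : y ∈ suppB := by simp [hsuppB, hby]
        have hzm : z ∈ suppC := by simp [hsuppC, hcz]
        have hnz : dA x + dB y + dC z ≠ 0 := by
          intro h0
          obtain ⟨hA0, hB0, hC0⟩ : dA x = 0 ∧ dB y = 0 ∧ dC z = 0 := by omega
          have eA : fA x = fA xs :=
            le_antisymm (by rw [hdA] at hA0; simp at hA0; omega) (hxsmin x hxm)
          have eB : fB y = fB ys :=
            le_antisymm (by rw [hdB] at hB0; simp at hB0; omega) (hysmin y hym)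
          have eC : fC z = fC zs :=
            le_antisymm (by rw [hdC] at hC0; simp at hC0; omega) (hzsmin z hzm)
          exact hx ⟨hfAinj _ _ eA, hfBinj _ _ eB, hfCinj _ _ eC⟩
        rw [zero_pow hnz, zero_mul, mul_zero]
  have hcont : Continuous F := by
    refine continuous_pi fun x => continuous_pi fun y => continuous_pi fun z => ?_
    exact (continuous_pow _).mul continuous_const
  have htend : Tendsto F (𝓝[≠] (0:ℂ)) (𝓝 (α • delta xs ys zs)) := by
    rw [← hF0]
    exact (hcont.tendsto 0).mono_left nhdsWithin_le_nhds
  refine mem_closure_orb_of_tendsto ?_ htend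
  intro t ht
  have hpow_ne : ∀ (k : ℕ), (t : ℂ) ^ k ≠ 0 := fun k => pow_ne_zero k ht
  set xU : Fin p → ℂ := fun i => t ^ ((q*s) * (i : ℕ)) with hxU
  set yV : Fin q → ℂ := fun j => t ^ (j : ℕ) with hyV
  set zW : Fin s → ℂ := fun k => t ^ (q * (k : ℕ)) with hzW
  have hxUne : ∀ i, xU i ≠ 0 := fun i => hpow_ne _
  have hyVne : ∀ i, yV i ≠ 0 := fun i => hpow_ne _
  have hzWne : ∀ i, zW i ≠ 0 := fun i => hpow_ne _
  refine ⟨(diagGL xU hxUne, diagGL yV hyVne, diagGL zW hzWne),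
    t ^ (-(fA xs + fB ys + fC zs)), zpow_ne_zero _ ht, ?_⟩
  rw [gact_diag]
  funext x y z
  simp only [Pi.smul_apply, smul_eq_mul, hF]
  by_cases hc : aa x * bb y * cc z = 0
  · rw [hc, mul_zero, mul_zero, mul_zero]
  · have hax : aa x ≠ 0 := fun h => hc (by simp [h])
    have hby : bb y ≠ 0 := fun h => hc (by simp [h])
    have hcz : cc z ≠ 0 := fun h => hc (by simp [h])
    have hxm : fA xs ≤ fA x := hxsmin x (by simp [hsuppA, hax])
    have hym : fB ys ≤ fB y := hysmin y (by simp [hsuppB, hby])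
    have hzm : fC zs ≤ fC z := hzsmin z (by simp [hsuppC, hcz])
    have eA : ((dA x : ℕ) : ℤ) = fA x - fA xs := by
      rw [hdA]; exact Int.toNat_of_nonneg (by omega)
    have eB : ((dB y : ℕ) : ℤ) = fB y - fB ys := by
      rw [hdB]; exact Int.toNat_of_nonneg (by omega)
    have eC : ((dC z : ℕ) : ℤ) = fC z - fC zs := by
      rw [hdC]; exact Int.toNat_of_nonneg (by omega)
    have hpows : (t : ℂ) ^ (dA x + dB y + dC z)
        = t ^ (-(fA xs + fB ys + fC zs)) *
          ((xU x.1)⁻¹ * yV x.2 * (yV y.1)⁻¹ * zW y.2 * (zW z.1)⁻¹ * xU z.2) := by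
      rw [hxU, hyV, hzW]
      simp only [← zpow_natCast t, ← zpow_neg, ← zpow_add₀ ht]
      congr 1
      push_cast [eA, eB, eC]
      rw [hfA, hfB, hfC]
      push_cast
      ring
    rw [hpows]
    ring

lemma pick_other {n : ℕ} (hn : 2 ≤ n) (r : Fin n) : ∃ m : Fin n, m ≠ r := by
  by_cases h0 : (r : ℕ) = 0
  · exact ⟨⟨1, by omega⟩, by simp [Fin.ext_iff, h0]⟩
  · exact ⟨⟨0, by omega⟩, by simp [Fin.ext_iff]; omega⟩

lemma fixU (hp : 2 ≤ p) {α : ℂ} (hα : α ≠ 0) (i₁ : Fin p) (i₂ : Fin q) (j₁ : Fin q)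
    (j₂ : Fin s) (k₁ : Fin s) (k₂ : Fin p) :
    ∃ i₁' : Fin p, i₁' ≠ k₂ ∧
      α • delta (i₁', i₂) (j₁, j₂) (k₁, k₂) ∈
        closure (orb (α • delta (p := p) (q := q) (s := s) (i₁, i₂) (j₁, j₂) (k₁, k₂))) := by
  by_cases hik : i₁ = k₂
  case neg => exact ⟨i₁, hik, subset_closure (orb_self _)⟩
  subst hik
  obtain ⟨m, hm⟩ := pick_other hp i₁
  set F : ℂ → TSp p q s := fun ε => α • rk1 (fun i => if i = i₁ then ε else if i = m then 1 else 0)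
    (esingle q i₂) (esingle q j₁) (esingle s j₂) (esingle s k₁) (esingle p i₁) with hFd
  have hF0 : F 0 = α • delta (m, i₂) (j₁, j₂) (k₁, i₁) := by
    funext x y z
    simp only [hFd, delta, rk1, Pi.smul_apply, smul_eq_mul, esingle]
    by_cases h1 : x.1 = i₁
    · simp [h1, Ne.symm hm]
    · simp [h1]
  refine ⟨m, hm, ?_⟩
  have htend : Tendsto F (𝓝[≠] (0:ℂ)) (𝓝 (α • delta (m, i₂) (j₁, j₂) (k₁, i₁))) := by
    rw [← hF0]
    have hcont : Continuous F := by
      refine continuous_pi fun x => continuous_pi fun y => continuous_pi fun z => ?_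
      simp only [hFd, Pi.smul_apply, smul_eq_mul, rk1]
      by_cases h1 : x.1 = i₁ <;> simp [h1] <;> fun_prop
    exact (hcont.tendsto 0).mono_left nhdsWithin_le_nhds
  refine mem_closure_orb_of_tendsto ?_ htend
  intro ε hε
  obtain ⟨g, hg1, hg2⟩ := fix_unit i₁ m hm ε hε
  refine ⟨(g, 1, 1), ε, hε, ?_⟩
  have hd : delta (p := p) (q := q) (s := s) (i₁, i₂) (j₁, j₂) (k₁, i₁)
      = rk1 (esingle p i₁) (esingle q i₂) (esingle q j₁) (esingle s j₂) (esingle s k₁)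
          (esingle p i₁) := rfl
  rw [gact_smul, hd, gact_rk1]
  dsimp only
  rw [hg1, hg2]
  simp only [inv_one, Units.val_one, Matrix.vecMul_one, Matrix.one_mulVec]
  have hsm : rk1 (p := p) (q := q) (s := s)
      (fun j => if j = i₁ then ε else if j = m then 1 else 0)
      (esingle q i₂) (esingle q j₁) (esingle s j₂) (esingle s k₁) (ε⁻¹ • esingle p i₁)
      = ε⁻¹ • rk1 (fun j => if j = i₁ then ε else if j = m then 1 else 0)
        (esingle q i₂) (esingle q j₁) (esingle s j₂) (esingle s k₁) (esingle p i₁) := by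
    funext x y z
    simp only [rk1, Pi.smul_apply, smul_eq_mul]
    ring
  rw [hsm, smul_comm α ε⁻¹, smul_smul, mul_inv_cancel₀ hε, one_smul]

lemma fixV (hq : 2 ≤ q) {α : ℂ} (hα : α ≠ 0) (i₁ : Fin p) (i₂ : Fin q) (j₁ : Fin q)
    (j₂ : Fin s) (k₁ : Fin s) (k₂ : Fin p) :
    ∃ j₁' : Fin q, j₁' ≠ i₂ ∧
      α • delta (i₁, i₂) (j₁', j₂) (k₁, k₂) ∈
        closure (orb (α • delta (p := p) (q := q) (s := s) (i₁, i₂) (j₁, j₂) (k₁, k₂))) := by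
  by_cases hik : j₁ = i₂
  case neg => exact ⟨j₁, hik, subset_closure (orb_self _)⟩
  subst hik
  obtain ⟨m, hm⟩ := pick_other hq j₁
  set F : ℂ → TSp p q s := fun ε => α • rk1 (esingle p i₁) (esingle q j₁)
    (fun i => if i = j₁ then ε else if i = m then 1 else 0)
    (esingle s j₂) (esingle s k₁) (esingle p k₂) with hFd
  have hF0 : F 0 = α • delta (i₁, j₁) (m, j₂) (k₁, k₂) := by
    funext x y z
    simp only [hFd, delta, rk1, Pi.smul_apply, smul_eq_mul, esingle]
    by_cases h1 : y.1 = j₁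
    · simp [h1, Ne.symm hm]
    · simp [h1]
  refine ⟨m, hm, ?_⟩
  have htend : Tendsto F (𝓝[≠] (0:ℂ)) (𝓝 (α • delta (i₁, j₁) (m, j₂) (k₁, k₂))) := by
    rw [← hF0]
    have hcont : Continuous F := by
      refine continuous_pi fun x => continuous_pi fun y => continuous_pi fun z => ?_
      simp only [hFd, Pi.smul_apply, smul_eq_mul, rk1]
      by_cases h1 : y.1 = j₁ <;> simp [h1] <;> fun_prop
    exact (hcont.tendsto 0).mono_left nhdsWithin_le_nhds
  refine mem_closure_orb_of_tendsto ?_ htend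
  intro ε hε
  obtain ⟨g, hg1, hg2⟩ := fix_unit j₁ m hm ε hε
  refine ⟨(1, g, 1), ε, hε, ?_⟩
  have hd : delta (p := p) (q := q) (s := s) (i₁, j₁) (j₁, j₂) (k₁, k₂)
      = rk1 (esingle p i₁) (esingle q j₁) (esingle q j₁) (esingle s j₂) (esingle s k₁)
          (esingle p k₂) := rfl
  rw [gact_smul, hd, gact_rk1]
  dsimp only
  rw [hg1, hg2]
  simp only [inv_one, Units.val_one, Matrix.vecMul_one, Matrix.one_mulVec]
  have hsm : rk1 (p := p) (q := q) (s := s)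
      (esingle p i₁) (ε⁻¹ • esingle q j₁)
      (fun j => if j = j₁ then ε else if j = m then 1 else 0)
      (esingle s j₂) (esingle s k₁) (esingle p k₂)
      = ε⁻¹ • rk1 (esingle p i₁) (esingle q j₁)
        (fun j => if j = j₁ then ε else if j = m then 1 else 0)
        (esingle s j₂) (esingle s k₁) (esingle p k₂) := by
    funext x y z
    simp only [rk1, Pi.smul_apply, smul_eq_mul]
    ring
  rw [hsm, smul_comm α ε⁻¹, smul_smul, mul_inv_cancel₀ hε, one_smul]

lemma fixW (hs : 2 ≤ s) {α : ℂ} (hα : α ≠ 0) (i₁ : Fin p) (i₂ : Fin q) (j₁ : Fin q)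
    (j₂ : Fin s) (k₁ : Fin s) (k₂ : Fin p) :
    ∃ k₁' : Fin s, k₁' ≠ j₂ ∧
      α • delta (i₁, i₂) (j₁, j₂) (k₁', k₂) ∈
        closure (orb (α • delta (p := p) (q := q) (s := s) (i₁, i₂) (j₁, j₂) (k₁, k₂))) := by
  by_cases hik : k₁ = j₂
  case neg => exact ⟨k₁, hik, subset_closure (orb_self _)⟩
  subst hik
  obtain ⟨m, hm⟩ := pick_other hs k₁
  set F : ℂ → TSp p q s := fun ε => α • rk1 (esingle p i₁) (esingle q i₂) (esingle q j₁)
    (esingle s k₁) (fun i => if i = k₁ then ε else if i = m then 1 else 0)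
    (esingle p k₂) with hFd
  have hF0 : F 0 = α • delta (i₁, i₂) (j₁, k₁) (m, k₂) := by
    funext x y z
    simp only [hFd, delta, rk1, Pi.smul_apply, smul_eq_mul, esingle]
    by_cases h1 : z.1 = k₁
    · simp [h1, Ne.symm hm]
    · simp [h1]
  refine ⟨m, hm, ?_⟩
  have htend : Tendsto F (𝓝[≠] (0:ℂ)) (𝓝 (α • delta (i₁, i₂) (j₁, k₁) (m, k₂))) := by
    rw [← hF0]
    have hcont : Continuous F := by
      refine continuous_pi fun x => continuous_pi fun y => continuous_pi fun z => ?_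
      simp only [hFd, Pi.smul_apply, smul_eq_mul, rk1]
      by_cases h1 : z.1 = k₁ <;> simp [h1] <;> fun_prop
    exact (hcont.tendsto 0).mono_left nhdsWithin_le_nhds
  refine mem_closure_orb_of_tendsto ?_ htend
  intro ε hε
  obtain ⟨g, hg1, hg2⟩ := fix_unit k₁ m hm ε hε
  refine ⟨(1, 1, g), ε, hε, ?_⟩
  have hd : delta (p := p) (q := q) (s := s) (i₁, i₂) (j₁, k₁) (k₁, k₂)
      = rk1 (esingle p i₁) (esingle q i₂) (esingle q j₁) (esingle s k₁) (esingle s k₁)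
          (esingle p k₂) := rfl
  rw [gact_smul, hd, gact_rk1]
  dsimp only
  rw [hg1, hg2]
  simp only [inv_one, Units.val_one, Matrix.vecMul_one, Matrix.one_mulVec]
  have hsm : rk1 (p := p) (q := q) (s := s)
      (esingle p i₁) (esingle q i₂) (esingle q j₁) (ε⁻¹ • esingle s k₁)
      (fun j => if j = k₁ then ε else if j = m then 1 else 0) (esingle p k₂)
      = ε⁻¹ • rk1 (esingle p i₁) (esingle q i₂) (esingle q j₁) (esingle s k₁)
        (fun j => if j = k₁ then ε else if j = m then 1 else 0) (esingle p k₂) := by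
    funext x y z
    simp only [rk1, Pi.smul_apply, smul_eq_mul]
    ring
  rw [hsm, smul_comm α ε⁻¹, smul_smul, mul_inv_cancel₀ hε, one_smul]

end Stmt7aux

/-- `K` is the unique closed `GL(U)×GL(V)×GL(W)`-orbit in the Segre variety
`Seg(ℙA × ℙB × ℙC)`, stated on the level of affine cones: `K ⊆ Seg`, the cone over `K` is
invariant, the group (together with projective rescaling) acts transitively on it, it is
closed, and any `G`-orbit in the Segre variety whose cone (with `0` added) is closed is `K`. -/
theorem stmt7 (p q s : ℕ) (hp : 2 ≤ p) (hq : 2 ≤ q) (hs : 2 ≤ s) :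
    Kcone p q s ⊆ segreCone p q s ∧
    (∀ g, ∀ T ∈ Kcone p q s, gact g T ∈ Kcone p q s) ∧
    (∀ T₁ ∈ Kcone p q s, ∀ T₂ ∈ Kcone p q s, T₁ ≠ 0 → T₂ ≠ 0 →
      ∃ g, ∃ c : ℂ, c ≠ 0 ∧ c • gact g T₁ = T₂) ∧
    IsClosed (Kcone p q s) ∧
    (∀ T ∈ segreCone p q s, T ≠ 0 →
      IsClosed ({S | ∃ g, ∃ c : ℂ, c ≠ 0 ∧ S = c • gact g T} ∪ {0}) →
      {S | ∃ g, ∃ c : ℂ, c ≠ 0 ∧ S = c • gact g T} ∪ {0} = Kcone p q s) := by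
  classical
  refine ⟨?_, ?_, ?_, ?_, ?_⟩
  · rintro T ⟨μ, v, ν, w, ω, u, h1, h2, h3, rfl⟩
    refine ⟨fun x => μ x.1 * v x.2, fun y => ν y.1 * w y.2, fun z => ω z.1 * u z.2, ?_⟩
    funext x y z
    ring
  · intro g T hT
    exact Stmt7aux.kcone_gact g hT
  · exact Stmt7aux.kcone_transitive hp hq hs
  · exact Stmt7aux.isClosed_Kcone hp hq hs
  · intro T hT hTne hclosed
    obtain ⟨aa, bb, cc, rfl⟩ := hT
    have hne : ∃ x y z, aa x * bb y * cc z ≠ 0 := by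
      by_contra h
      push_neg at h
      exact hTne (funext fun x => funext fun y => funext fun z => h x y z)
    obtain ⟨xs, ys, zs, α, hα, hcl⟩ := Stmt7aux.torus_step (p := p) (q := q) (s := s) hne
    have hsub : closure (Stmt7aux.orb (fun x y z => aa x * bb y * cc z : TSp p q s))
        ⊆ Stmt7aux.orb (fun x y z => aa x * bb y * cc z : TSp p q s) ∪ {0} := by
      have hclosed' : IsClosed (Stmt7aux.orb (fun x y z => aa x * bb y * cc z : TSp p q s)
          ∪ {0}) := hclosed
      intro x hx
      rw [← hclosed'.closure_eq]
      exact closure_mono Set.subset_union_left hx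
    have hδne : ∀ (β : ℂ), β ≠ 0 → ∀ (i : Fin p × Fin q) (j : Fin q × Fin s)
        (k : Fin s × Fin p), (β • Stmt7aux.delta i j k : TSp p q s) ≠ 0 := by
      intro β hβ i j k h
      have h2 := congrFun (congrFun (congrFun h i) j) k
      simp only [Pi.smul_apply, smul_eq_mul, Stmt7aux.delta_apply, Pi.zero_apply] at h2
      simp at h2
      exact hβ h2
    have step : ∀ (L : TSp p q s),
        L ∈ Stmt7aux.orb (fun x y z => aa x * bb y * cc z : TSp p q s) →
        ∀ (L' : TSp p q s), L' ∈ closure (Stmt7aux.orb L) → L' ≠ 0 →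
        L' ∈ Stmt7aux.orb (fun x y z => aa x * bb y * cc z : TSp p q s) := by
      intro L hL L' hL' hne'
      have h1 : closure (Stmt7aux.orb L)
          ⊆ closure (Stmt7aux.orb (fun x y z => aa x * bb y * cc z : TSp p q s)) :=
        closure_mono (Stmt7aux.orb_trans hL)
      rcases hsub (h1 hL') with h2 | h2
      · exact h2
      · exact absurd h2 hne'
    have hL1 : α • Stmt7aux.delta xs ys zs
        ∈ Stmt7aux.orb (fun x y z => aa x * bb y * cc z : TSp p q s) :=
      step _ (Stmt7aux.orb_self _) _ hcl (hδne α hα _ _ _)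
    obtain ⟨i₁', hi₁', hcl2⟩ := Stmt7aux.fixU (q := q) (s := s) hp hα xs.1 xs.2 ys.1 ys.2 zs.1 zs.2
    have hL2 : α • Stmt7aux.delta (i₁', xs.2) (ys.1, ys.2) (zs.1, zs.2)
        ∈ Stmt7aux.orb (fun x y z => aa x * bb y * cc z : TSp p q s) :=
      step _ hL1 _ hcl2 (hδne α hα _ _ _)
    obtain ⟨j₁', hj₁', hcl3⟩ := Stmt7aux.fixV (p := p) (s := s) hq hα i₁' xs.2 ys.1 ys.2 zs.1 zs.2
    have hL3 : α • Stmt7aux.delta (i₁', xs.2) (j₁', ys.2) (zs.1, zs.2)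
        ∈ Stmt7aux.orb (fun x y z => aa x * bb y * cc z : TSp p q s) :=
      step _ hL2 _ hcl3 (hδne α hα _ _ _)
    obtain ⟨k₁', hk₁', hcl4⟩ := Stmt7aux.fixW (p := p) (q := q) hs hα i₁' xs.2 j₁' ys.2 zs.1 zs.2
    have hL4 : α • Stmt7aux.delta (i₁', xs.2) (j₁', ys.2) (k₁', zs.2)
        ∈ Stmt7aux.orb (fun x y z => aa x * bb y * cc z : TSp p q s) :=
      step _ hL3 _ hcl4 (hδne α hα _ _ _)
    have hK0K : α • Stmt7aux.delta (i₁', xs.2) (j₁', ys.2) (k₁', zs.2) ∈ Kcone p q s :=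
      Stmt7aux.smul_delta_mem_Kcone α hi₁' hj₁' hk₁'
    have hK0ne : (α • Stmt7aux.delta (i₁', xs.2) (j₁', ys.2) (k₁', zs.2) : TSp p q s) ≠ 0 :=
      hδne α hα _ _ _
    have hTK : (fun x y z => aa x * bb y * cc z : TSp p q s) ∈ Kcone p q s := by
      obtain ⟨g, c, hc, hTe⟩ := Stmt7aux.orb_symm hL4
      rw [hTe]
      exact Stmt7aux.kcone_smul c (Stmt7aux.kcone_gact g hK0K)
    ext S
    constructor
    · rintro (⟨g, c, hc, rfl⟩ | hS0)
      · exact Stmt7aux.kcone_smul c (Stmt7aux.kcone_gact g hTK)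
      · rw [Set.mem_singleton_iff.mp hS0]
        exact Stmt7aux.kcone_zero_mem
    · intro hS
      by_cases hS0 : S = 0
      · right
        exact hS0
      · left
        obtain ⟨g, c, hc, heq⟩ := Stmt7aux.kcone_transitive hp hq hs _ hK0K S hS hK0ne hS0
        exact Stmt7aux.orb_trans hL4 ⟨g, c, hc, heq.symm⟩
end

section
/- With K as above and k ∈ K, let G_{M,k} ⊆ GL(U) × GL(V) × GL(W) be the subgroup preserving both the matrix multiplication tensor M_⟨U,V,W⟩ and the point k. Then for every point p of the Segre variety Seg(ℙA × ℙB × ℙC), the point k lies in the closure of the orbit G_{M,k} · p. -/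
open scoped BigOperators

namespace Stmt8Aux

/-! ### Linear-algebra helpers -/

noncomputable def Mop {n m : ℕ} (a : Fin n × Fin m → ℂ) (x : Fin n → ℂ) : Fin m → ℂ :=
  fun j => ∑ i, a (i, j) * x i

def onLine {n : ℕ} (z x : Fin n → ℂ) : Prop := ∃ d : ℂ, x = d • z

lemma onLine_zero {n : ℕ} {x : Fin n → ℂ} : onLine 0 x ↔ x = 0 := by
  constructor
  · rintro ⟨d, rfl⟩; simp
  · rintro rfl; exact ⟨0, by simp⟩

lemma notLine_symm {n : ℕ} {z x : Fin n → ℂ} (hz : z ≠ 0) (h : ¬ onLine z x) :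
    ¬ onLine x z := by
  rintro ⟨d, hd⟩
  have hd0 : d ≠ 0 := by rintro rfl; simp at hd; exact hz hd
  exact h ⟨d⁻¹, by rw [hd, smul_smul, inv_mul_cancel₀ hd0, one_smul]⟩

lemma exists_dot_one {n : ℕ} (u : Fin n → ℂ) (hu : u ≠ 0) :
    ∃ τ : Fin n → ℂ, ∑ i, τ i * u i = 1 := by
  obtain ⟨i0, h0⟩ := Function.ne_iff.1 hu
  simp only [Pi.zero_apply] at h0
  refine ⟨fun i => if i = i0 then (u i0)⁻¹ else 0, ?_⟩
  simp [ite_mul, zero_mul, Finset.sum_ite_eq', inv_mul_cancel₀ h0]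

lemma sum_split3 {n : ℕ} (f g h : Fin n → ℂ) :
    ∑ i, (f i + g i - h i) = (∑ i, f i) + (∑ i, g i) - ∑ i, h i := by
  rw [Finset.sum_sub_distrib, Finset.sum_add_distrib]

lemma Mop_line {n m : ℕ} (a : Fin n × Fin m → ℂ) (x1 x2 : Fin n → ℂ) (c : ℂ) (j : Fin m) :
    Mop a (fun i => x1 i + c * (x2 i - x1 i)) j
      = Mop a x1 j + c * (Mop a x2 j - Mop a x1 j) := by
  have : ∀ i, a (i, j) * (x1 i + c * (x2 i - x1 i))
      = a (i, j) * x1 i + c * (a (i, j) * x2 i) - c * (a (i, j) * x1 i) := fun i => by ring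
  simp only [Mop]
  rw [Finset.sum_congr rfl fun i _ => this i, sum_split3, ← Finset.mul_sum, ← Finset.mul_sum]
  ring

lemma dot_line {n : ℕ} (φ x1 x2 : Fin n → ℂ) (c : ℂ)
    (h1 : ∑ i, φ i * x1 i = 1) (h2 : ∑ i, φ i * x2 i = 1) :
    ∑ i, φ i * (x1 i + c * (x2 i - x1 i)) = 1 := by
  have : ∀ i, φ i * (x1 i + c * (x2 i - x1 i))
      = φ i * x1 i + c * (φ i * x2 i) - c * (φ i * x1 i) := fun i => by ring
  rw [Finset.sum_congr rfl fun i _ => this i, sum_split3, ← Finset.mul_sum, ← Finset.mul_sum,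
    h1, h2]
  ring

lemma line_key {n m : ℕ} (a : Fin n × Fin m → ℂ) (z : Fin m → ℂ) (x1 x2 : Fin n → ℂ)
    (h12 : ¬ onLine z (Mop a x1)) :
    ∀ c c' : ℂ, c ≠ c' →
      onLine z (Mop a (fun i => x1 i + c * (x2 i - x1 i))) →
      onLine z (Mop a (fun i => x1 i + c' * (x2 i - x1 i))) → False := by
  rintro c c' hcc ⟨e, he⟩ ⟨e', he'⟩
  have hsub : c - c' ≠ 0 := sub_ne_zero.2 hcc
  have hkey : (c - c') * (c - c')⁻¹ = 1 := mul_inv_cancel₀ hsub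
  apply h12
  refine ⟨(c - c')⁻¹ * (c * e' - c' * e), funext fun j => ?_⟩
  have e1 : Mop a x1 j + c * (Mop a x2 j - Mop a x1 j) = e * z j := by
    rw [← Mop_line]; rw [he]; simp
  have e2 : Mop a x1 j + c' * (Mop a x2 j - Mop a x1 j) = e' * z j := by
    rw [← Mop_line]; rw [he']; simp
  have : (c - c') * Mop a x1 j = (c * e' - c' * e) * z j := by
    linear_combination c * e2 - c' * e1
  calc Mop a x1 j = ((c - c') * (c - c')⁻¹) * Mop a x1 j := by rw [hkey]; ring
    _ = (c - c')⁻¹ * ((c - c') * Mop a x1 j) := by ring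
    _ = (c - c')⁻¹ * ((c * e' - c' * e) * z j) := by rw [this]
    _ = ((c - c')⁻¹ * (c * e' - c' * e)) • z j := by simp [smul_eq_mul]; ring

lemma avoid2 {n m1 m2 : ℕ} (φ : Fin n → ℂ)
    (a1 : Fin n × Fin m1 → ℂ) (z1 : Fin m1 → ℂ)
    (a2 : Fin n × Fin m2 → ℂ) (z2 : Fin m2 → ℂ)
    (x1 : Fin n → ℂ) (h11 : ∑ i, φ i * x1 i = 1) (h12 : ¬ onLine z1 (Mop a1 x1))
    (x2 : Fin n → ℂ) (h21 : ∑ i, φ i * x2 i = 1) (h22 : ¬ onLine z2 (Mop a2 x2)) :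
    ∃ x : Fin n → ℂ, (∑ i, φ i * x i = 1) ∧ ¬ onLine z1 (Mop a1 x) ∧ ¬ onLine z2 (Mop a2 x) := by
  classical
  set L : ℂ → (Fin n → ℂ) := fun c => fun i => x1 i + c * (x2 i - x1 i) with hL
  have hφ : ∀ c, ∑ i, φ i * L c i = 1 := fun c => dot_line φ x1 x2 c h11 h21
  set L' : ℂ → (Fin n → ℂ) := fun c => fun i => x2 i + c * (x1 i - x2 i) with hL'
  have hLL' : ∀ c, L c = L' (1 - c) := by
    intro c; funext i; simp only [hL, hL']; ring
  have key1 := line_key a1 z1 x1 x2 h12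
  have key2' := line_key a2 z2 x2 x1 h22
  have key2 : ∀ c c' : ℂ, c ≠ c' → onLine z2 (Mop a2 (L c)) → onLine z2 (Mop a2 (L c')) → False := by
    intro c c' hcc h h'
    rw [hLL'] at h h'
    refine key2' (1 - c) (1 - c') (fun hx => hcc (by linear_combination -hx)) h h'
  have hgoal : ∀ c : ℂ, (¬ onLine z1 (Mop a1 (L c))) → (¬ onLine z2 (Mop a2 (L c))) →
      ∃ x : Fin n → ℂ, (∑ i, φ i * x i = 1) ∧ ¬ onLine z1 (Mop a1 x) ∧ ¬ onLine z2 (Mop a2 x) :=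
    fun c hc1 hc2 => ⟨L c, hφ c, hc1, hc2⟩
  have key1' : ∀ c c' : ℂ, c ≠ c' → onLine z1 (Mop a1 (L c)) → onLine z1 (Mop a1 (L c')) → False := by
    intro c c' hcc h h'
    exact key1 c c' hcc h h'
  by_cases B0 : onLine z1 (Mop a1 (L 0))
  · have nb1 : ¬ onLine z1 (Mop a1 (L 1)) := fun h => key1' 0 1 (by norm_num) B0 h
    have nb2 : ¬ onLine z1 (Mop a1 (L 2)) := fun h => key1' 0 2 (by norm_num) B0 h
    by_cases C1 : onLine z2 (Mop a2 (L 1))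
    · exact hgoal 2 nb2 (fun h => key2 1 2 (by norm_num) C1 h)
    · exact hgoal 1 nb1 C1
  · by_cases C0 : onLine z2 (Mop a2 (L 0))
    · by_cases B1 : onLine z1 (Mop a1 (L 1))
      · exact hgoal 2 (fun h => key1' 1 2 (by norm_num) B1 h)
          (fun h => key2 0 2 (by norm_num) C0 h)
      · exact hgoal 1 B1 (fun h => key2 0 1 (by norm_num) C0 h)
    · exact hgoal 0 B0 C0

def idArr (n : ℕ) : Fin n × Fin n → ℂ := fun e => if e.1 = e.2 then 1 else 0

lemma Mop_idArr {n : ℕ} (x : Fin n → ℂ) : Mop (idArr n) x = x := by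
  funext j
  simp [Mop, idArr, ite_mul, one_mul, zero_mul]

lemma claimA {n m : ℕ} (φ : Fin n → ℂ) (hφ : φ ≠ 0) (a : Fin n × Fin m → ℂ) (ha : a ≠ 0) :
    ∃ x : Fin n → ℂ, (∑ i, φ i * x i) = 1 ∧ Mop a x ≠ 0 := by
  classical
  obtain ⟨τ, hτ⟩ := exists_dot_one φ hφ
  set x0 : Fin n → ℂ := τ with hx0
  have hx0' : ∑ i, φ i * x0 i = 1 := by
    rw [← hτ]; exact Finset.sum_congr rfl fun i _ => by ring
  obtain ⟨⟨i1, j1⟩, hij⟩ := Function.ne_iff.1 ha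
  simp only [Pi.zero_apply] at hij
  by_cases h : Mop a x0 = 0
  · set y : Fin n → ℂ := fun i => if i = i1 then 1 else 0 with hy
    set x : Fin n → ℂ := fun i => x0 i + (y i - (∑ l, φ l * y l) * x0 i) with hx
    have hMy : ∀ j, Mop a y j = a (i1, j) := by
      intro j
      simp [Mop, hy, mul_ite, mul_one, mul_zero, Finset.sum_ite_eq']
    refine ⟨x, ?_, ?_⟩
    · have : ∀ i, φ i * x i = φ i * x0 i + (φ i * y i - (∑ l, φ l * y l) * (φ i * x0 i)) :=
        fun i => by simp only [hx]; ring
      rw [Finset.sum_congr rfl fun i _ => this i, Finset.sum_add_distrib,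
        Finset.sum_sub_distrib, ← Finset.mul_sum, hx0']
      ring
    · intro hM
      have hj1 := congrFun hM j1
      have hexp : Mop a x j1 = Mop a x0 j1 + (Mop a y j1 - (∑ l, φ l * y l) * Mop a x0 j1) := by
        simp only [Mop, hx]
        have hterm : ∀ i, a (i, j1) * (x0 i + (y i - (∑ l, φ l * y l) * x0 i))
            = a (i, j1) * x0 i + (a (i, j1) * y i - (∑ l, φ l * y l) * (a (i, j1) * x0 i)) :=
          fun i => by ring
        rw [Finset.sum_congr rfl fun i _ => hterm i, Finset.sum_add_distrib,
          Finset.sum_sub_distrib, ← Finset.mul_sum]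
      rw [hexp, congrFun h j1] at hj1
      simp only [hMy j1, Pi.zero_apply] at hj1
      apply hij
      simpa using hj1
  · exact ⟨x0, hx0', h⟩

lemma base_avoid {n : ℕ} (φ u z : Fin n → ℂ) (hφ : φ ≠ 0) (hu : u ≠ 0)
    (hφu : ∑ i, φ i * u i = 0) :
    ∃ x : Fin n → ℂ, (∑ i, φ i * x i = 1) ∧ ¬ onLine z x := by
  obtain ⟨τ, hτ⟩ := exists_dot_one φ hφ
  have hτ' : ∑ i, φ i * τ i = 1 := by
    rw [← hτ]; exact Finset.sum_congr rfl fun i _ => by ring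
  by_cases h : onLine z τ
  · obtain ⟨d0, hd0⟩ := h
    refine ⟨fun i => τ i + u i, ?_, ?_⟩
    · have : ∀ i, φ i * (τ i + u i) = φ i * τ i + φ i * u i := fun i => by ring
      rw [Finset.sum_congr rfl fun i _ => this i, Finset.sum_add_distrib, hτ', hφu]; ring
    · rintro ⟨d1, hd1⟩
      have hzφ : d0 * (∑ i, φ i * z i) = 1 := by
        rw [← hτ', Finset.mul_sum]
        refine (Finset.sum_congr rfl fun i _ => ?_).symm
        have := congrFun hd0 i
        simp only [Pi.smul_apply, smul_eq_mul] at this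
        rw [this]; ring
      have hu' : ∀ i, u i = (d1 - d0) * z i := by
        intro i
        have h1 := congrFun hd0 i
        have h2 := congrFun hd1 i
        simp only [Pi.smul_apply, smul_eq_mul] at h1 h2
        have : τ i + u i = d1 * z i := h2
        rw [h1] at this
        linear_combination this
      have : (0:ℂ) = (d1 - d0) * ∑ i, φ i * z i := by
        rw [← hφu, Finset.mul_sum]
        exact Finset.sum_congr rfl fun i _ => by rw [hu' i]; ring
      have hd : d1 - d0 = 0 := by
        by_contra hne
        have hz0 : ∑ i, φ i * z i = 0 := by
          exact (mul_eq_zero.1 this.symm).resolve_left hne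
        rw [hz0, mul_zero] at hzφ
        exact one_ne_zero hzφ.symm
      apply hu
      funext i
      rw [hu' i, hd, Pi.zero_apply]; ring
  · exact ⟨τ, hτ', h⟩

lemma sigma_exists {n : ℕ} (u x z μ : Fin n → ℂ) (hu : u ≠ 0)
    (hμu : ∑ i, μ i * u i = 0) (hμx : ∑ i, μ i * x i = 1)
    (hz : ¬ onLine x z) :
    ∃ σ : Fin n → ℂ, (∑ i, σ i * u i) = 1 ∧ (∑ i, σ i * x i) = 0 ∧ (∑ i, σ i * z i) ≠ 0 := by
  classical
  obtain ⟨τ, hτ⟩ := exists_dot_one u hu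
  set σ0 : Fin n → ℂ := fun i => τ i - (∑ l, τ l * x l) * μ i with hσ0
  have h1 : ∑ i, σ0 i * u i = 1 := by
    have : ∀ i, σ0 i * u i = τ i * u i - (∑ l, τ l * x l) * (μ i * u i) := fun i => by
      simp only [hσ0]; ring
    rw [Finset.sum_congr rfl fun i _ => this i, Finset.sum_sub_distrib, hτ, ← Finset.mul_sum,
      hμu]
    ring
  have h2 : ∑ i, σ0 i * x i = 0 := by
    have : ∀ i, σ0 i * x i = τ i * x i - (∑ l, τ l * x l) * (μ i * x i) := fun i => by
      simp only [hσ0]; ring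
    rw [Finset.sum_congr rfl fun i _ => this i, Finset.sum_sub_distrib, ← Finset.mul_sum,
      hμx]
    ring
  by_cases h3 : (∑ i, σ0 i * z i) ≠ 0
  · exact ⟨σ0, h1, h2, h3⟩
  push_neg at h3
  have hzsp : z ∉ Submodule.span ℂ ({u, x} : Set (Fin n → ℂ)) := by
    intro hmem
    obtain ⟨a', b', hab⟩ := Submodule.mem_span_pair.1 hmem
    have hcomp : ∀ i, z i = a' * u i + b' * x i := by
      intro i
      have := congrFun hab i
      simpa [Pi.smul_apply, smul_eq_mul] using this.symm
    have hval : ∑ i, σ0 i * z i = a' * (∑ i, σ0 i * u i) + b' * ∑ i, σ0 i * x i := by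
      rw [Finset.mul_sum, Finset.mul_sum, ← Finset.sum_add_distrib]
      exact Finset.sum_congr rfl fun i _ => by rw [hcomp i]; ring
    rw [h3, h1, h2] at hval
    have ha' : a' = 0 := by linear_combination -hval
    apply hz
    refine ⟨b', funext fun i => ?_⟩
    rw [hcomp i, ha', Pi.smul_apply, smul_eq_mul]; ring
  set p := Submodule.span ℂ ({u, x} : Set (Fin n → ℂ)) with hp
  have hq : p.mkQ z ≠ 0 := by
    simp only [Submodule.mkQ_apply, ne_eq, Submodule.Quotient.mk_eq_zero]
    exact hzsp
  obtain ⟨ψ, hψ⟩ : ∃ ψ : Module.Dual ℂ ((Fin n → ℂ) ⧸ p), ψ (p.mkQ z) ≠ 0 := by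
    by_contra hall
    push_neg at hall
    exact hq ((Module.forall_dual_apply_eq_zero_iff ℂ _).1 hall)
  set f : (Fin n → ℂ) →ₗ[ℂ] ℂ := ψ.comp p.mkQ with hf
  have hfu : f u = 0 := by
    have : u ∈ p := Submodule.subset_span (by simp)
    simp [hf, Submodule.mkQ_apply, (Submodule.Quotient.mk_eq_zero p).2 this]
  have hfx : f x = 0 := by
    have : x ∈ p := Submodule.subset_span (by simp)
    simp [hf, Submodule.mkQ_apply, (Submodule.Quotient.mk_eq_zero p).2 this]
  have hfz : f z ≠ 0 := hψ
  set φf : Fin n → ℂ := fun i => f (fun j => if i = j then 1 else 0) with hφf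
  have hrep : ∀ y : Fin n → ℂ, f y = ∑ i, φf i * y i := by
    intro y
    rw [LinearMap.pi_apply_eq_sum_univ f y]
    exact Finset.sum_congr rfl fun i _ => by rw [smul_eq_mul]; ring
  refine ⟨fun i => σ0 i + φf i, ?_, ?_, ?_⟩
  · have : ∀ i, (σ0 i + φf i) * u i = σ0 i * u i + φf i * u i := fun i => by ring
    rw [Finset.sum_congr rfl fun i _ => this i, Finset.sum_add_distrib, h1, ← hrep u, hfu]
    ring
  · have : ∀ i, (σ0 i + φf i) * x i = σ0 i * x i + φf i * x i := fun i => by ring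
    rw [Finset.sum_congr rfl fun i _ => this i, Finset.sum_add_distrib, h2, ← hrep x, hfx]
    ring
  · have : ∀ i, (σ0 i + φf i) * z i = σ0 i * z i + φf i * z i := fun i => by ring
    rw [Finset.sum_congr rfl fun i _ => this i, Finset.sum_add_distrib, h3, ← hrep z]
    simpa using hfz

end Stmt8Aux

namespace Stmt8Aux

/-! ### A one-parameter family of invertible matrices fixing the flag data -/

noncomputable def gm {n : ℕ} (u σ x mv : Fin n → ℂ) (t : ℂ) : Matrix (Fin n) (Fin n) ℂ :=
  Matrix.of fun i j =>
    t * (if i = j then 1 else 0) + (1 - t) * (u i * σ j) + (t ^ 2 - t) * (x i * mv j)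

lemma gm_apply {n : ℕ} (u σ x mv : Fin n → ℂ) (t : ℂ) (i j : Fin n) :
    gm u σ x mv t i j
      = t * (if i = j then 1 else 0) + (1 - t) * (u i * σ j) + (t ^ 2 - t) * (x i * mv j) := rfl

variable {n : ℕ} {u σ x mv : Fin n → ℂ}

set_option maxHeartbeats 1000000 in
lemma gm_mul (hσu : ∑ i, σ i * u i = 1) (hσx : ∑ i, σ i * x i = 0)
    (hmu : ∑ i, mv i * u i = 0) (hmx : ∑ i, mv i * x i = 1)
    (t : ℂ) (ht : t ≠ 0) :
    gm u σ x mv t * gm u σ x mv t⁻¹ = 1 := by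
  classical
  ext i j
  rw [Matrix.mul_apply]
  have expand : ∀ k, gm u σ x mv t i k * gm u σ x mv t⁻¹ k j =
      (t * t⁻¹) * ((if i = k then 1 else 0) * (if k = j then 1 else 0))
      + ((t * (1 - t⁻¹)) * σ j) * ((if i = k then 1 else 0) * u k)
      + ((t * (t⁻¹ ^ 2 - t⁻¹)) * mv j) * ((if i = k then 1 else 0) * x k)
      + (((1 - t) * t⁻¹) * u i) * (σ k * (if k = j then 1 else 0))
      + (((1 - t) * (1 - t⁻¹)) * (u i * σ j)) * (σ k * u k)
      + (((1 - t) * (t⁻¹ ^ 2 - t⁻¹)) * (u i * mv j)) * (σ k * x k)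
      + (((t ^ 2 - t) * t⁻¹) * x i) * (mv k * (if k = j then 1 else 0))
      + (((t ^ 2 - t) * (1 - t⁻¹)) * (x i * σ j)) * (mv k * u k)
      + (((t ^ 2 - t) * (t⁻¹ ^ 2 - t⁻¹)) * (x i * mv j)) * (mv k * x k) := by
    intro k
    simp only [gm_apply]
    ring
  rw [Finset.sum_congr rfl fun k _ => expand k]
  simp only [Finset.sum_add_distrib, ← Finset.mul_sum]
  have s1 : ∑ k, (if i = k then (1:ℂ) else 0) * (if k = j then 1 else 0)
      = (if i = j then 1 else 0) := by
    simp [ite_mul, one_mul, zero_mul, Finset.sum_ite_eq]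
  have s2 : ∑ k, (if i = k then (1:ℂ) else 0) * u k = u i := by
    simp [ite_mul, one_mul, zero_mul, Finset.sum_ite_eq]
  have s3 : ∑ k, (if i = k then (1:ℂ) else 0) * x k = x i := by
    simp [ite_mul, one_mul, zero_mul, Finset.sum_ite_eq]
  have s4 : ∑ k, σ k * (if k = j then (1:ℂ) else 0) = σ j := by
    simp [mul_ite, mul_one, mul_zero, Finset.sum_ite_eq']
  have s7 : ∑ k, mv k * (if k = j then (1:ℂ) else 0) = mv j := by
    simp [mul_ite, mul_one, mul_zero, Finset.sum_ite_eq']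
  rw [s1, s2, s3, s4, s7, hσu, hσx, hmu, hmx]
  rw [Matrix.one_apply]
  have hinv : t * t⁻¹ = 1 := mul_inv_cancel₀ ht
  have kA : t * (1 - t⁻¹) + ((1 - t) * t⁻¹ + (1 - t) * (1 - t⁻¹)) = 0 := by
    linear_combination -hinv
  have kB : t * (t⁻¹ ^ 2 - t⁻¹) + ((t ^ 2 - t) * t⁻¹ + (t ^ 2 - t) * (t⁻¹ ^ 2 - t⁻¹)) = 0 := by
    linear_combination (t * t⁻¹) * hinv
  split_ifs with hij
  · linear_combination (u i * σ j) * kA + (x i * mv j) * kB + hinv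
  · linear_combination (u i * σ j) * kA + (x i * mv j) * kB

noncomputable def gunit (hσu : ∑ i, σ i * u i = 1) (hσx : ∑ i, σ i * x i = 0)
    (hmu : ∑ i, mv i * u i = 0) (hmx : ∑ i, mv i * x i = 1)
    (t : ℂ) (ht : t ≠ 0) : GL (Fin n) ℂ :=
  ⟨gm u σ x mv t, gm u σ x mv t⁻¹,
    gm_mul hσu hσx hmu hmx t ht, by
      have h := gm_mul hσu hσx hmu hmx t⁻¹ (inv_ne_zero ht)
      rwa [inv_inv] at h⟩

lemma gunit_coe (hσu : ∑ i, σ i * u i = 1) (hσx : ∑ i, σ i * x i = 0)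
    (hmu : ∑ i, mv i * u i = 0) (hmx : ∑ i, mv i * x i = 1) (t : ℂ) (ht : t ≠ 0) :
    ((gunit hσu hσx hmu hmx t ht : GL (Fin n) ℂ) : Matrix (Fin n) (Fin n) ℂ)
      = gm u σ x mv t := rfl

lemma gunit_inv_coe (hσu : ∑ i, σ i * u i = 1) (hσx : ∑ i, σ i * x i = 0)
    (hmu : ∑ i, mv i * u i = 0) (hmx : ∑ i, mv i * x i = 1) (t : ℂ) (ht : t ≠ 0) :
    (((gunit hσu hσx hmu hmx t ht)⁻¹ : GL (Fin n) ℂ) : Matrix (Fin n) (Fin n) ℂ)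
      = gm u σ x mv t⁻¹ := rfl

noncomputable def nm {n : ℕ} (u σ x mv : Fin n → ℂ) (t : ℂ) : Matrix (Fin n) (Fin n) ℂ :=
  Matrix.of fun i j =>
    t * (if i = j then 1 else 0) + (t ^ 2 - t) * (u i * σ j) + (1 - t) * (x i * mv j)

lemma nm_apply (u σ x mv : Fin n → ℂ) (t : ℂ) (i j : Fin n) :
    nm u σ x mv t i j
      = t * (if i = j then 1 else 0) + (t ^ 2 - t) * (u i * σ j) + (1 - t) * (x i * mv j) := rfl

lemma nm_eq (t : ℂ) (ht : t ≠ 0) (i j : Fin n) :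
    nm u σ x mv t i j = t ^ 2 * gm u σ x mv t⁻¹ i j := by
  have hinv : t * t⁻¹ = 1 := mul_inv_cancel₀ ht
  rw [nm_apply, gm_apply]
  linear_combination (-(t * (if i = j then (1:ℂ) else 0)) + t * (u i * σ j)
    + (t - 1 - t * t⁻¹) * (x i * mv j)) * hinv

lemma nm_zero (i j : Fin n) : nm u σ x mv 0 i j = x i * mv j := by
  simp [nm_apply]

lemma gm_zero (i j : Fin n) : gm u σ x mv 0 i j = u i * σ j := by
  simp [gm_apply]

lemma gm_dot_left (hmu : ∑ i, mv i * u i = 0) (hmx : ∑ i, mv i * x i = 1)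
    (r : ℂ) (j : Fin n) :
    ∑ i, gm u σ x mv r i j * mv i = r ^ 2 * mv j := by
  have expand : ∀ i, gm u σ x mv r i j * mv i =
      r * ((if i = j then 1 else 0) * mv i) + ((1 - r) * σ j) * (mv i * u i)
        + ((r ^ 2 - r) * mv j) * (mv i * x i) := by
    intro i
    rw [gm_apply]; ring
  rw [Finset.sum_congr rfl fun i _ => expand i]
  simp only [Finset.sum_add_distrib, ← Finset.mul_sum]
  have s1 : ∑ i, (if i = j then (1:ℂ) else 0) * mv i = mv j := by
    simp [ite_mul, one_mul, zero_mul, Finset.sum_ite_eq']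
  rw [s1, hmu, hmx]
  ring

lemma gm_dot_right (hσu : ∑ i, σ i * u i = 1) (hmu : ∑ i, mv i * u i = 0)
    (r : ℂ) (i : Fin n) :
    ∑ j, gm u σ x mv r i j * u j = u i := by
  have expand : ∀ j, gm u σ x mv r i j * u j =
      r * ((if i = j then 1 else 0) * u j) + ((1 - r) * u i) * (σ j * u j)
        + ((r ^ 2 - r) * x i) * (mv j * u j) := by
    intro j
    rw [gm_apply]; ring
  rw [Finset.sum_congr rfl fun j _ => expand j]
  simp only [Finset.sum_add_distrib, ← Finset.mul_sum]
  have s1 : ∑ j, (if i = j then (1:ℂ) else 0) * u j = u i := by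
    simp [ite_mul, one_mul, zero_mul, Finset.sum_ite_eq]
  rw [s1, hσu, hmu]
  ring

end Stmt8Aux

namespace Stmt8Aux

lemma prod_split {α β : Type*} [Fintype α] [Fintype β] (f : α → ℂ) (g : β → ℂ) :
    ∑ x : α × β, f x.1 * g x.2 = (∑ i, f i) * ∑ j, g j := by
  rw [Finset.sum_mul_sum, Fintype.sum_prod_type]

lemma gact_rank1 {p q s : ℕ} (g : GL (Fin p) ℂ × GL (Fin q) ℂ × GL (Fin s) ℂ)
    (fa : Fin p × Fin q → ℂ) (fb : Fin q × Fin s → ℂ) (fc : Fin s × Fin p → ℂ) :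
    gact g (fun x y z => fa x * fb y * fc z) = fun a b c =>
      (∑ a' : Fin p × Fin q,
        ((g.1⁻¹ : GL (Fin p) ℂ) : Matrix (Fin p) (Fin p) ℂ) a'.1 a.1 *
          ((g.2.1 : Matrix (Fin q) (Fin q) ℂ) a.2 a'.2) * fa a') *
      (∑ b' : Fin q × Fin s,
        ((g.2.1⁻¹ : GL (Fin q) ℂ) : Matrix (Fin q) (Fin q) ℂ) b'.1 b.1 *
          ((g.2.2 : Matrix (Fin s) (Fin s) ℂ) b.2 b'.2) * fb b') *
      (∑ c' : Fin s × Fin p,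
        ((g.2.2⁻¹ : GL (Fin s) ℂ) : Matrix (Fin s) (Fin s) ℂ) c'.1 c.1 *
          ((g.1 : Matrix (Fin p) (Fin p) ℂ) c.2 c'.2) * fc c') := by
  funext a b c
  simp only [gact]
  conv_rhs => rw [Finset.sum_mul_sum, Finset.sum_mul]
  refine Finset.sum_congr rfl fun a' _ => ?_
  rw [Finset.sum_mul]
  refine Finset.sum_congr rfl fun b' _ => ?_
  rw [Finset.mul_sum]
  refine Finset.sum_congr rfl fun c' _ => by ring

lemma ite_and3 (A B C : Prop) [Decidable A] [Decidable B] [Decidable C] :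
    (if A ∧ B ∧ C then (1:ℂ) else 0)
      = (if A then (1:ℂ) else 0) * (if B then (1:ℂ) else 0) * (if C then (1:ℂ) else 0) := by
  by_cases hA : A <;> by_cases hB : B <;> by_cases hC : C <;> simp [hA, hB, hC]

set_option maxHeartbeats 1000000 in
lemma six_sum {p q s : ℕ} (F : Fin p → Fin p → ℂ) (G : Fin q → Fin q → ℂ)
    (H : Fin s → Fin s → ℂ) :
    (∑ a' : Fin p × Fin q, ∑ b' : Fin q × Fin s, ∑ c' : Fin s × Fin p,
      F a'.1 c'.2 * G a'.2 b'.1 * H b'.2 c'.1)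
    = (∑ i, ∑ i', F i i') * (∑ j, ∑ j', G j j') * (∑ k, ∑ k', H k k') := by
  have inner1 : ∀ (a' : Fin p × Fin q) (b' : Fin q × Fin s),
      (∑ c' : Fin s × Fin p, F a'.1 c'.2 * G a'.2 b'.1 * H b'.2 c'.1)
      = G a'.2 b'.1 * ((∑ k', H b'.2 k') * (∑ i', F a'.1 i')) := by
    intro a' b'
    rw [← prod_split (fun k' => H b'.2 k') (fun i' => F a'.1 i')]
    rw [Finset.mul_sum]
    exact Finset.sum_congr rfl fun c' _ => by ring
  have inner2 : ∀ a' : Fin p × Fin q,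
      (∑ b' : Fin q × Fin s, G a'.2 b'.1 * ((∑ k', H b'.2 k') * (∑ i', F a'.1 i')))
      = (∑ i', F a'.1 i') * ((∑ j', G a'.2 j') * (∑ k, ∑ k', H k k')) := by
    intro a'
    calc (∑ b' : Fin q × Fin s, G a'.2 b'.1 * ((∑ k', H b'.2 k') * (∑ i', F a'.1 i')))
        = ∑ b' : Fin q × Fin s,
            (fun j => G a'.2 j) b'.1 *
              ((fun k => (∑ k', H k k') * (∑ i', F a'.1 i')) b'.2) :=
          Finset.sum_congr rfl fun b' _ => by ring
      _ = (∑ j', G a'.2 j') * (∑ k, (∑ k', H k k') * (∑ i', F a'.1 i')) :=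
          prod_split (fun j => G a'.2 j)
            (fun k => (∑ k', H k k') * ∑ i', F a'.1 i')
      _ = (∑ i', F a'.1 i') * ((∑ j', G a'.2 j') * (∑ k, ∑ k', H k k')) := by
          rw [← Finset.sum_mul]; ring
  calc (∑ a' : Fin p × Fin q, ∑ b' : Fin q × Fin s, ∑ c' : Fin s × Fin p,
      F a'.1 c'.2 * G a'.2 b'.1 * H b'.2 c'.1)
      = ∑ a' : Fin p × Fin q,
          (fun i => ∑ i', F i i') a'.1 *
            ((fun j => (∑ j', G j j') * (∑ k, ∑ k', H k k')) a'.2) := by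
        refine Finset.sum_congr rfl fun a' _ => ?_
        rw [Finset.sum_congr rfl fun b' _ => inner1 a' b', inner2 a']
    _ = (∑ i, ∑ i', F i i') * (∑ j, (∑ j', G j j') * (∑ k, ∑ k', H k k')) :=
        prod_split (fun i => ∑ i', F i i')
          (fun j => (∑ j', G j j') * ∑ k, ∑ k', H k k')
    _ = (∑ i, ∑ i', F i i') * (∑ j, ∑ j', G j j') * (∑ k, ∑ k', H k k') := by
        rw [← Finset.sum_mul]; ring

lemma gact_mmT {p q s : ℕ} (g : GL (Fin p) ℂ × GL (Fin q) ℂ × GL (Fin s) ℂ) :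
    gact g (mmT p q s) = mmT p q s := by
  funext a b c
  simp only [gact, mmT]
  have expand : ∀ (a' : Fin p × Fin q) (b' : Fin q × Fin s) (c' : Fin s × Fin p),
      ((g.1⁻¹ : GL (Fin p) ℂ) : Matrix (Fin p) (Fin p) ℂ) a'.1 a.1 *
        ((g.2.1 : Matrix (Fin q) (Fin q) ℂ) a.2 a'.2) *
        ((g.2.1⁻¹ : GL (Fin q) ℂ) : Matrix (Fin q) (Fin q) ℂ) b'.1 b.1 *
        ((g.2.2 : Matrix (Fin s) (Fin s) ℂ) b.2 b'.2) *
        ((g.2.2⁻¹ : GL (Fin s) ℂ) : Matrix (Fin s) (Fin s) ℂ) c'.1 c.1 *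
        ((g.1 : Matrix (Fin p) (Fin p) ℂ) c.2 c'.2) *
        (if a'.2 = b'.1 ∧ b'.2 = c'.1 ∧ c'.2 = a'.1 then (1:ℂ) else 0)
      = (((g.1⁻¹ : GL (Fin p) ℂ) : Matrix (Fin p) (Fin p) ℂ) a'.1 a.1 *
          ((g.1 : Matrix (Fin p) (Fin p) ℂ) c.2 c'.2) * (if c'.2 = a'.1 then (1:ℂ) else 0)) *
        (((g.2.1 : Matrix (Fin q) (Fin q) ℂ) a.2 a'.2) *
          ((g.2.1⁻¹ : GL (Fin q) ℂ) : Matrix (Fin q) (Fin q) ℂ) b'.1 b.1 *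
          (if a'.2 = b'.1 then (1:ℂ) else 0)) *
        (((g.2.2 : Matrix (Fin s) (Fin s) ℂ) b.2 b'.2) *
          ((g.2.2⁻¹ : GL (Fin s) ℂ) : Matrix (Fin s) (Fin s) ℂ) c'.1 c.1 *
          (if b'.2 = c'.1 then (1:ℂ) else 0)) := by
    intro a' b' c'
    rw [ite_and3]
    ring
  rw [Finset.sum_congr rfl fun a' _ => Finset.sum_congr rfl fun b' _ =>
    Finset.sum_congr rfl fun c' _ => expand a' b' c']
  rw [six_sum (fun i i' => ((g.1⁻¹ : GL (Fin p) ℂ) : Matrix (Fin p) (Fin p) ℂ) i a.1 *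
      ((g.1 : Matrix (Fin p) (Fin p) ℂ) c.2 i') * (if i' = i then (1:ℂ) else 0))
    (fun j j' => ((g.2.1 : Matrix (Fin q) (Fin q) ℂ) a.2 j) *
      ((g.2.1⁻¹ : GL (Fin q) ℂ) : Matrix (Fin q) (Fin q) ℂ) j' b.1 *
      (if j = j' then (1:ℂ) else 0))
    (fun k k' => ((g.2.2 : Matrix (Fin s) (Fin s) ℂ) b.2 k) *
      ((g.2.2⁻¹ : GL (Fin s) ℂ) : Matrix (Fin s) (Fin s) ℂ) k' c.1 *
      (if k = k' then (1:ℂ) else 0))]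
  have c1 : (∑ i, ∑ i', ((g.1⁻¹ : GL (Fin p) ℂ) : Matrix (Fin p) (Fin p) ℂ) i a.1 *
      ((g.1 : Matrix (Fin p) (Fin p) ℂ) c.2 i') * (if i' = i then (1:ℂ) else 0))
      = (if c.2 = a.1 then (1:ℂ) else 0) := by
    have : ∀ i : Fin p, (∑ i', ((g.1⁻¹ : GL (Fin p) ℂ) : Matrix (Fin p) (Fin p) ℂ) i a.1 *
        ((g.1 : Matrix (Fin p) (Fin p) ℂ) c.2 i') * (if i' = i then (1:ℂ) else 0))
        = ((g.1 : Matrix (Fin p) (Fin p) ℂ) c.2 i) *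
          ((g.1⁻¹ : GL (Fin p) ℂ) : Matrix (Fin p) (Fin p) ℂ) i a.1 := by
      intro i
      rw [Finset.sum_eq_single i]
      · simp; ring
      · intro b _ hb; simp [hb]
      · intro hi; exact absurd (Finset.mem_univ i) hi
    rw [Finset.sum_congr rfl fun i _ => this i, ← Matrix.mul_apply, ← Units.val_mul,
      mul_inv_cancel, Units.val_one, Matrix.one_apply]
  have c2 : (∑ j, ∑ j', ((g.2.1 : Matrix (Fin q) (Fin q) ℂ) a.2 j) *
      ((g.2.1⁻¹ : GL (Fin q) ℂ) : Matrix (Fin q) (Fin q) ℂ) j' b.1 *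
      (if j = j' then (1:ℂ) else 0)) = (if a.2 = b.1 then (1:ℂ) else 0) := by
    have : ∀ j : Fin q, (∑ j', ((g.2.1 : Matrix (Fin q) (Fin q) ℂ) a.2 j) *
        ((g.2.1⁻¹ : GL (Fin q) ℂ) : Matrix (Fin q) (Fin q) ℂ) j' b.1 *
        (if j = j' then (1:ℂ) else 0))
        = ((g.2.1 : Matrix (Fin q) (Fin q) ℂ) a.2 j) *
          ((g.2.1⁻¹ : GL (Fin q) ℂ) : Matrix (Fin q) (Fin q) ℂ) j b.1 := by
      intro j
      rw [Finset.sum_eq_single j]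
      · simp
      · intro b'' _ hb; simp [Ne.symm hb]
      · intro hj; exact absurd (Finset.mem_univ j) hj
    rw [Finset.sum_congr rfl fun j _ => this j, ← Matrix.mul_apply, ← Units.val_mul,
      mul_inv_cancel, Units.val_one, Matrix.one_apply]
  have c3 : (∑ k, ∑ k', ((g.2.2 : Matrix (Fin s) (Fin s) ℂ) b.2 k) *
      ((g.2.2⁻¹ : GL (Fin s) ℂ) : Matrix (Fin s) (Fin s) ℂ) k' c.1 *
      (if k = k' then (1:ℂ) else 0)) = (if b.2 = c.1 then (1:ℂ) else 0) := by
    have : ∀ k : Fin s, (∑ k', ((g.2.2 : Matrix (Fin s) (Fin s) ℂ) b.2 k) *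
        ((g.2.2⁻¹ : GL (Fin s) ℂ) : Matrix (Fin s) (Fin s) ℂ) k' c.1 *
        (if k = k' then (1:ℂ) else 0))
        = ((g.2.2 : Matrix (Fin s) (Fin s) ℂ) b.2 k) *
          ((g.2.2⁻¹ : GL (Fin s) ℂ) : Matrix (Fin s) (Fin s) ℂ) k c.1 := by
      intro k
      rw [Finset.sum_eq_single k]
      · simp
      · intro b'' _ hb; simp [Ne.symm hb]
      · intro hk; exact absurd (Finset.mem_univ k) hk
    rw [Finset.sum_congr rfl fun k _ => this k, ← Matrix.mul_apply, ← Units.val_mul,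
      mul_inv_cancel, Units.val_one, Matrix.one_apply]
  rw [c1, c2, c3, ite_and3]
  ring

end Stmt8Aux


namespace Stmt8Aux

/-! ### The polynomial curve of tensor components -/

noncomputable def Afun {n m : ℕ} (u σ x mv : Fin n → ℂ) (u' σ' x' mv' : Fin m → ℂ)
    (arr : Fin n × Fin m → ℂ) (t : ℂ) (e : Fin n × Fin m) : ℂ :=
  ∑ f : Fin n × Fin m, nm u σ x mv t f.1 e.1 * gm u' σ' x' mv' t e.2 f.2 * arr f

lemma Afun_cont {n m : ℕ} (u σ x mv : Fin n → ℂ) (u' σ' x' mv' : Fin m → ℂ)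
    (arr : Fin n × Fin m → ℂ) (e : Fin n × Fin m) :
    Continuous fun t => Afun u σ x mv u' σ' x' mv' arr t e := by
  apply continuous_finset_sum
  intro f _
  simp only [nm_apply, gm_apply]
  fun_prop

lemma Afun_zero {n m : ℕ} (u σ x mv : Fin n → ℂ) (u' σ' x' mv' : Fin m → ℂ)
    (arr : Fin n × Fin m → ℂ) (e : Fin n × Fin m) :
    Afun u σ x mv u' σ' x' mv' arr 0 e
      = (∑ f : Fin n × Fin m, x f.1 * σ' f.2 * arr f) * (mv e.1 * u' e.2) := by
  simp only [Afun]
  rw [Finset.sum_mul]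
  refine Finset.sum_congr rfl fun f _ => ?_
  rw [nm_zero, gm_zero]
  ring

lemma Afun_t {n m : ℕ} (u σ x mv : Fin n → ℂ) (u' σ' x' mv' : Fin m → ℂ)
    (arr : Fin n × Fin m → ℂ) (t : ℂ) (ht : t ≠ 0) (e : Fin n × Fin m) :
    Afun u σ x mv u' σ' x' mv' arr t e
      = t ^ 2 * ∑ f : Fin n × Fin m,
          gm u σ x mv t⁻¹ f.1 e.1 * gm u' σ' x' mv' t e.2 f.2 * arr f := by
  simp only [Afun]
  rw [Finset.mul_sum]
  refine Finset.sum_congr rfl fun f _ => ?_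
  rw [nm_eq t ht]
  ring

lemma cX_eq {n m : ℕ} (σ : Fin m → ℂ) (x : Fin n → ℂ) (a : Fin n × Fin m → ℂ) :
    (∑ j, σ j * Mop a x j) = ∑ e : Fin n × Fin m, x e.1 * σ e.2 * a e := by
  simp only [Mop, Finset.mul_sum]
  rw [Finset.sum_comm, Fintype.sum_prod_type]
  exact Finset.sum_congr rfl fun i _ => Finset.sum_congr rfl fun j _ => by ring

end Stmt8Aux

open Stmt8Aux in
/-- For `k ∈ K`, the subgroup `G_{M,k} ⊆ GL(U)×GL(V)×GL(W)` preserving the matrix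
multiplication tensor `M_⟨U,V,W⟩` and the projective point `k` has the property that every
point `p` of the Segre variety contains `k` in its `G_{M,k}`-orbit closure
(stated on affine cones, with projective rescaling). -/
theorem stmt8 (p q s : ℕ) (k : TSp p q s) (hk : k ∈ Kcone p q s) (hk0 : k ≠ 0)
    (P : TSp p q s) (hP : P ∈ segreCone p q s) (hP0 : P ≠ 0) :
    k ∈ closure {S | ∃ g, gact g (mmT p q s) = mmT p q s ∧
      (∃ d : ℂ, d ≠ 0 ∧ gact g k = d • k) ∧ ∃ c : ℂ, c ≠ 0 ∧ S = c • gact g P} := by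
  classical
  obtain ⟨μ, v, ν, w, ω, u, hμu, hνv, hωw, hkeq⟩ := hk
  obtain ⟨a, b, c, hPeq⟩ := hP
  have hμ : μ ≠ 0 := fun h => hk0 (by rw [hkeq]; funext x y z; simp [h])
  have hv : v ≠ 0 := fun h => hk0 (by rw [hkeq]; funext x y z; simp [h])
  have hν : ν ≠ 0 := fun h => hk0 (by rw [hkeq]; funext x y z; simp [h])
  have hw : w ≠ 0 := fun h => hk0 (by rw [hkeq]; funext x y z; simp [h])
  have hω : ω ≠ 0 := fun h => hk0 (by rw [hkeq]; funext x y z; simp [h])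
  have hu : u ≠ 0 := fun h => hk0 (by rw [hkeq]; funext x y z; simp [h])
  have ha : a ≠ 0 := fun h => hP0 (by rw [hPeq]; funext x y z; simp [h])
  have hb : b ≠ 0 := fun h => hP0 (by rw [hPeq]; funext x y z; simp [h])
  have hc : c ≠ 0 := fun h => hP0 (by rw [hPeq]; funext x y z; simp [h])
  -- step 0 : a seed point for the W-side
  obtain ⟨xW0, hxW0, hxW0Z⟩ := claimA ω hω c hc
  -- step 1 : choice of xU
  obtain ⟨xa, hxa, hxaM⟩ := claimA μ hμ a ha
  obtain ⟨xb, hxb, hxbL⟩ := base_avoid μ u (Mop c xW0) hμ hu hμu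
  obtain ⟨xU, hμxU, hXline, hxUz0'⟩ :=
    avoid2 μ a (0 : Fin q → ℂ) (idArr p) (Mop c xW0) xa hxa
      (fun h => hxaM (onLine_zero.1 h)) xb hxb
      (fun h => hxbL (by rwa [Mop_idArr] at h))
  have hXxU : Mop a xU ≠ 0 := fun h => hXline (onLine_zero.2 h)
  have hxUz0 : ¬ onLine (Mop c xW0) xU := fun h => hxUz0' (by rwa [Mop_idArr])
  -- step 2 : choice of xV
  obtain ⟨ya, hya, hyaM⟩ := claimA ν hν b hb
  obtain ⟨yb, hyb, hybL⟩ := base_avoid ν v (Mop a xU) hν hv hνv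
  obtain ⟨xV, hνxV, hYline, hxVX'⟩ :=
    avoid2 ν b (0 : Fin s → ℂ) (idArr q) (Mop a xU) ya hya
      (fun h => hyaM (onLine_zero.1 h)) yb hyb
      (fun h => hybL (by rwa [Mop_idArr] at h))
  have hYxV : Mop b xV ≠ 0 := fun h => hYline (onLine_zero.2 h)
  have hxVX : ¬ onLine (Mop a xU) xV := fun h => hxVX' (by rwa [Mop_idArr])
  -- step 3 : choice of xW
  obtain ⟨zb, hzb, hzbL⟩ := base_avoid ω w (Mop b xV) hω hw hωw
  obtain ⟨xW, hωxW, hZxU, hxWY'⟩ :=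
    avoid2 ω c xU (idArr s) (Mop b xV) xW0 hxW0
      (notLine_symm hxW0Z hxUz0) zb hzb
      (fun h => hzbL (by rwa [Mop_idArr] at h))
  have hxWY : ¬ onLine (Mop b xV) xW := fun h => hxWY' (by rwa [Mop_idArr])
  -- the dual vectors
  obtain ⟨σU, hσUu, hσUxU, hσUZ⟩ := sigma_exists u xU (Mop c xW) μ hu hμu hμxU hZxU
  obtain ⟨σV, hσVv, hσVxV, hσVX⟩ :=
    sigma_exists v xV (Mop a xU) ν hv hνv hνxV (notLine_symm hXxU hxVX)
  obtain ⟨σW, hσWw, hσWxW, hσWY⟩ :=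
    sigma_exists w xW (Mop b xV) ω hw hωw hωxW (notLine_symm hYxV hxWY)
  -- the limit constants
  set cX : ℂ := ∑ e : Fin p × Fin q, xU e.1 * σV e.2 * a e with hcXdef
  set cY : ℂ := ∑ e : Fin q × Fin s, xV e.1 * σW e.2 * b e with hcYdef
  set cZ : ℂ := ∑ e : Fin s × Fin p, xW e.1 * σU e.2 * c e with hcZdef
  have hcX : cX ≠ 0 := by rw [hcXdef, ← cX_eq]; exact hσVX
  have hcY : cY ≠ 0 := by rw [hcYdef, ← cX_eq]; exact hσWY
  have hcZ : cZ ≠ 0 := by rw [hcZdef, ← cX_eq]; exact hσUZ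
  set d0 : ℂ := cX * cY * cZ with hd0def
  have hd0 : d0 ≠ 0 := mul_ne_zero (mul_ne_zero hcX hcY) hcZ
  -- the curve
  set F : ℂ → TSp p q s := fun t x y z =>
    d0⁻¹ * (Afun u σU xU μ v σV xV ν a t x *
      (Afun v σV xV ν w σW xW ω b t y * Afun w σW xW ω u σU xU μ c t z)) with hF
  have hFcont : Continuous F := by
    apply continuous_pi; intro x; apply continuous_pi; intro y; apply continuous_pi; intro z
    exact continuous_const.mul ((Afun_cont u σU xU μ v σV xV ν a x).mul
      ((Afun_cont v σV xV ν w σW xW ω b y).mul (Afun_cont w σW xW ω u σU xU μ c z)))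
  have hF0 : F 0 = k := by
    rw [hkeq]
    funext x y z
    simp only [hF]
    rw [Afun_zero, Afun_zero, Afun_zero, ← hcXdef, ← hcYdef, ← hcZdef]
    field_simp
    ring
  have htend : Filter.Tendsto F (nhdsWithin (0:ℂ) {(0:ℂ)}ᶜ) (nhds k) := by
    rw [← hF0]
    exact (hFcont.tendsto 0).mono_left nhdsWithin_le_nhds
  apply mem_closure_of_tendsto htend
  filter_upwards [self_mem_nhdsWithin] with t ht
  have ht0 : t ≠ 0 := ht
  have htinv : t⁻¹ ≠ 0 := inv_ne_zero ht0
  refine ⟨(gunit hσUu hσUxU hμu hμxU t ht0,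
           gunit hσVv hσVxV hνv hνxV t ht0,
           gunit hσWw hσWxW hωw hωxW t ht0), gact_mmT _,
    ⟨(t⁻¹) ^ 2 * ((t⁻¹) ^ 2 * (t⁻¹) ^ 2),
      mul_ne_zero (pow_ne_zero _ htinv) (mul_ne_zero (pow_ne_zero _ htinv) (pow_ne_zero _ htinv)),
      ?_⟩,
    ⟨d0⁻¹ * t ^ 6, mul_ne_zero (inv_ne_zero hd0) (pow_ne_zero _ ht0), ?_⟩⟩
  · -- the group element rescales k
    rw [hkeq]
    rw [show (fun (x : Fin p × Fin q) (y : Fin q × Fin s) (z : Fin s × Fin p) =>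
        μ x.1 * v x.2 * ν y.1 * w y.2 * ω z.1 * u z.2)
        = (fun x y z => (fun x : Fin p × Fin q => μ x.1 * v x.2) x *
            (fun y : Fin q × Fin s => ν y.1 * w y.2) y *
            (fun z : Fin s × Fin p => ω z.1 * u z.2) z) from
      funext fun x => funext fun y => funext fun z => by ring]
    rw [gact_rank1]
    funext x y z
    simp only [gunit_coe, gunit_inv_coe]
    have e1 : (∑ a' : Fin p × Fin q,
        gm u σU xU μ t⁻¹ a'.1 x.1 * gm v σV xV ν t x.2 a'.2 * (μ a'.1 * v a'.2))
        = ((t⁻¹) ^ 2 * μ x.1) * v x.2 := by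
      calc (∑ a' : Fin p × Fin q,
          gm u σU xU μ t⁻¹ a'.1 x.1 * gm v σV xV ν t x.2 a'.2 * (μ a'.1 * v a'.2))
          = ∑ a' : Fin p × Fin q, (fun i => gm u σU xU μ t⁻¹ i x.1 * μ i) a'.1 *
              ((fun j => gm v σV xV ν t x.2 j * v j) a'.2) :=
            Finset.sum_congr rfl fun a' _ => by ring
        _ = (∑ i, gm u σU xU μ t⁻¹ i x.1 * μ i) * (∑ j, gm v σV xV ν t x.2 j * v j) :=
            prod_split (fun i => gm u σU xU μ t⁻¹ i x.1 * μ i)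
              (fun j => gm v σV xV ν t x.2 j * v j)
        _ = ((t⁻¹) ^ 2 * μ x.1) * v x.2 := by
            rw [gm_dot_left hμu hμxU t⁻¹ x.1, gm_dot_right hσVv hνv t x.2]
    have e2 : (∑ b' : Fin q × Fin s,
        gm v σV xV ν t⁻¹ b'.1 y.1 * gm w σW xW ω t y.2 b'.2 * (ν b'.1 * w b'.2))
        = ((t⁻¹) ^ 2 * ν y.1) * w y.2 := by
      calc (∑ b' : Fin q × Fin s,
          gm v σV xV ν t⁻¹ b'.1 y.1 * gm w σW xW ω t y.2 b'.2 * (ν b'.1 * w b'.2))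
          = ∑ b' : Fin q × Fin s, (fun i => gm v σV xV ν t⁻¹ i y.1 * ν i) b'.1 *
              ((fun j => gm w σW xW ω t y.2 j * w j) b'.2) :=
            Finset.sum_congr rfl fun b' _ => by ring
        _ = (∑ i, gm v σV xV ν t⁻¹ i y.1 * ν i) * (∑ j, gm w σW xW ω t y.2 j * w j) :=
            prod_split (fun i => gm v σV xV ν t⁻¹ i y.1 * ν i)
              (fun j => gm w σW xW ω t y.2 j * w j)
        _ = ((t⁻¹) ^ 2 * ν y.1) * w y.2 := by
            rw [gm_dot_left hνv hνxV t⁻¹ y.1, gm_dot_right hσWw hωw t y.2]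
    have e3 : (∑ c' : Fin s × Fin p,
        gm w σW xW ω t⁻¹ c'.1 z.1 * gm u σU xU μ t z.2 c'.2 * (ω c'.1 * u c'.2))
        = ((t⁻¹) ^ 2 * ω z.1) * u z.2 := by
      calc (∑ c' : Fin s × Fin p,
          gm w σW xW ω t⁻¹ c'.1 z.1 * gm u σU xU μ t z.2 c'.2 * (ω c'.1 * u c'.2))
          = ∑ c' : Fin s × Fin p, (fun i => gm w σW xW ω t⁻¹ i z.1 * ω i) c'.1 *
              ((fun j => gm u σU xU μ t z.2 j * u j) c'.2) :=
            Finset.sum_congr rfl fun c' _ => by ring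
        _ = (∑ i, gm w σW xW ω t⁻¹ i z.1 * ω i) * (∑ j, gm u σU xU μ t z.2 j * u j) :=
            prod_split (fun i => gm w σW xW ω t⁻¹ i z.1 * ω i)
              (fun j => gm u σU xU μ t z.2 j * u j)
        _ = ((t⁻¹) ^ 2 * ω z.1) * u z.2 := by
            rw [gm_dot_left hωw hωxW t⁻¹ z.1, gm_dot_right hσUu hμu t z.2]
    rw [e1, e2, e3]
    simp only [Pi.smul_apply, smul_eq_mul]
    ring
  · -- F t is the rescaled translate of P
    rw [hPeq, gact_rank1]
    funext x y z
    simp only [hF, Pi.smul_apply, smul_eq_mul, gunit_coe, gunit_inv_coe]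
    rw [Afun_t u σU xU μ v σV xV ν a t ht0 x,
      Afun_t v σV xV ν w σW xW ω b t ht0 y,
      Afun_t w σW xW ω u σU xU μ c t ht0 z]
    ring
end

section
/- The second Coppersmith–Winograd tensor T̃_{q,CW} := Σ_{j=1}^q (a_0⊗b_j⊗c_j + a_j⊗b_0⊗c_j + a_j⊗b_j⊗c_0) + a_0⊗b_0⊗c_{q+1} + a_0⊗b_{q+1}⊗c_0 + a_{q+1}⊗b_0⊗c_0 in ℂ^{q+2} ⊗ ℂ^{q+2} ⊗ ℂ^{q+2} equals the limit as t → 0 of Σ_{i=1}^q t^{-2}(a_0+t a_i)⊗(b_0+t b_i)⊗(c_0+t c_i) − t^{-3}(a_0+t²Σ_j a_j)⊗(b_0+t²Σ_j b_j)⊗(c_0+t²Σ_j c_j) + (t^{-3} − q t^{-2})(a_0+t³a_{q+1})⊗(b_0+t³b_{q+1})⊗(c_0+t³c_{q+1}). In particular T̃_{q,CW} has border rank at most q + 2. -/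
open scoped BigOperators

/-- The simple (rank one) tensor `a ⊗ b ⊗ c`. -/
def sTen {N : ℕ} (a b c : Fin N → ℂ) : Fin N → Fin N → Fin N → ℂ :=
  fun i j k => a i * b j * c k

/-- Standard basis vector of `ℂ^{q+2}`. -/
noncomputable def e (q : ℕ) (m : Fin (q + 2)) : Fin (q + 2) → ℂ := Pi.single m 1

/-- The (second) Coppersmith–Winograd tensor
`T̃_{q,CW} = ∑_{j=1}^q (a₀⊗b_j⊗c_j + a_j⊗b₀⊗c_j + a_j⊗b_j⊗c₀)
  + a₀⊗b₀⊗c_{q+1} + a₀⊗b_{q+1}⊗c₀ + a_{q+1}⊗b₀⊗c₀ ∈ ℂ^{q+2} ⊗ ℂ^{q+2} ⊗ ℂ^{q+2}`. -/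
noncomputable def cwTensor (q : ℕ) : Fin (q + 2) → Fin (q + 2) → Fin (q + 2) → ℂ :=
  fun i j k =>
    (if i = 0 ∧ j = k ∧ j ≠ 0 ∧ j ≠ Fin.last (q + 1) then 1 else 0) +
    (if j = 0 ∧ i = k ∧ i ≠ 0 ∧ i ≠ Fin.last (q + 1) then 1 else 0) +
    (if k = 0 ∧ i = j ∧ i ≠ 0 ∧ i ≠ Fin.last (q + 1) then 1 else 0) +
    (if i = 0 ∧ j = 0 ∧ k = Fin.last (q + 1) then 1 else 0) +
    (if i = 0 ∧ j = Fin.last (q + 1) ∧ k = 0 then 1 else 0) +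
    (if i = Fin.last (q + 1) ∧ j = 0 ∧ k = 0 then 1 else 0)

/-- The border rank `q+2` curve of the Coppersmith–Winograd tensor:
`∑_{i=1}^q t⁻²(a₀+t aᵢ)⊗(b₀+t bᵢ)⊗(c₀+t cᵢ)
 − t⁻³(a₀+t²∑aⱼ)⊗(b₀+t²∑bⱼ)⊗(c₀+t²∑cⱼ)
 + (t⁻³ − q t⁻²)(a₀+t³a_{q+1})⊗(b₀+t³b_{q+1})⊗(c₀+t³c_{q+1})`. -/
noncomputable def cwCurve (q : ℕ) (t : ℂ) : Fin (q + 2) → Fin (q + 2) → Fin (q + 2) → ℂ :=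
  (∑ m : Fin q, (t ^ 2)⁻¹ •
      sTen (e q 0 + t • e q m.succ.castSucc) (e q 0 + t • e q m.succ.castSucc)
        (e q 0 + t • e q m.succ.castSucc))
  - (t ^ 3)⁻¹ •
      sTen (e q 0 + t ^ 2 • ∑ m : Fin q, e q m.succ.castSucc)
        (e q 0 + t ^ 2 • ∑ m : Fin q, e q m.succ.castSucc)
        (e q 0 + t ^ 2 • ∑ m : Fin q, e q m.succ.castSucc)
  + ((t ^ 3)⁻¹ - (q : ℂ) * (t ^ 2)⁻¹) •
      sTen (e q 0 + t ^ 3 • e q (Fin.last (q + 1))) (e q 0 + t ^ 3 • e q (Fin.last (q + 1)))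
        (e q 0 + t ^ 3 • e q (Fin.last (q + 1)))

def cI (q : ℕ) (m : Fin q) : Fin (q + 2) := m.succ.castSucc

lemma e_apply (q : ℕ) (m i : Fin (q + 2)) : e q m i = if i = m then 1 else 0 := by
  simp [e, Pi.single_apply]

lemma cI_ne_zero (q : ℕ) (m : Fin q) : cI q m ≠ 0 := by
  simp [cI, Fin.ext_iff]

lemma cI_ne_last (q : ℕ) (m : Fin q) : cI q m ≠ Fin.last (q + 1) := by
  simp [cI, Fin.ext_iff]; omega

noncomputable def sv (q : ℕ) (i : Fin (q + 2)) : ℂ :=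
  if i ≠ 0 ∧ i ≠ Fin.last (q + 1) then 1 else 0

lemma sum_e (q : ℕ) (i : Fin (q + 2)) :
    ∑ m : Fin q, e q (cI q m) i = sv q i := by
  simp only [e_apply, sv]
  by_cases h0 : i = 0
  · subst h0; rw [Finset.sum_eq_zero]; · simp
    intro m _; simp [Ne.symm (cI_ne_zero q m)]
  by_cases hl : i = Fin.last (q + 1)
  · subst hl; rw [Finset.sum_eq_zero]; · simp
    intro m _; simp [Ne.symm (cI_ne_last q m)]
  · have hi : (i : ℕ) - 1 < q := by
      have := i.isLt
      have h0' : (i : ℕ) ≠ 0 := fun h => h0 (Fin.ext (by rw [Fin.val_zero]; exact h))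
      have hl' : (i : ℕ) ≠ q + 1 := fun h => hl (Fin.ext (by rw [Fin.val_last]; exact h))
      omega
    rw [Finset.sum_eq_single ⟨(i : ℕ) - 1, hi⟩]
    · have : i = cI q ⟨(i : ℕ) - 1, hi⟩ := by
        simp [cI, Fin.ext_iff]
        have h0' : (i : ℕ) ≠ 0 := fun h => h0 (Fin.ext (by rw [Fin.val_zero]; exact h)); omega
      simp [← this, h0, hl]
    · intro b _ hb
      have : i ≠ cI q b := by
        intro h
        apply hb
        simp [cI, Fin.ext_iff] at h ⊢
        omega
      simp [this]
    · simp

lemma e_mul_self (q : ℕ) (m : Fin q) (i j : Fin (q + 2)) :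
    e q (cI q m) i * e q (cI q m) j = if i = j then e q (cI q m) i else 0 := by
  simp only [e_apply]
  split_ifs <;> simp_all

lemma sum_e2 (q : ℕ) (i j : Fin (q + 2)) :
    ∑ m : Fin q, e q (cI q m) i * e q (cI q m) j
      = if i = j ∧ i ≠ 0 ∧ i ≠ Fin.last (q + 1) then 1 else 0 := by
  simp only [e_mul_self]
  by_cases h : i = j
  · rw [Finset.sum_ite_of_true (fun _ _ => h), sum_e, sv]; simp [h]
  · simp [h]

lemma sum_e3 (q : ℕ) (i j k : Fin (q + 2)) :
    ∑ m : Fin q, e q (cI q m) i * e q (cI q m) j * e q (cI q m) k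
      = if (i = j ∧ j = k) ∧ i ≠ 0 ∧ i ≠ Fin.last (q + 1) then 1 else 0 := by
  have h2 : ∀ m : Fin q, e q (cI q m) i * e q (cI q m) j * e q (cI q m) k
      = if i = j ∧ j = k then e q (cI q m) i else 0 := by
    intro m; simp only [e_apply]; split_ifs <;> simp_all
  simp only [h2]
  by_cases h : i = j ∧ j = k
  · rw [Finset.sum_ite_of_true (fun _ _ => h), sum_e, sv]; simp [h]
  · simp [h]

lemma iteOneMul (P Q : Prop) [Decidable P] [Decidable Q] :
    (if P then (1:ℂ) else 0) * (if Q then 1 else 0) = if P ∧ Q then 1 else 0 := by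
  split_ifs <;> simp_all

/-- Polynomial (in `t`) extension of `cwCurve`. -/
noncomputable def Fc (q : ℕ) (t : ℂ) (i j k : Fin (q + 2)) : ℂ :=
  let a := e q 0; let L := e q (Fin.last (q + 1)); let s := sv q
  let D : Fin (q + 2) → Fin (q + 2) → ℂ :=
    fun x y => if x = y ∧ x ≠ 0 ∧ x ≠ Fin.last (q + 1) then 1 else 0
  let symL1 := L i * a j * a k + a i * L j * a k + a i * a j * L k
  let symL2 := L i * L j * a k + L i * a j * L k + a i * L j * L k
  a i * D j k + D i k * a j + D i j * a k
    + a i * a j * L k + a i * L j * a k + L i * a j * a k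
    + t * ((if (i = j ∧ j = k) ∧ i ≠ 0 ∧ i ≠ Fin.last (q + 1) then 1 else 0)
        - (s i * s j * a k + s i * a j * s k + a i * s j * s k) - (q : ℂ) * symL1)
    + t ^ 3 * (symL2 - s i * s j * s k)
    - (q : ℂ) * t ^ 4 * symL2
    + t ^ 6 * (L i * L j * L k) - (q : ℂ) * t ^ 7 * (L i * L j * L k)

lemma Fc_zero (q : ℕ) (i j k : Fin (q + 2)) : Fc q 0 i j k = cwTensor q i j k := by
  simp only [Fc, cwTensor, e_apply]
  norm_num
  simp only [← ite_and]
  congr 1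
  congr 1
  congr 1
  congr 1
  congr 1
  all_goals exact if_congr (by tauto) rfl rfl

lemma curve_eq (q : ℕ) {t : ℂ} (ht : t ≠ 0) (i j k : Fin (q + 2)) :
    cwCurve q t i j k = Fc q t i j k := by
  have hc : ∀ m : Fin q, (m.succ.castSucc : Fin (q + 2)) = cI q m := fun _ => rfl
  simp only [cwCurve, sTen, Pi.add_apply, Pi.sub_apply, Pi.smul_apply, Finset.sum_apply,
    smul_eq_mul, hc]
  have key : ∀ m : Fin q,
      (t ^ 2)⁻¹ * ((e q 0 i + t * e q (cI q m) i) * (e q 0 j + t * e q (cI q m) j) *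
        (e q 0 k + t * e q (cI q m) k))
      = (t ^ 2)⁻¹ * (e q 0 i * e q 0 j * e q 0 k)
        + ((t⁻¹ * (e q 0 j * e q 0 k)) * e q (cI q m) i
        + ((t⁻¹ * (e q 0 i * e q 0 k)) * e q (cI q m) j
        + ((t⁻¹ * (e q 0 i * e q 0 j)) * e q (cI q m) k
        + (e q 0 k * (e q (cI q m) i * e q (cI q m) j)
        + (e q 0 j * (e q (cI q m) i * e q (cI q m) k)
        + (e q 0 i * (e q (cI q m) j * e q (cI q m) k)
        + t * (e q (cI q m) i * e q (cI q m) j * e q (cI q m) k))))))) := by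
    intro m; field_simp; ring
  rw [Finset.sum_congr rfl (fun m _ => key m)]
  simp only [Finset.sum_add_distrib, Finset.sum_const, Finset.card_univ, Fintype.card_fin,
    nsmul_eq_mul, ← Finset.mul_sum]
  rw [sum_e3 q i j k, sum_e2 q i j, sum_e2 q i k, sum_e2 q j k, sum_e q i, sum_e q j, sum_e q k]
  have hS2 : (t ^ 3)⁻¹ * ((e q 0 i + t ^ 2 * sv q i) * (e q 0 j + t ^ 2 * sv q j) *
        (e q 0 k + t ^ 2 * sv q k))
      = (t ^ 3)⁻¹ * (e q 0 i * e q 0 j * e q 0 k)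
        + t⁻¹ * (sv q i * (e q 0 j * e q 0 k) + e q 0 i * (sv q j * e q 0 k)
            + e q 0 i * (e q 0 j * sv q k))
        + t * (sv q i * sv q j * e q 0 k + sv q i * e q 0 j * sv q k + e q 0 i * sv q j * sv q k)
        + t ^ 3 * (sv q i * sv q j * sv q k) := by
    field_simp
    ring
  have hS3 : ((t ^ 3)⁻¹ - (q : ℂ) * (t ^ 2)⁻¹) *
        ((e q 0 i + t ^ 3 * e q (Fin.last (q + 1)) i) * (e q 0 j + t ^ 3 * e q (Fin.last (q + 1)) j) *
          (e q 0 k + t ^ 3 * e q (Fin.last (q + 1)) k))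
      = (t ^ 3)⁻¹ * (e q 0 i * e q 0 j * e q 0 k)
        - (q : ℂ) * ((t ^ 2)⁻¹ * (e q 0 i * e q 0 j * e q 0 k))
        + (1 - (q : ℂ) * t) *
            (e q (Fin.last (q + 1)) i * e q 0 j * e q 0 k
              + e q 0 i * e q (Fin.last (q + 1)) j * e q 0 k
              + e q 0 i * e q 0 j * e q (Fin.last (q + 1)) k)
        + (t ^ 3 - (q : ℂ) * t ^ 4) *
            (e q (Fin.last (q + 1)) i * e q (Fin.last (q + 1)) j * e q 0 k
              + e q (Fin.last (q + 1)) i * e q 0 j * e q (Fin.last (q + 1)) k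
              + e q 0 i * e q (Fin.last (q + 1)) j * e q (Fin.last (q + 1)) k)
        + (t ^ 6 - (q : ℂ) * t ^ 7) *
            (e q (Fin.last (q + 1)) i * e q (Fin.last (q + 1)) j * e q (Fin.last (q + 1)) k) := by
    field_simp; ring
  rw [hS2, hS3]
  simp only [Fc]
  set E3 := (if (i = j ∧ j = k) ∧ i ≠ 0 ∧ i ≠ Fin.last (q + 1) then (1:ℂ) else 0) with hE3
  set Dij := (if i = j ∧ i ≠ 0 ∧ i ≠ Fin.last (q + 1) then (1:ℂ) else 0) with hDij
  set Dik := (if i = k ∧ i ≠ 0 ∧ i ≠ Fin.last (q + 1) then (1:ℂ) else 0) with hDik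
  set Djk := (if j = k ∧ j ≠ 0 ∧ j ≠ Fin.last (q + 1) then (1:ℂ) else 0) with hDjk
  ring

lemma rank_curve (q : ℕ) (t : ℂ) : tensorRankLE (q + 2) (cwCurve q t) := by
  classical
  set g : Fin (q + 2) → Fin (q + 2) → ℂ :=
    Fin.snoc (Fin.snoc (fun l : Fin q => e q 0 + t • e q (cI q l))
        (e q 0 + t ^ 2 • ∑ m : Fin q, e q (cI q m)))
      (e q 0 + t ^ 3 • e q (Fin.last (q + 1))) with hg
  set c : Fin (q + 2) → ℂ :=
    Fin.snoc (Fin.snoc (fun _ : Fin q => (t ^ 2)⁻¹) (-(t ^ 3)⁻¹))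
      ((t ^ 3)⁻¹ - (q : ℂ) * (t ^ 2)⁻¹) with hc
  refine ⟨fun l => c l • g l, g, g, fun i j k => ?_⟩
  have hcI : ∀ m : Fin q, (m.succ.castSucc : Fin (q + 2)) = cI q m := fun _ => rfl
  rw [Fin.sum_univ_castSucc, Fin.sum_univ_castSucc]
  simp only [hg, hc, Fin.snoc_castSucc, Fin.snoc_last, cwCurve, sTen, Pi.add_apply,
    Pi.sub_apply, Pi.smul_apply, Finset.sum_apply, smul_eq_mul, hcI, mul_assoc, neg_mul]
  ring

/-- The Coppersmith–Winograd tensor is the limit as `t → 0` of the explicit rank-`(q+2)` curve;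
in particular it has border rank at most `q + 2`. -/
theorem stmt12 (q : ℕ) :
    Filter.Tendsto (cwCurve q) (nhdsWithin 0 {t : ℂ | t ≠ 0}) (nhds (cwTensor q)) ∧
      borderRankLE (q + 2) (cwTensor q) := by
  have hcont : Continuous (fun t : ℂ => fun i j k => Fc q t i j k) := by
    refine continuous_pi fun i => continuous_pi fun j => continuous_pi fun k => ?_
    simp only [Fc]
    fun_prop
  have h0 : (fun i j k => Fc q 0 i j k) = cwTensor q := by
    funext i j k; exact Fc_zero q i j k
  have h1 : Filter.Tendsto (fun t : ℂ => fun i j k => Fc q t i j k)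
      (nhdsWithin 0 {t : ℂ | t ≠ 0}) (nhds (cwTensor q)) := by
    have h2 := (hcont.tendsto 0).mono_left
      (nhdsWithin_le_nhds (s := {t : ℂ | t ≠ 0}))
    rwa [h0] at h2
  have hev : (fun t : ℂ => fun i j k => Fc q t i j k) =ᶠ[nhdsWithin 0 {t : ℂ | t ≠ 0}]
      cwCurve q := by
    filter_upwards [self_mem_nhdsWithin] with t ht
    funext i j k
    exact (curve_eq q ht i j k).symm
  have hT : Filter.Tendsto (cwCurve q) (nhdsWithin 0 {t : ℂ | t ≠ 0}) (nhds (cwTensor q)) :=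
    h1.congr' hev
  refine ⟨hT, ?_⟩
  have hset : {t : ℂ | t ≠ 0} = {(0 : ℂ)}ᶜ := by ext x; simp
  haveI : (nhdsWithin (0 : ℂ) {t : ℂ | t ≠ 0}).NeBot := by
    rw [hset]; infer_instance
  exact mem_closure_of_tendsto hT (Filter.Eventually.of_forall fun t => rank_curve q t)
end
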